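/- arXiv:1703.02027 — 6 statements merged into one kernel-verified Lean document; each statement's English description precedes it below -/
import Mathlib

section
/- Let ρ be the Laurent polynomial defined below (it is the numerator, after clearing denominators, of the generator z_1^{n_1} * ... * z_1^{n_k} of the small universal shuffle algebra associated to surfaces). Then for every pair of indices 1 ≤ a < b ≤ k, the image of ρ under the substitution z_a ↦ z_b (identifying the two variables) is 0 in A[z_1^{±1},...,z_k^{±1}]. -/
/-!
STATEMENT 0: The numerator ρ of the shuffle-algebra generator
`z_1^{n_1} * ... * z_1^{n_k}` (surface case) vanishes under any substitution
`z_a ↦ z_b` identifying two of the variables.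
-/

noncomputable section

open Finset

/-- The Laurent monomial `z_i^m` in the Laurent polynomial ring
`A[z_1^{±1},...,z_k^{±1}] = AddMonoidAlgebra A (Fin k →₀ ℤ)`. -/
def zmon {k : ℕ} {A : Type*} [CommRing A] (i : Fin k) (m : ℤ) :
    AddMonoidAlgebra A (Fin k →₀ ℤ) :=
  AddMonoidAlgebra.single (Finsupp.single i m) 1

/-- A constant `c ∈ A`, viewed as a Laurent polynomial. -/
def cst {k : ℕ} {A : Type*} [CommRing A] (c : A) :
    AddMonoidAlgebra A (Fin k →₀ ℤ) :=
  AddMonoidAlgebra.single (0 : Fin k →₀ ℤ) c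

/-- The Laurent polynomial
`ρ = Σ_{σ ∈ S(k)} sgn(σ) · z_1^{n_{σ(1)}} ⋯ z_k^{n_{σ(k)}} ·
  Π_{i<j} [ (z_j − z_i)(z_j q_j^{ε'} − z_i q_i^{ε}) + Δ_{ij} z_i z_j ]`,
where `ε = 1` if `σ(i) < σ(j)` and `ε = 0` otherwise, `ε' = 1 − ε`. -/
def rhoSurface {k : ℕ} {A : Type*} [CommRing A]
    (Δ : Fin k → Fin k → A) (q : Fin k → Aˣ) (n : Fin k → ℤ) :
    AddMonoidAlgebra A (Fin k →₀ ℤ) :=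
  ∑ σ : Equiv.Perm (Fin k),
    (Equiv.Perm.sign σ : ℤ) •
      ((∏ i : Fin k, zmon i (n (σ i))) *
        ∏ p ∈ Finset.univ.filter (fun p : Fin k × Fin k => p.1 < p.2),
          (if σ p.1 < σ p.2 then
              (zmon p.2 1 - zmon p.1 1) *
                  (zmon p.2 1 - cst (q p.1 : A) * zmon p.1 1) +
                cst (Δ p.1 p.2) * zmon p.1 1 * zmon p.2 1
            else
              (zmon p.2 1 - zmon p.1 1) *
                  (cst (q p.2 : A) * zmon p.2 1 - zmon p.1 1) +
                cst (Δ p.1 p.2) * zmon p.1 1 * zmon p.2 1))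

/-- The ring homomorphism of `A[z_1^{±1},...,z_k^{±1}]` given by the
substitution `z_a ↦ z_b` (all other variables fixed). -/
def substVar {k : ℕ} (A : Type*) [CommRing A] (a b : Fin k) :
    AddMonoidAlgebra A (Fin k →₀ ℤ) →+* AddMonoidAlgebra A (Fin k →₀ ℤ) :=
  AddMonoidAlgebra.mapDomainRingHom A
    (Finsupp.mapDomain.addMonoidHom (Function.update (id : Fin k → Fin k) a b))

namespace ShuffleAux

variable {k : ℕ} {A : Type*} [CommRing A]

lemma substVar_zmon (a b i : Fin k) (m : ℤ) :
    substVar A a b (zmon i m) = zmon (if i = a then b else i) m := by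
  simp [substVar, zmon, Finsupp.mapDomain_single,
    Function.update_apply]

lemma substVar_cst (a b : Fin k) (c : A) :
    substVar A a b (cst c) = cst c := by
  simp [substVar, cst]

/-- Coefficientwise action of a permutation, as a ring homomorphism. -/
def Psi [MulSemiringAction (Equiv.Perm (Fin k)) A] (s : Equiv.Perm (Fin k)) :
    AddMonoidAlgebra A (Fin k →₀ ℤ) →+* AddMonoidAlgebra A (Fin k →₀ ℤ) :=
  AddMonoidAlgebra.liftNCRingHom
    ((AddMonoidAlgebra.singleZeroRingHom).comp (MulSemiringAction.toRingHom _ A s))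
    (AddMonoidAlgebra.of A (Fin k →₀ ℤ)) (fun _ _ => Commute.all _ _)

lemma Psi_single [MulSemiringAction (Equiv.Perm (Fin k)) A] (s : Equiv.Perm (Fin k))
    (f : Fin k →₀ ℤ) (c : A) :
    Psi (A := A) s (AddMonoidAlgebra.single f c) = AddMonoidAlgebra.single f (s • c) := by
  show AddMonoidAlgebra.liftNC _ _ _ = _
  rw [AddMonoidAlgebra.liftNC_single]
  simp [AddMonoidAlgebra.singleZeroRingHom, AddMonoidAlgebra.of_apply,
    AddMonoidAlgebra.single_mul_single, MulSemiringAction.toRingHom]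
  rfl

lemma Psi_zmon [MulSemiringAction (Equiv.Perm (Fin k)) A] (s : Equiv.Perm (Fin k))
    (i : Fin k) (m : ℤ) : Psi (A := A) s (zmon i m) = zmon i m := by
  rw [zmon, Psi_single]; simp [zmon]

lemma Psi_cst [MulSemiringAction (Equiv.Perm (Fin k)) A] (s : Equiv.Perm (Fin k))
    (c : A) : Psi (A := A) s (cst c) = cst (s • c) := by
  rw [cst, Psi_single]; rfl

lemma Psi_apply [MulSemiringAction (Equiv.Perm (Fin k)) A] (s : Equiv.Perm (Fin k))
    (x : AddMonoidAlgebra A (Fin k →₀ ℤ)) (g : Fin k →₀ ℤ) :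
    (Psi (A := A) s x).coeff g = s • (x.coeff g) := by
  induction x using AddMonoidAlgebra.induction_linear with
  | zero => rw [map_zero]; simp
  | add u v hu hv =>
    erw [map_add, AddMonoidAlgebra.coeff_add, AddMonoidAlgebra.coeff_add, Finsupp.add_apply,
      Finsupp.add_apply, hu, hv, smul_add]
  | single f c =>
    erw [Psi_single, AddMonoidAlgebra.coeff_single, AddMonoidAlgebra.coeff_single]
    rcases eq_or_ne f g with rfl | h
    · erw [Finsupp.single_eq_same, Finsupp.single_eq_same]
    · erw [Finsupp.single_eq_of_ne h.symm, Finsupp.single_eq_of_ne h.symm, smul_zero]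

lemma ann_key [MulSemiringAction (Equiv.Perm (Fin k)) A] (s : Equiv.Perm (Fin k))
    (d : A) (hd : ∀ c : A, d * (c - s • c) = 0)
    (x : AddMonoidAlgebra A (Fin k →₀ ℤ)) :
    cst d * (x - Psi (A := A) s x) = 0 := by
  refine AddMonoidAlgebra.coeff_injective (Finsupp.ext fun g => ?_)
  rw [cst, AddMonoidAlgebra.coeff_single_zero_mul]
  erw [AddMonoidAlgebra.coeff_sub, Finsupp.sub_apply]
  rw [Psi_apply, hd]
  rfl

/-- The factor of `rhoSurface` attached to a pair `p` and a permutation `σ`. -/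
def Gfac (Δ : Fin k → Fin k → A) (q : Fin k → Aˣ) (σ : Equiv.Perm (Fin k))
    (p : Fin k × Fin k) : AddMonoidAlgebra A (Fin k →₀ ℤ) :=
  if σ p.1 < σ p.2 then
    (zmon p.2 1 - zmon p.1 1) * (zmon p.2 1 - cst (q p.1 : A) * zmon p.1 1) +
      cst (Δ p.1 p.2) * zmon p.1 1 * zmon p.2 1
  else
    (zmon p.2 1 - zmon p.1 1) * (cst (q p.2 : A) * zmon p.2 1 - zmon p.1 1) +
      cst (Δ p.1 p.2) * zmon p.1 1 * zmon p.2 1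

lemma rhoSurface_eq (Δ : Fin k → Fin k → A) (q : Fin k → Aˣ) (n : Fin k → ℤ) :
    rhoSurface Δ q n = ∑ σ : Equiv.Perm (Fin k),
      (Equiv.Perm.sign σ : ℤ) •
        ((∏ i : Fin k, zmon i (n (σ i))) *
          ∏ p ∈ Finset.univ.filter (fun p : Fin k × Fin k => p.1 < p.2),
            Gfac Δ q σ p) := rfl

/-- The involution induced by `swap a b` on ordered pairs. -/
def tau (a b : Fin k) (p : Fin k × Fin k) : Fin k × Fin k :=
  if Equiv.swap a b p.1 < Equiv.swap a b p.2 then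
    (Equiv.swap a b p.1, Equiv.swap a b p.2)
  else (Equiv.swap a b p.2, Equiv.swap a b p.1)

lemma tau_lt {a b : Fin k} {p : Fin k × Fin k} (h : p.1 ≠ p.2) :
    (tau a b p).1 < (tau a b p).2 := by
  have hne : Equiv.swap a b p.1 ≠ Equiv.swap a b p.2 :=
    fun h' => h ((Equiv.swap a b).injective h')
  unfold tau
  rcases lt_or_gt_of_ne hne with h1 | h1
  · rw [if_pos h1]; exact h1
  · rw [if_neg (asymm h1)]; exact h1

lemma tau_ne {a b : Fin k} (hab : a < b) {p : Fin k × Fin k}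
    (h12 : p.1 < p.2) (hp : p ≠ (a, b)) : tau a b p ≠ (a, b) := by
  intro h
  unfold tau at h
  split_ifs at h with hc
  · have h1 : Equiv.swap a b p.1 = a := congrArg Prod.fst h
    have h2 : Equiv.swap a b p.2 = b := congrArg Prod.snd h
    have e1 : p.1 = b := by
      have := congrArg (Equiv.swap a b) h1
      rwa [Equiv.swap_apply_self, Equiv.swap_apply_left] at this
    have e2 : p.2 = a := by
      have := congrArg (Equiv.swap a b) h2
      rwa [Equiv.swap_apply_self, Equiv.swap_apply_right] at this
    rw [e1, e2] at h12
    exact absurd hab (asymm h12)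
  · have h1 : Equiv.swap a b p.2 = a := congrArg Prod.fst h
    have h2 : Equiv.swap a b p.1 = b := congrArg Prod.snd h
    have e1 : p.2 = b := by
      have := congrArg (Equiv.swap a b) h1
      rwa [Equiv.swap_apply_self, Equiv.swap_apply_left] at this
    have e2 : p.1 = a := by
      have := congrArg (Equiv.swap a b) h2
      rwa [Equiv.swap_apply_self, Equiv.swap_apply_right] at this
    exact hp (Prod.ext e2 e1)

lemma tau_invol {a b : Fin k} {p : Fin k × Fin k} (h12 : p.1 < p.2) :
    tau a b (tau a b p) = p := by
  have e : ∀ x : Fin k, Equiv.swap a b (Equiv.swap a b x) = x :=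
    fun x => Equiv.swap_apply_self a b x
  have hne : Equiv.swap a b p.1 ≠ Equiv.swap a b p.2 :=
    fun h' => (ne_of_lt h12) ((Equiv.swap a b).injective h')
  unfold tau
  rcases lt_or_gt_of_ne hne with h1 | h1
  · rw [if_pos h1]; simp only [e]; rw [if_pos h12]
  · rw [if_neg (asymm h1)]; simp only [e]; rw [if_neg (asymm h12)]

lemma pair_step [MulSemiringAction (Equiv.Perm (Fin k)) A]
    (Δ : Fin k → Fin k → A) (q : Fin k → Aˣ)
    (hΔsym : ∀ i j : Fin k, i ≠ j → Δ i j = Δ j i)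
    (hΔact : ∀ (σ : Equiv.Perm (Fin k)) (i j : Fin k), i ≠ j →
      σ • Δ i j = Δ (σ i) (σ j))
    (hqact : ∀ (σ : Equiv.Perm (Fin k)) (i : Fin k), σ • (q i : A) = (q (σ i) : A))
    (a b : Fin k) (hab : a < b) (σ : Equiv.Perm (Fin k))
    (p : Fin k × Fin k) (h12 : p.1 < p.2) (hp : p ≠ (a, b)) :
    substVar A a b (Gfac Δ q (σ * Equiv.swap a b) p)
      = Psi (A := A) (Equiv.swap a b) (substVar A a b (Gfac Δ q σ (tau a b p))) := by
  obtain ⟨i, j⟩ := p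
  simp only at h12
  have hba : b ≠ a := hab.ne'
  have hab' : a ≠ b := hab.ne
  have swa : Equiv.swap a b a = b := Equiv.swap_apply_left a b
  have swb : Equiv.swap a b b = a := Equiv.swap_apply_right a b
  have ifa : (if a = a then b else a) = b := if_pos rfl
  have ifb : (if b = a then b else b) = b := if_neg hba
  have eqa : Equiv.swap a b • ((q a : A)) = ((q b : A)) := by rw [hqact, swa]
  have eqb : Equiv.swap a b • ((q b : A)) = ((q a : A)) := by rw [hqact, swb]
  by_cases hia : i = a
  · rw [hia] at h12 hp ⊢
    have hja : j ≠ a := h12.ne'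
    have hjb : j ≠ b := fun h => hp (by rw [h])
    have swj : Equiv.swap a b j = j := Equiv.swap_apply_of_ne_of_ne hja hjb
    have ifj : (if j = a then b else j) = j := if_neg hja
    have hσne : σ b ≠ σ j := fun h => hjb (σ.injective h).symm
    have eqj : Equiv.swap a b • ((q j : A)) = ((q j : A)) := by rw [hqact, swj]
    rcases lt_or_gt_of_ne hjb with hj1 | hj2
    · -- a < j < b, tau = (j, b)
      have htau : tau a b (a, j) = (j, b) := by
        unfold tau; simp only [swa, swj]; rw [if_neg (asymm hj1)]
      rw [htau]
      have eΔ : Equiv.swap a b • Δ j b = Δ a j := by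
        rw [hΔact _ _ _ hjb, swj, swb, hΔsym j a hja]
      rcases lt_or_gt_of_ne hσne with hσ | hσ
      · simp only [Gfac, Equiv.Perm.mul_apply, swa, swj, if_pos hσ, if_neg (asymm hσ),
          map_add, map_sub, map_mul, substVar_zmon, substVar_cst, Psi_zmon, Psi_cst,
          ifa, if_true, ifj, ifb, eqb, eΔ]
        ring
      · simp only [Gfac, Equiv.Perm.mul_apply, swa, swj, if_neg (asymm hσ), if_pos hσ,
          map_add, map_sub, map_mul, substVar_zmon, substVar_cst, Psi_zmon, Psi_cst,
          ifa, if_true, ifj, ifb, eqj, eΔ]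
        ring
    · -- b < j, tau = (b, j)
      have htau : tau a b (a, j) = (b, j) := by
        unfold tau; simp only [swa, swj]; rw [if_pos hj2]
      rw [htau]
      have eΔ : Equiv.swap a b • Δ b j = Δ a j := by
        rw [hΔact _ _ _ hjb.symm, swj, swb]
      by_cases hσ : σ b < σ j
      · simp only [Gfac, Equiv.Perm.mul_apply, swa, swj, if_pos hσ,
          map_add, map_sub, map_mul, substVar_zmon, substVar_cst, Psi_zmon, Psi_cst,
          ifa, if_true, ifj, ifb, eqb, eΔ]
      · simp only [Gfac, Equiv.Perm.mul_apply, swa, swj, if_neg hσ,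
          map_add, map_sub, map_mul, substVar_zmon, substVar_cst, Psi_zmon, Psi_cst,
          ifa, if_true, ifj, ifb, eqj, eΔ]
  · by_cases hib : i = b
    · rw [hib] at h12 hp ⊢
      -- pair (b, j), b < j
      have haj : a < j := hab.trans h12
      have hja : j ≠ a := haj.ne'
      have hjb : j ≠ b := h12.ne'
      have swj : Equiv.swap a b j = j := Equiv.swap_apply_of_ne_of_ne hja hjb
      have ifj : (if j = a then b else j) = j := if_neg hja
      have eqj : Equiv.swap a b • ((q j : A)) = ((q j : A)) := by rw [hqact, swj]
      have htau : tau a b (b, j) = (a, j) := by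
        unfold tau; simp only [swb, swj]; rw [if_pos haj]
      rw [htau]
      have eΔ : Equiv.swap a b • Δ a j = Δ b j := by
        rw [hΔact _ _ _ haj.ne, swa, swj]
      by_cases hσ : σ a < σ j
      · simp only [Gfac, Equiv.Perm.mul_apply, swb, swj, if_pos hσ,
          map_add, map_sub, map_mul, substVar_zmon, substVar_cst, Psi_zmon, Psi_cst,
          ifa, if_true, ifj, ifb, eqa, eΔ]
      · simp only [Gfac, Equiv.Perm.mul_apply, swb, swj, if_neg hσ,
          map_add, map_sub, map_mul, substVar_zmon, substVar_cst, Psi_zmon, Psi_cst,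
          ifa, if_true, ifj, ifb, eqj, eΔ]
    · -- i ∉ {a, b}
      have swi : Equiv.swap a b i = i := Equiv.swap_apply_of_ne_of_ne hia hib
      have ifi : (if i = a then b else i) = i := if_neg hia
      have eqi : Equiv.swap a b • ((q i : A)) = ((q i : A)) := by rw [hqact, swi]
      by_cases hja : j = a
      · rw [hja] at h12 hp ⊢
        -- pair (i, j=a), i < a < b
        have hib' : i < b := h12.trans hab
        have htau : tau a b (i, a) = (i, b) := by
          unfold tau; simp only [swa, swi]; rw [if_pos hib']
        rw [htau]
        have eΔ : Equiv.swap a b • Δ i b = Δ i a := by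
          rw [hΔact _ _ _ hib, swi, swb]
        by_cases hσ : σ i < σ b
        · simp only [Gfac, Equiv.Perm.mul_apply, swa, swi, if_pos hσ,
            map_add, map_sub, map_mul, substVar_zmon, substVar_cst, Psi_zmon, Psi_cst,
            ifa, if_true, ifi, ifb, eqi, eΔ]
        · simp only [Gfac, Equiv.Perm.mul_apply, swa, swi, if_neg hσ,
            map_add, map_sub, map_mul, substVar_zmon, substVar_cst, Psi_zmon, Psi_cst,
            ifa, if_true, ifi, ifb, eqb, eΔ]
      · by_cases hjb : j = b
        · rw [hjb] at h12 hp ⊢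
          -- pair (i, b), i ≠ a
          rcases lt_or_gt_of_ne hia with hi1 | hi2
          · -- i < a : tau = (i, a)
            have htau : tau a b (i, b) = (i, a) := by
              unfold tau; simp only [swb, swi]; rw [if_pos hi1]
            rw [htau]
            have eΔ : Equiv.swap a b • Δ i a = Δ i b := by
              rw [hΔact _ _ _ hia, swi, swa]
            by_cases hσ : σ i < σ a
            · simp only [Gfac, Equiv.Perm.mul_apply, swb, swi, if_pos hσ,
                map_add, map_sub, map_mul, substVar_zmon, substVar_cst, Psi_zmon, Psi_cst,
                ifa, if_true, ifi, ifb, eqi, eΔ]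
            · simp only [Gfac, Equiv.Perm.mul_apply, swb, swi, if_neg hσ,
                map_add, map_sub, map_mul, substVar_zmon, substVar_cst, Psi_zmon, Psi_cst,
                ifa, if_true, ifi, ifb, eqa, eΔ]
          · -- a < i < b : tau = (a, i), flipped condition
            have htau : tau a b (i, b) = (a, i) := by
              unfold tau; simp only [swb, swi]; rw [if_neg (asymm hi2)]
            rw [htau]
            have hσne : σ i ≠ σ a := fun h => hia (σ.injective h)
            have eΔ : Equiv.swap a b • Δ a i = Δ i b := by
              rw [hΔact _ _ _ (fun h => hia h.symm), swa, swi, hΔsym b i (Ne.symm hib)]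
            rcases lt_or_gt_of_ne hσne with hσ | hσ
            · simp only [Gfac, Equiv.Perm.mul_apply, swb, swi, if_pos hσ, if_neg (asymm hσ),
                map_add, map_sub, map_mul, substVar_zmon, substVar_cst, Psi_zmon, Psi_cst,
                ifa, if_true, ifi, ifb, eqi, eΔ]
              ring
            · simp only [Gfac, Equiv.Perm.mul_apply, swb, swi, if_neg (asymm hσ), if_pos hσ,
                map_add, map_sub, map_mul, substVar_zmon, substVar_cst, Psi_zmon, Psi_cst,
                ifa, if_true, ifi, ifb, eqa, eΔ]
              ring
        · -- i, j ∉ {a, b}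
          have swj : Equiv.swap a b j = j := Equiv.swap_apply_of_ne_of_ne hja hjb
          have ifj : (if j = a then b else j) = j := if_neg hja
          have eqj : Equiv.swap a b • ((q j : A)) = ((q j : A)) := by rw [hqact, swj]
          have htau : tau a b (i, j) = (i, j) := by
            unfold tau; simp only [swi, swj]; rw [if_pos h12]
          rw [htau]
          have eΔ : Equiv.swap a b • Δ i j = Δ i j := by
            rw [hΔact _ _ _ h12.ne, swi, swj]
          by_cases hσ : σ i < σ j
          · simp only [Gfac, Equiv.Perm.mul_apply, swi, swj, if_pos hσ,
              map_add, map_sub, map_mul, substVar_zmon, substVar_cst, Psi_zmon, Psi_cst,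
              ifa, if_true, ifi, ifj, ifb, eqi, eΔ]
          · simp only [Gfac, Equiv.Perm.mul_apply, swi, swj, if_neg hσ,
              map_add, map_sub, map_mul, substVar_zmon, substVar_cst, Psi_zmon, Psi_cst,
              ifa, if_true, ifi, ifj, ifb, eqj, eΔ]

lemma mon_eq (a b : Fin k) (hab : a ≠ b) (n : Fin k → ℤ) (σ : Equiv.Perm (Fin k)) :
    substVar A a b (∏ i : Fin k, zmon i (n ((σ * Equiv.swap a b) i)))
      = substVar A a b (∏ i : Fin k, zmon i (n (σ i))) := by
  rw [map_prod, map_prod]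
  simp only [substVar_zmon, Equiv.Perm.mul_apply]
  refine Fintype.prod_equiv (Equiv.swap a b) _ _ (fun x => ?_)
  have hx : (if x = a then b else x) = (if Equiv.swap a b x = a then b else Equiv.swap a b x) := by
    rcases eq_or_ne x a with rfl | hxa
    · rw [if_pos rfl, Equiv.swap_apply_left, if_neg (Ne.symm hab)]
    · rcases eq_or_ne x b with rfl | hxb
      · rw [if_neg (Ne.symm hab), Equiv.swap_apply_right, if_pos rfl]
      · rw [Equiv.swap_apply_of_ne_of_ne hxa hxb]
  rw [hx]

lemma term_eq [MulSemiringAction (Equiv.Perm (Fin k)) A]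
    (Δ : Fin k → Fin k → A) (q : Fin k → Aˣ)
    (hΔsym : ∀ i j : Fin k, i ≠ j → Δ i j = Δ j i)
    (hΔact : ∀ (σ : Equiv.Perm (Fin k)) (i j : Fin k), i ≠ j →
      σ • Δ i j = Δ (σ i) (σ j))
    (hqact : ∀ (σ : Equiv.Perm (Fin k)) (i : Fin k), σ • (q i : A) = (q (σ i) : A))
    (hann : ∀ i j : Fin k, i ≠ j → ∀ x : A, Δ i j * (x - Equiv.swap i j • x) = 0)
    (n : Fin k → ℤ) (a b : Fin k) (hab : a < b) (σ : Equiv.Perm (Fin k)) :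
    substVar A a b ((∏ i : Fin k, zmon i (n ((σ * Equiv.swap a b) i))) *
        ∏ p ∈ Finset.univ.filter (fun p : Fin k × Fin k => p.1 < p.2),
          Gfac Δ q (σ * Equiv.swap a b) p)
      = substVar A a b ((∏ i : Fin k, zmon i (n (σ i))) *
          ∏ p ∈ Finset.univ.filter (fun p : Fin k × Fin k => p.1 < p.2),
            Gfac Δ q σ p) := by
  have hne : a ≠ b := hab.ne
  set S : Finset (Fin k × Fin k) :=
    Finset.univ.filter (fun p : Fin k × Fin k => p.1 < p.2) with hS
  have hmem : (a, b) ∈ S := by simp [hS, hab]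
  -- the (a,b)-factor maps to `cst (Δ a b) * zmon b 1 * zmon b 1` under the substitution
  have hD : ∀ σ' : Equiv.Perm (Fin k),
      substVar A a b (Gfac Δ q σ' (a, b))
        = cst (Δ a b) * (zmon b 1 * zmon b 1) := by
    intro σ'
    have ifa : (if a = a then b else a) = b := if_pos rfl
    have ifb : (if b = a then b else b) = b := if_neg hab.ne'
    unfold Gfac
    split_ifs <;>
      · simp only [map_add, map_sub, map_mul, substVar_zmon, substVar_cst,
          ifa, if_true, ifb]
        ring
  -- split off the (a,b) factor
  have hsplit : ∀ σ' : Equiv.Perm (Fin k),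
      substVar A a b (∏ p ∈ S, Gfac Δ q σ' p)
        = cst (Δ a b) * (zmon b 1 * zmon b 1) *
            ∏ p ∈ S.erase (a, b), substVar A a b (Gfac Δ q σ' p) := by
    intro σ'
    rw [map_prod, ← Finset.mul_prod_erase _ _ hmem, hD]
  -- the product over the remaining pairs transforms by `Psi`
  have hQ : ∏ p ∈ S.erase (a, b), substVar A a b (Gfac Δ q (σ * Equiv.swap a b) p)
      = Psi (A := A) (Equiv.swap a b)
          (∏ p ∈ S.erase (a, b), substVar A a b (Gfac Δ q σ p)) := by
    rw [map_prod]
    refine Finset.prod_nbij' (tau a b) (tau a b) ?_ ?_ ?_ ?_ ?_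
    · intro p hp
      rw [Finset.mem_erase, hS, Finset.mem_filter] at hp ⊢
      obtain ⟨hp1, -, hp2⟩ := hp
      exact ⟨tau_ne hab hp2 hp1, Finset.mem_univ _, tau_lt hp2.ne⟩
    · intro p hp
      rw [Finset.mem_erase, hS, Finset.mem_filter] at hp ⊢
      obtain ⟨hp1, -, hp2⟩ := hp
      exact ⟨tau_ne hab hp2 hp1, Finset.mem_univ _, tau_lt hp2.ne⟩
    · intro p hp
      rw [Finset.mem_erase, hS, Finset.mem_filter] at hp
      exact tau_invol hp.2.2
    · intro p hp
      rw [Finset.mem_erase, hS, Finset.mem_filter] at hp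
      exact tau_invol hp.2.2
    · intro p hp
      rw [Finset.mem_erase, hS, Finset.mem_filter] at hp
      exact pair_step Δ q hΔsym hΔact hqact a b hab σ p hp.2.2 hp.1
  have key : cst (Δ a b) *
        Psi (A := A) (Equiv.swap a b)
          (∏ p ∈ S.erase (a, b), substVar A a b (Gfac Δ q σ p))
      = cst (Δ a b) * ∏ p ∈ S.erase (a, b), substVar A a b (Gfac Δ q σ p) := by
    have h0 := ann_key (A := A) (Equiv.swap a b) (Δ a b)
      (fun c => hann a b hne c)
      (∏ p ∈ S.erase (a, b), substVar A a b (Gfac Δ q σ p))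
    rw [mul_sub] at h0
    rw [← sub_eq_zero, ← neg_sub, h0, neg_zero]
  rw [map_mul, map_mul, mon_eq a b hne, hsplit, hsplit, hQ]
  have rearr : ∀ X Y W : AddMonoidAlgebra A (Fin k →₀ ℤ),
      X * (cst (Δ a b) * (zmon b 1 * zmon b 1) * Y)
        = X * (zmon b 1 * zmon b 1) * (cst (Δ a b) * Y) := by
    intro X Y W; ring
  rw [rearr _ _ 0, rearr _ _ 0, key]

end ShuffleAux

open ShuffleAux in
theorem statement0 {k : ℕ} (hk : 2 ≤ k) (A : Type*) [CommRing A]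
    [MulSemiringAction (Equiv.Perm (Fin k)) A]
    (Δ : Fin k → Fin k → A) (q : Fin k → Aˣ)
    (hΔsym : ∀ i j : Fin k, i ≠ j → Δ i j = Δ j i)
    (hΔact : ∀ (σ : Equiv.Perm (Fin k)) (i j : Fin k), i ≠ j →
      σ • Δ i j = Δ (σ i) (σ j))
    (hqact : ∀ (σ : Equiv.Perm (Fin k)) (i : Fin k), σ • (q i : A) = (q (σ i) : A))
    (hann : ∀ i j : Fin k, i ≠ j → ∀ x : A, Δ i j * (x - Equiv.swap i j • x) = 0)
    (n : Fin k → ℤ) (a b : Fin k) (hab : a < b) :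
    substVar A a b (rhoSurface Δ q n) = 0 := by
  have hne : a ≠ b := hab.ne
  rw [rhoSurface_eq, map_sum]
  refine Finset.sum_involution (fun σ _ => σ * Equiv.swap a b) ?_ ?_
    (fun σ _ => Finset.mem_univ _) ?_
  · intro σ _
    rw [map_zsmul, map_zsmul]
    have hsign : ((Equiv.Perm.sign (σ * Equiv.swap a b) : ℤˣ) : ℤ)
        = -((Equiv.Perm.sign σ : ℤˣ) : ℤ) := by
      rw [Equiv.Perm.sign_mul, Equiv.Perm.sign_swap hne]
      simp
    rw [hsign, term_eq Δ q hΔsym hΔact hqact hann n a b hab σ, neg_smul,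
      add_neg_cancel]
  · intro σ _ _
    intro h
    have h2 : σ⁻¹ * (σ * Equiv.swap a b) = σ⁻¹ * σ := by rw [h]
    rw [← mul_assoc, inv_mul_cancel, one_mul] at h2
    have := congrArg (fun e : Equiv.Perm (Fin k) => e a) h2
    simp only [Equiv.swap_apply_left, Equiv.Perm.coe_one, id_eq] at this
    exact hne this.symm
  · intro σ _
    show σ * Equiv.swap a b * Equiv.swap a b = σ
    rw [mul_assoc, Equiv.swap_mul_self, mul_one]
end
end

section
/- The Laurent polynomial ρ defined below is divisible by the Vandermonde product Π_{1 ≤ i < j ≤ k} (z_j − z_i) in A[z_1^{±1},...,z_k^{±1}]. (Consequently, every generator z_1^{n_1} * ... * z_1^{n_k} of the small universal shuffle algebra associated to surfaces can be written in the form r(z_1,...,z_k) / Π_{1 ≤ i ≠ j ≤ k}(z_i − z_j q_j), where r is a Laurent polynomial with coefficients in the coefficient ring, i.e. the a priori simple poles along z_i = z_j cancel after symmetrization.) -/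
noncomputable section
open Finset

namespace Aux

variable {k : ℕ} {A : Type*} [CommRing A]

/-- the additive map on exponents realizing `z_a ↦ z_b`. -/
def gsub (a b : Fin k) : (Fin k →₀ ℤ) →+ (Fin k →₀ ℤ) where
  toFun m := m + Finsupp.single b (m a) - Finsupp.single a (m a)
  map_zero' := by simp
  map_add' x y := by
    ext j
    simp [Finsupp.single_apply]
    split_ifs <;> ring

lemma gsub_single (a b i : Fin k) (m : ℤ) :
    gsub a b (Finsupp.single i m) = Finsupp.single (if i = a then b else i) m := by
  by_cases h : i = a
  · subst h
    rw [if_pos rfl]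
    show Finsupp.single i m + Finsupp.single b ((Finsupp.single i m) i)
        - Finsupp.single i ((Finsupp.single i m) i) = Finsupp.single b m
    rw [Finsupp.single_eq_same]
    abel
  · rw [if_neg h]
    show Finsupp.single i m + Finsupp.single b ((Finsupp.single i m) a)
        - Finsupp.single a ((Finsupp.single i m) a) = Finsupp.single i m
    rw [Finsupp.single_eq_of_ne' h]
    simp

/-- substitution `z_a ↦ z_b` as a ring hom. -/
def subst (a b : Fin k) :
    AddMonoidAlgebra A (Fin k →₀ ℤ) →+* AddMonoidAlgebra A (Fin k →₀ ℤ) :=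
  AddMonoidAlgebra.mapDomainRingHom A (gsub a b)

lemma subst_single (a b : Fin k) (m : Fin k →₀ ℤ) (c : A) :
    subst a b (AddMonoidAlgebra.single m c) = AddMonoidAlgebra.single (gsub a b m) c := by
  simp [subst, Finsupp.mapDomain_single]

lemma subst_zmon (a b i : Fin k) (m : ℤ) :
    subst a b (zmon i m : AddMonoidAlgebra A (Fin k →₀ ℤ))
      = zmon (if i = a then b else i) m := by
  rw [zmon, subst_single, gsub_single]; rfl

lemma subst_cst (a b : Fin k) (c : A) :
    subst a b (cst c : AddMonoidAlgebra A (Fin k →₀ ℤ)) = cst c := by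
  rw [cst, subst_single, map_zero]

/-- coefficientwise application of a ring hom. -/
def cmap (f : A →+* A) :
    AddMonoidAlgebra A (Fin k →₀ ℤ) →+* AddMonoidAlgebra A (Fin k →₀ ℤ) :=
  AddMonoidAlgebra.liftNCRingHom
    ((AddMonoidAlgebra.singleZeroRingHom : A →+* AddMonoidAlgebra A (Fin k →₀ ℤ)).comp f)
    (AddMonoidAlgebra.of A (Fin k →₀ ℤ)) (fun _ _ => Commute.all _ _)

lemma cmap_single (f : A →+* A) (m : Fin k →₀ ℤ) (c : A) :
    cmap f (AddMonoidAlgebra.single m c) = AddMonoidAlgebra.single m (f c) := by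
  simp [cmap, AddMonoidAlgebra.liftNCRingHom, AddMonoidAlgebra.liftNC_single,
    AddMonoidAlgebra.singleZeroRingHom, AddMonoidAlgebra.of_apply,
    AddMonoidAlgebra.single_mul_single]

lemma cmap_zmon (f : A →+* A) (i : Fin k) (m : ℤ) :
    cmap f (zmon i m : AddMonoidAlgebra A (Fin k →₀ ℤ)) = zmon i m := by
  rw [zmon, cmap_single, map_one]

lemma cmap_cst (f : A →+* A) (c : A) :
    cmap f (cst c : AddMonoidAlgebra A (Fin k →₀ ℤ)) = cst (f c) := by
  rw [cst, cmap_single]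
  rfl

lemma cmap_apply (f : A →+* A) (X : AddMonoidAlgebra A (Fin k →₀ ℤ)) (m : Fin k →₀ ℤ) :
    (cmap f X).coeff m = f (X.coeff m) := by
  induction X using AddMonoidAlgebra.induction_linear with
  | zero => simp
  | add u v hu hv =>
      rw [map_add]
      rw [AddMonoidAlgebra.coeff_add, AddMonoidAlgebra.coeff_add,
        Finsupp.add_apply, Finsupp.add_apply, hu, hv, map_add]
  | single a b =>
      rw [cmap_single]
      show (Finsupp.single a (f b)) m = f ((Finsupp.single a b) m)
      rw [Finsupp.single_apply, Finsupp.single_apply]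
      split_ifs <;> simp

lemma single_regular (s : Fin k →₀ ℤ) (y : AddMonoidAlgebra A (Fin k →₀ ℤ))
    (h : AddMonoidAlgebra.single s (1 : A) * y = 0) : y = 0 := by
  have h2 := congrArg (fun z => AddMonoidAlgebra.single (-s) (1 : A) * z) h
  simpa [← mul_assoc, AddMonoidAlgebra.single_mul_single,
    ← AddMonoidAlgebra.one_def] using h2

/-- regularity of `z_v - z_u` for `u ≠ v`. -/
lemma reg (u v : Fin k) (huv : u ≠ v) (x : AddMonoidAlgebra A (Fin k →₀ ℤ))
    (h : (zmon v 1 - zmon u 1) * x = 0) : x = 0 := by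
  classical
  set d : Fin k →₀ ℤ := Finsupp.single v 1 - Finsupp.single u 1 with hd
  have hfac : (zmon v 1 - zmon u 1 : AddMonoidAlgebra A (Fin k →₀ ℤ))
      = AddMonoidAlgebra.single (Finsupp.single u 1) 1
        * (AddMonoidAlgebra.single d 1 - 1) := by
    rw [mul_sub, mul_one, AddMonoidAlgebra.single_mul_single, mul_one, zmon, zmon]
    congr 2
    rw [hd]; abel
  have h3 : (AddMonoidAlgebra.single d (1:A) - 1) * x = 0 := by
    apply single_regular (Finsupp.single u 1)
    rw [← mul_assoc, ← hfac, h]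
  have h4 : AddMonoidAlgebra.single d (1:A) * x = x := by
    rw [sub_mul, one_mul, sub_eq_zero] at h3
    exact h3
  have hshift : ∀ y : Fin k →₀ ℤ, x.coeff y = x.coeff (y - d) := by
    intro y
    calc x.coeff y = (AddMonoidAlgebra.single d (1:A) * x).coeff y := by rw [h4]
      _ = 1 * x.coeff (-d + y) := AddMonoidAlgebra.coeff_single_mul_apply x 1 d y
      _ = x.coeff (y - d) := by rw [one_mul, neg_add_eq_sub]
  by_contra hx
  have hne : x.coeff.support.Nonempty :=
    Finsupp.support_nonempty_iff.mpr (mt AddMonoidAlgebra.coeff_eq_zero.mp hx)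
  have hSne : (x.coeff.support.image (fun m => m v)).Nonempty := hne.image _
  set M := (x.coeff.support.image (fun m => m v)).max' hSne with hM
  obtain ⟨m, hm, hmv⟩ := Finset.mem_image.mp ((x.coeff.support.image (fun m => m v)).max'_mem hSne)
  have hx1 : x.coeff (m + d) ≠ 0 := by
    rw [hshift (m + d), add_sub_cancel_right]
    exact Finsupp.mem_support_iff.mp hm
  have hmem : (m + d) ∈ x.coeff.support := Finsupp.mem_support_iff.mpr hx1
  have hle : (m + d) v ≤ M :=
    Finset.le_max' _ ((m + d) v) (Finset.mem_image_of_mem (fun m => m v) hmem)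
  have hdv : d v = 1 := by
    rw [hd]
    rw [Finsupp.sub_apply, Finsupp.single_eq_same, Finsupp.single_eq_of_ne' huv]
    ring
  rw [Finsupp.add_apply, hdv, hmv] at hle
  omega

lemma cst_mul_sub_cmap [MulSemiringAction (Equiv.Perm (Fin k)) A]
    (c : A) (g : Equiv.Perm (Fin k)) (hc : ∀ x : A, c * (x - g • x) = 0)
    (X : AddMonoidAlgebra A (Fin k →₀ ℤ)) :
    cst c * (X - cmap (MulSemiringAction.toRingHom (Equiv.Perm (Fin k)) A g) X) = 0 := by
  apply AddMonoidAlgebra.ext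
  apply Finsupp.ext
  intro m
  rw [AddMonoidAlgebra.coeff_zero, Finsupp.zero_apply, cst,
    AddMonoidAlgebra.coeff_single_mul_apply, neg_zero, zero_add,
    AddMonoidAlgebra.coeff_sub, Finsupp.sub_apply, cmap_apply, MulSemiringAction.toRingHom_apply]
  exact hc (X.coeff m)

/-- geometric-series divisibility. -/
lemma geom_dvd (e : Fin k →₀ ℤ) (t : ℤ) :
    (AddMonoidAlgebra.single e (1:A) - 1) ∣ (AddMonoidAlgebra.single (t • e) (1:A) - 1) := by
  induction t using Int.induction_on with
  | zero =>
      rw [zero_smul, ← AddMonoidAlgebra.one_def, sub_self]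
      exact dvd_zero _
  | succ t ih =>
      have key : AddMonoidAlgebra.single (((t : ℤ) + 1) • e) (1:A) - 1
          = AddMonoidAlgebra.single ((t : ℤ) • e) 1 * (AddMonoidAlgebra.single e 1 - 1)
            + (AddMonoidAlgebra.single ((t : ℤ) • e) 1 - 1) := by
        rw [mul_sub, mul_one, AddMonoidAlgebra.single_mul_single, mul_one, add_smul, one_smul]
        abel
      rw [key]
      exact dvd_add (Dvd.intro_left _ rfl) ih
  | pred t ih =>
      have key : AddMonoidAlgebra.single ((-(t : ℤ) - 1) • e) (1:A) - 1
          = AddMonoidAlgebra.single (-e) 1 * (AddMonoidAlgebra.single ((-(t:ℤ)) • e) 1 - 1)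
            - AddMonoidAlgebra.single (-e) 1 * (AddMonoidAlgebra.single e 1 - 1) := by
        rw [mul_sub, mul_one, mul_sub, mul_one, AddMonoidAlgebra.single_mul_single, mul_one,
          AddMonoidAlgebra.single_mul_single, mul_one, neg_add_cancel,
          AddMonoidAlgebra.one_def]
        have h5 : -e + -(t:ℤ) • e = (-(t:ℤ) - 1) • e := by
          rw [sub_smul, one_smul, neg_smul]
          abel
        rw [h5]
        abel
      rw [key]
      exact dvd_sub (Dvd.dvd.mul_left ih _) (Dvd.dvd.mul_left (dvd_refl _) _)

lemma zdiff_dvd_geom (a b : Fin k) (t : ℤ) :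
    ((zmon b 1 - zmon a 1 : AddMonoidAlgebra A (Fin k →₀ ℤ)))
      ∣ (AddMonoidAlgebra.single (t • (Finsupp.single a 1 - Finsupp.single b 1)) (1:A) - 1) := by
  have hA : (zmon b 1 : AddMonoidAlgebra A (Fin k →₀ ℤ))
      * AddMonoidAlgebra.single (-(Finsupp.single b 1)) 1 = 1 := by
    rw [zmon, AddMonoidAlgebra.single_mul_single, one_mul, add_neg_cancel,
      ← AddMonoidAlgebra.one_def]
  have hB : (zmon a 1 : AddMonoidAlgebra A (Fin k →₀ ℤ))
      * AddMonoidAlgebra.single (-(Finsupp.single b 1)) 1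
      = AddMonoidAlgebra.single (Finsupp.single a 1 - Finsupp.single b 1) 1 := by
    rw [zmon, AddMonoidAlgebra.single_mul_single, one_mul, ← sub_eq_add_neg]
  have h1 : AddMonoidAlgebra.single (Finsupp.single a 1 - Finsupp.single b 1) (1:A) - 1
      = (zmon b 1 - zmon a 1)
        * (-(AddMonoidAlgebra.single (-(Finsupp.single b 1)) 1)) := by
    rw [mul_neg, sub_mul, hA, hB, neg_sub]
  exact dvd_trans (Dvd.intro _ h1.symm) (geom_dvd _ t)

lemma sub_dvd_sub_subst (a b : Fin k) (f : AddMonoidAlgebra A (Fin k →₀ ℤ)) :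
    (zmon b 1 - zmon a 1 : AddMonoidAlgebra A (Fin k →₀ ℤ)) ∣ (f - subst a b f) := by
  induction f using AddMonoidAlgebra.induction_linear with
  | zero =>
      rw [map_zero, sub_zero]
      exact dvd_zero _
  | add u v hu hv =>
      rw [map_add, add_sub_add_comm]
      exact dvd_add hu hv
  | single m c =>
      rw [subst_single]
      have hexp : gsub a b m + (m a) • (Finsupp.single a 1 - Finsupp.single b 1) = m := by
        have hg : gsub a b m = m + Finsupp.single b (m a) - Finsupp.single a (m a) := rfl
        rw [hg, smul_sub, Finsupp.smul_single, Finsupp.smul_single, smul_eq_mul, mul_one]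
        abel
      have key : AddMonoidAlgebra.single m c - AddMonoidAlgebra.single (gsub a b m) c
          = AddMonoidAlgebra.single (gsub a b m) c
            * (AddMonoidAlgebra.single ((m a) • (Finsupp.single a 1 - Finsupp.single b 1)) 1
                - 1) := by
        rw [mul_sub, mul_one, AddMonoidAlgebra.single_mul_single, mul_one, hexp]
      rw [key]
      exact Dvd.dvd.mul_left (zdiff_dvd_geom a b (m a)) _

lemma dvd_of_subst_eq_zero (a b : Fin k) (f : AddMonoidAlgebra A (Fin k →₀ ℤ))
    (h : subst a b f = 0) :
    (zmon b 1 - zmon a 1 : AddMonoidAlgebra A (Fin k →₀ ℤ)) ∣ f := by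
  have := sub_dvd_sub_subst a b f
  rwa [h, sub_zero] at this

lemma prod_dvd (S : Finset (Fin k × Fin k)) :
    (∀ p ∈ S, p.1 < p.2) → ∀ f : AddMonoidAlgebra A (Fin k →₀ ℤ),
      (∀ p ∈ S, subst p.1 p.2 f = 0) →
      (∏ p ∈ S, (zmon p.2 1 - zmon p.1 1)) ∣ f := by
  classical
  induction S using Finset.induction_on with
  | empty => intro _ f _; simpa using one_dvd f
  | @insert p₀ S hp₀S ih =>
      intro hS f hf
      have hlt₀ : p₀.1 < p₀.2 := hS p₀ (Finset.mem_insert_self _ _)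
      obtain ⟨g, hg⟩ := dvd_of_subst_eq_zero p₀.1 p₀.2 f
        (hf p₀ (Finset.mem_insert_self _ _))
      have hgd : ∀ p ∈ S, subst p.1 p.2 g = 0 := by
        intro p hp
        have hlt : p.1 < p.2 := hS p (Finset.mem_insert_of_mem hp)
        have hpne : p ≠ p₀ := fun h => hp₀S (h ▸ hp)
        have h1 : (0 : AddMonoidAlgebra A (Fin k →₀ ℤ))
            = subst p.1 p.2 (zmon p₀.2 1 - zmon p₀.1 1) * subst p.1 p.2 g := by
          rw [← map_mul, ← hg, hf p (Finset.mem_insert_of_mem hp)]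
        rw [map_sub, subst_zmon, subst_zmon] at h1
        set x : Fin k := if p₀.1 = p.1 then p.2 else p₀.1 with hx
        set y : Fin k := if p₀.2 = p.1 then p.2 else p₀.2 with hy
        have hxy : x ≠ y := by
          rw [hx, hy]
          split_ifs with h1' h2' h2'
          · exact absurd (h1'.trans h2'.symm) (ne_of_lt hlt₀)
          · intro hc
            exact hpne (Prod.ext_iff.mpr ⟨h1'.symm, hc⟩)
          · exact ne_of_lt (lt_trans (h2' ▸ hlt₀) hlt)
          · exact ne_of_lt hlt₀
        apply reg x y hxy
        rw [← h1]
      obtain ⟨h, hh⟩ := ih (fun p hp => hS p (Finset.mem_insert_of_mem hp)) g hgd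
      refine ⟨h, ?_⟩
      rw [Finset.prod_insert hp₀S, hg, hh]
      ring

end Aux

namespace Aux

variable {k : ℕ} {A : Type*} [CommRing A]

lemma subst_rho [MulSemiringAction (Equiv.Perm (Fin k)) A]
    (Δ : Fin k → Fin k → A) (q : Fin k → Aˣ)
    (hΔsym : ∀ i j : Fin k, i ≠ j → Δ i j = Δ j i)
    (hΔact : ∀ (σ : Equiv.Perm (Fin k)) (i j : Fin k), i ≠ j →
      σ • Δ i j = Δ (σ i) (σ j))
    (hqact : ∀ (σ : Equiv.Perm (Fin k)) (i : Fin k), σ • (q i : A) = (q (σ i) : A))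
    (hann : ∀ i j : Fin k, i ≠ j → ∀ x : A, Δ i j * (x - Equiv.swap i j • x) = 0)
    (n : Fin k → ℤ) (a b : Fin k) (hab : a < b) :
    subst a b (rhoSurface Δ q n) = 0 := by
  classical
  have hne : a ≠ b := ne_of_lt hab
  set τ : Equiv.Perm (Fin k) := Equiv.swap a b with hτdef
  have hττ : ∀ i, τ (τ i) = i := fun i => Equiv.swap_apply_self a b i
  have hτa : τ a = b := Equiv.swap_apply_left a b
  have hτb : τ b = a := Equiv.swap_apply_right a b
  have hτother : ∀ i, i ≠ a → i ≠ b → τ i = i := fun i h h2 =>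
    Equiv.swap_apply_of_ne_of_ne h h2
  have hτinj : Function.Injective τ := τ.injective
  have hrτ : ∀ i : Fin k, (if τ i = a then b else τ i) = (if i = a then b else i) := by
    intro i
    rcases eq_or_ne i a with h | h
    · subst h; rw [hτa, if_neg (Ne.symm hne), if_pos rfl]
    · rcases eq_or_ne i b with h2 | h2
      · subst h2; rw [hτb, if_pos rfl, if_neg h]
      · rw [hτother i h h2]
  set R : A →+* A := MulSemiringAction.toRingHom (Equiv.Perm (Fin k)) A τ with hRdef
  have hRapp : ∀ x : A, R x = τ • x := fun x => rfl
  set pairs : Finset (Fin k × Fin k) :=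
    Finset.univ.filter (fun p : Fin k × Fin k => p.1 < p.2) with hpairs
  set F : (Fin k × Fin k) → Equiv.Perm (Fin k) → AddMonoidAlgebra A (Fin k →₀ ℤ) :=
    fun p σ =>
      (if σ p.1 < σ p.2 then
          (zmon p.2 1 - zmon p.1 1) *
              (zmon p.2 1 - cst (q p.1 : A) * zmon p.1 1) +
            cst (Δ p.1 p.2) * zmon p.1 1 * zmon p.2 1
        else
          (zmon p.2 1 - zmon p.1 1) *
              (cst (q p.2 : A) * zmon p.2 1 - zmon p.1 1) +
            cst (Δ p.1 p.2) * zmon p.1 1 * zmon p.2 1) with hF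
  have hrho : rhoSurface Δ q n
      = ∑ σ : Equiv.Perm (Fin k),
          (Equiv.Perm.sign σ : ℤ) •
            ((∏ i : Fin k, zmon i (n (σ i))) * ∏ p ∈ pairs, F p σ) := rfl
  rw [hrho, map_sum]
  refine Finset.sum_involution (fun σ _ => σ * τ) ?_ ?_ (fun σ _ => Finset.mem_univ _) ?_
  · -- main cancellation
    intro σ _
    have hsgn : ((Equiv.Perm.sign (σ * τ) : ℤˣ) : ℤ) = -((Equiv.Perm.sign σ : ℤˣ) : ℤ) := by
      rw [Equiv.Perm.sign_mul, hτdef, Equiv.Perm.sign_swap hne]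
      simp
    rw [map_zsmul, map_zsmul, hsgn]
    have hM : subst a b (∏ i : Fin k, zmon i (n ((σ * τ) i))
          : AddMonoidAlgebra A (Fin k →₀ ℤ))
        = subst a b (∏ i : Fin k, zmon i (n (σ i))) := by
      rw [map_prod, map_prod]
      simp only [subst_zmon]
      calc ∏ i : Fin k, zmon (if i = a then b else i) (n ((σ * τ) i))
          = ∏ i : Fin k, zmon (if τ i = a then b else τ i) (n (σ (τ i))) :=
            Finset.prod_congr rfl (fun i _ => by rw [hrτ i, Equiv.Perm.mul_apply])
        _ = ∏ i : Fin k, zmon (if i = a then b else i) (n (σ i)) :=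
            Equiv.prod_comp τ (fun j => zmon (if j = a then b else j) (n (σ j)))
    -- the heart : subst of the pair-products agree
    have hstep1 : cmap R (subst a b (∏ p ∈ pairs, F p σ))
        = subst a b (∏ p ∈ pairs, F p (σ * τ)) := by
      rw [map_prod, map_prod, map_prod]
      refine Finset.prod_bij'
        (fun p _ => if τ p.1 < τ p.2 then (τ p.1, τ p.2) else (τ p.2, τ p.1))
        (fun p _ => if τ p.1 < τ p.2 then (τ p.1, τ p.2) else (τ p.2, τ p.1))
        ?_ ?_ ?_ ?_ ?_
      · intro p hp
        have hplt : p.1 < p.2 := (Finset.mem_filter.mp hp).2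
        refine Finset.mem_filter.mpr ⟨Finset.mem_univ _, ?_⟩
        split_ifs with h
        · exact h
        · exact lt_of_le_of_ne (not_lt.mp h)
            (fun hh => (ne_of_lt hplt) (hτinj hh).symm)
      · intro p hp
        have hplt : p.1 < p.2 := (Finset.mem_filter.mp hp).2
        refine Finset.mem_filter.mpr ⟨Finset.mem_univ _, ?_⟩
        split_ifs with h
        · exact h
        · exact lt_of_le_of_ne (not_lt.mp h)
            (fun hh => (ne_of_lt hplt) (hτinj hh).symm)
      · intro p hp
        have hplt : p.1 < p.2 := (Finset.mem_filter.mp hp).2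
        by_cases h : τ p.1 < τ p.2
        · simp [h, hττ, hplt]
        · simp [h, hττ, hplt.asymm]
      · intro p hp
        have hplt : p.1 < p.2 := (Finset.mem_filter.mp hp).2
        by_cases h : τ p.1 < τ p.2
        · simp [h, hττ, hplt]
        · simp [h, hττ, hplt.asymm]
      · intro p hp
        have hplt : p.1 < p.2 := (Finset.mem_filter.mp hp).2
        have hne12 : p.1 ≠ p.2 := ne_of_lt hplt
        have hτne : τ p.1 ≠ τ p.2 := fun h => hne12 (hτinj h)
        have hσne : σ p.1 ≠ σ p.2 := fun h => hne12 (σ.injective h)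
        have hΔτ : R (Δ p.1 p.2) = Δ (τ p.1) (τ p.2) := by
          rw [hRapp, hΔact τ p.1 p.2 hne12]
        have hqτ1 : R ((q p.1 : A)) = (q (τ p.1) : A) := by rw [hRapp, hqact]
        have hqτ2 : R ((q p.2 : A)) = (q (τ p.2) : A) := by rw [hRapp, hqact]
        by_cases hc1 : τ p.1 < τ p.2
        · rw [if_pos hc1]
          simp only [hF]
          simp only [Equiv.Perm.mul_apply, hττ]
          by_cases hc2 : σ p.1 < σ p.2
          · rw [if_pos hc2, if_pos hc2]
            simp only [map_add, map_mul, map_sub, subst_zmon, subst_cst,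
              cmap_zmon, cmap_cst, hrτ, hΔτ, hqτ1]
            try ring
          · rw [if_neg hc2, if_neg hc2]
            simp only [map_add, map_mul, map_sub, subst_zmon, subst_cst,
              cmap_zmon, cmap_cst, hrτ, hΔτ, hqτ2]
            try ring
        · rw [if_neg hc1]
          simp only [hF]
          simp only [Equiv.Perm.mul_apply, hττ]
          by_cases hc2 : σ p.1 < σ p.2
          · rw [if_pos hc2, if_neg (not_lt.mpr (le_of_lt hc2))]
            simp only [map_add, map_mul, map_sub, subst_zmon, subst_cst,
              cmap_zmon, cmap_cst, hrτ, hΔτ, hqτ1]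
            rw [hΔsym (τ p.1) (τ p.2) hτne]
            ring
          · rw [if_neg hc2,
              if_pos (lt_of_le_of_ne (not_lt.mp hc2) (Ne.symm hσne))]
            simp only [map_add, map_mul, map_sub, subst_zmon, subst_cst,
              cmap_zmon, cmap_cst, hrτ, hΔτ, hqτ2]
            rw [hΔsym (τ p.1) (τ p.2) hτne]
            ring
    have hstep2 : cmap R (subst a b (∏ p ∈ pairs, F p σ))
        = subst a b (∏ p ∈ pairs, F p σ) := by
      have hmem : ((a, b) : Fin k × Fin k) ∈ pairs := by
        rw [hpairs, Finset.mem_filter]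
        exact ⟨Finset.mem_univ _, hab⟩
      have h0 : subst a b (zmon b 1 - zmon a 1 : AddMonoidAlgebra A (Fin k →₀ ℤ)) = 0 := by
        rw [map_sub, subst_zmon, subst_zmon, if_neg (Ne.symm hne), if_pos rfl, sub_self]
      have hdvd : cst (Δ a b) ∣ subst a b (∏ p ∈ pairs, F p σ) := by
        rw [map_prod]
        refine dvd_trans ?_ (Finset.dvd_prod_of_mem (fun p => subst a b (F p σ)) hmem)
        simp only [hF]
        split_ifs with hc <;>
        · rw [map_add, map_mul, map_mul, map_mul, h0, zero_mul, zero_add, subst_cst]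
          exact Dvd.dvd.mul_right (dvd_mul_right _ _) _
      obtain ⟨X, hX⟩ := hdvd
      have hτΔ : R (Δ a b) = Δ a b := by
        rw [hRapp, hΔact τ a b hne, hτa, hτb, hΔsym b a (Ne.symm hne)]
      have h2 := cst_mul_sub_cmap (Δ a b) τ (hann a b hne) X
      rw [hτdef] at h2
      rw [← hτdef] at h2
      rw [mul_sub, sub_eq_zero] at h2
      calc cmap R (subst a b (∏ p ∈ pairs, F p σ)) = cmap R (cst (Δ a b) * X) := by rw [hX]
        _ = cst (Δ a b) * cmap R X := by rw [map_mul, cmap_cst, hτΔ]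
        _ = cst (Δ a b) * X := h2.symm
        _ = subst a b (∏ p ∈ pairs, F p σ) := hX.symm
    have hP : subst a b (∏ p ∈ pairs, F p σ) = subst a b (∏ p ∈ pairs, F p (σ * τ)) :=
      hstep2.symm.trans hstep1
    rw [map_mul, map_mul, hM, hP, neg_smul, add_neg_cancel]
  · -- no fixed points
    intro σ _ _
    intro heq
    have h1 : σ b = σ a := by
      have := congrArg (fun ρ : Equiv.Perm (Fin k) => ρ a) heq
      simpa [Equiv.Perm.mul_apply, hτa] using this
    exact hne (σ.injective h1).symm
  · -- involution
    intro σ _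
    show σ * τ * τ = σ
    rw [mul_assoc, hτdef, Equiv.swap_mul_self, mul_one]

end Aux

theorem statement1 {k : ℕ} (hk : 2 ≤ k) (A : Type*) [CommRing A]
    [MulSemiringAction (Equiv.Perm (Fin k)) A]
    (Δ : Fin k → Fin k → A) (q : Fin k → Aˣ)
    (hΔsym : ∀ i j : Fin k, i ≠ j → Δ i j = Δ j i)
    (hΔact : ∀ (σ : Equiv.Perm (Fin k)) (i j : Fin k), i ≠ j →
      σ • Δ i j = Δ (σ i) (σ j))
    (hqact : ∀ (σ : Equiv.Perm (Fin k)) (i : Fin k), σ • (q i : A) = (q (σ i) : A))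
    (hann : ∀ i j : Fin k, i ≠ j → ∀ x : A, Δ i j * (x - Equiv.swap i j • x) = 0)
    (n : Fin k → ℤ) :
    (∏ p ∈ Finset.univ.filter (fun p : Fin k × Fin k => p.1 < p.2),
        (zmon p.2 1 - zmon p.1 1)) ∣ rhoSurface Δ q n := by
  apply Aux.prod_dvd
  · intro p hp
    exact (Finset.mem_filter.mp hp).2
  · intro p hp
    exact Aux.subst_rho Δ q hΔsym hΔact hqact hann n p.1 p.2 (Finset.mem_filter.mp hp).2
end
end

section
/- The Laurent polynomial ρ_C defined below is divisible by the Vandermonde product Π_{1 ≤ i < j ≤ k} (z_j − z_i) in A[z_1^{±1},...,z_k^{±1}]. Consequently, every generator z_1^{n_1} * ... * z_1^{n_k} of the small universal shuffle algebra associated to curves is a Laurent polynomial in z_1,...,z_k with coefficients in A (polynomial in the Δ_{ij}), invariant under the simultaneous S(k)-action on the variables and the coefficients. -/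
/-!
STATEMENT 2: The numerator ρ_C of the shuffle-algebra generator
`z_1^{n_1} * ... * z_1^{n_k}` (curve case) is divisible by the Vandermonde
product `Π_{1 ≤ i < j ≤ k} (z_j − z_i)`; hence the generator is a Laurent
polynomial.
-/

noncomputable section

open Finset

/-- The Laurent polynomial
`ρ_C = Σ_{σ ∈ S(k)} z_1^{n_{σ(1)}} ⋯ z_k^{n_{σ(k)}} · Π_{1 ≤ i < j ≤ k} c_{ij}^σ`,
where `c_{ij}^σ = (z_j − z_i) + Δ_{ij} z_i` if `σ(i) < σ(j)` and
`c_{ij}^σ = (z_j − z_i) − Δ_{ij} z_j` if `σ(i) > σ(j)`. -/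
def rhoCurve {k : ℕ} {A : Type*} [CommRing A]
    (Δ : Fin k → Fin k → A) (n : Fin k → ℤ) :
    AddMonoidAlgebra A (Fin k →₀ ℤ) :=
  ∑ σ : Equiv.Perm (Fin k),
    (∏ i : Fin k, zmon i (n (σ i))) *
      ∏ p ∈ Finset.univ.filter (fun p : Fin k × Fin k => p.1 < p.2),
        (if σ p.1 < σ p.2 then
            (zmon p.2 1 - zmon p.1 1) + cst (Δ p.1 p.2) * zmon p.1 1
          else
            (zmon p.2 1 - zmon p.1 1) - cst (Δ p.1 p.2) * zmon p.2 1)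

namespace Stmt2

variable {k : ℕ} {A : Type*} [CommRing A]

/-- the substitution `z_i ↦ z_j` on exponents. -/
def subH (i j : Fin k) : (Fin k →₀ ℤ) →+ (Fin k →₀ ℤ) where
  toFun g := g + g i • (Finsupp.single j 1 - Finsupp.single i 1)
  map_zero' := by simp
  map_add' g h := by
    simp only [Finsupp.add_apply, add_smul]
    abel

/-- the substitution `z_i ↦ z_j` as a ring hom. -/
def phi (i j : Fin k) :
    AddMonoidAlgebra A (Fin k →₀ ℤ) →+* AddMonoidAlgebra A (Fin k →₀ ℤ) :=
  AddMonoidAlgebra.mapDomainRingHom A (subH i j)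

lemma phi_single (i j : Fin k) (g : Fin k →₀ ℤ) (c : A) :
    phi i j (AddMonoidAlgebra.single g c) = AddMonoidAlgebra.single (subH i j g) c := by
  simp [phi, Finsupp.mapDomain_single]

lemma subH_single (i j l : Fin k) (m : ℤ) :
    subH i j (Finsupp.single l m) = Finsupp.single (if l = i then j else l) m := by
  rcases eq_or_ne l i with rfl | h
  · simp [subH, Finsupp.smul_single, smul_sub]
  · simp [subH, Finsupp.single_apply, h]

def rmap (i j l : Fin k) : Fin k := if l = i then j else l

lemma phi_zmon (i j l : Fin k) (m : ℤ) :
    phi i j (zmon l m) = (zmon (rmap i j l) m : AddMonoidAlgebra A (Fin k →₀ ℤ)) := by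
  rw [zmon, phi_single, subH_single]; rfl

lemma phi_cst (i j : Fin k) (c : A) :
    phi i j (cst c) = (cst c : AddMonoidAlgebra A (Fin k →₀ ℤ)) := by
  rw [cst, phi_single, map_zero]

/-- coefficientwise action of a permutation, as a ring hom -/
def psi [MulSemiringAction (Equiv.Perm (Fin k)) A] (s : Equiv.Perm (Fin k)) :
    AddMonoidAlgebra A (Fin k →₀ ℤ) →+* AddMonoidAlgebra A (Fin k →₀ ℤ) :=
  AddMonoidAlgebra.liftNCRingHom
    (AddMonoidAlgebra.singleZeroRingHom.comp (MulSemiringAction.toRingHom _ A s))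
    (AddMonoidAlgebra.of A (Fin k →₀ ℤ)) (fun _ _ => Commute.all _ _)

lemma psi_single [MulSemiringAction (Equiv.Perm (Fin k)) A] (s : Equiv.Perm (Fin k))
    (g : Fin k →₀ ℤ) (c : A) :
    psi s (AddMonoidAlgebra.single g c) = AddMonoidAlgebra.single g (s • c) := by
  simp [psi, AddMonoidAlgebra.liftNCRingHom, AddMonoidAlgebra.liftNC_single,
    AddMonoidAlgebra.singleZeroRingHom, AddMonoidAlgebra.of_apply,
    AddMonoidAlgebra.single_mul_single]

lemma psi_zmon [MulSemiringAction (Equiv.Perm (Fin k)) A] (s : Equiv.Perm (Fin k))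
    (l : Fin k) (m : ℤ) :
    psi s (zmon l m) = (zmon l m : AddMonoidAlgebra A (Fin k →₀ ℤ)) := by
  rw [zmon, psi_single, smul_one]

lemma psi_cst [MulSemiringAction (Equiv.Perm (Fin k)) A] (s : Equiv.Perm (Fin k)) (c : A) :
    psi s (cst c) = (cst (s • c) : AddMonoidAlgebra A (Fin k →₀ ℤ)) := by
  rw [cst, psi_single]; rfl

/-- invertible monomial -/
def gunit (g : Fin k →₀ ℤ) : (AddMonoidAlgebra A (Fin k →₀ ℤ))ˣ where
  val := AddMonoidAlgebra.single g 1
  inv := AddMonoidAlgebra.single (-g) 1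
  val_inv := by simp [AddMonoidAlgebra.single_mul_single]; rfl
  inv_val := by simp [AddMonoidAlgebra.single_mul_single]; rfl

lemma gunit_pow (g : Fin k →₀ ℤ) (m : ℕ) :
    (gunit g ^ m : (AddMonoidAlgebra A (Fin k →₀ ℤ))ˣ) = gunit (m • g) := by
  induction m with
  | zero => ext; simp [gunit]; rfl
  | succ n ih =>
    ext
    rw [pow_succ]
    simp only [Units.val_mul, ih]
    simp [gunit, AddMonoidAlgebra.single_mul_single, add_smul]

lemma gunit_zpow (g : Fin k →₀ ℤ) (m : ℤ) :
    (gunit g ^ m : (AddMonoidAlgebra A (Fin k →₀ ℤ))ˣ) = gunit (m • g) := by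
  cases m with
  | ofNat n => rw [Int.ofNat_eq_coe, zpow_natCast, gunit_pow]; norm_num
  | negSucc n =>
      rw [zpow_negSucc, gunit_pow]
      ext
      have : (Int.negSucc n) • g = -(((n+1):ℕ) • g) := by
        rw [Int.negSucc_eq, neg_smul]
        norm_cast
      rw [this]
      simp [gunit]

lemma unit_sub_one_dvd (u : (AddMonoidAlgebra A (Fin k →₀ ℤ))ˣ) (m : ℤ) :
    ((u : AddMonoidAlgebra A (Fin k →₀ ℤ)) - 1) ∣ ((u ^ m : _ˣ) : AddMonoidAlgebra A (Fin k →₀ ℤ)) - 1 := by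
  cases m with
  | ofNat n =>
      rw [Int.ofNat_eq_coe, zpow_natCast, Units.val_pow_eq_pow_val]
      simpa using sub_dvd_pow_sub_pow (u : AddMonoidAlgebra A (Fin k →₀ ℤ)) 1 n
  | negSucc n =>
      rw [zpow_negSucc]
      have h1 : ((((u ^ (n+1))⁻¹ : _ˣ)) : AddMonoidAlgebra A (Fin k →₀ ℤ)) - 1
          = -((((u ^ (n+1))⁻¹ : _ˣ)) : AddMonoidAlgebra A (Fin k →₀ ℤ)) *
            (((u ^ (n+1) : _ˣ) : AddMonoidAlgebra A (Fin k →₀ ℤ)) - 1) := by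
        rw [neg_mul, mul_sub, Units.inv_mul, mul_one]
        ring
      rw [h1, Units.val_pow_eq_pow_val]
      refine Dvd.dvd.mul_left ?_ _
      simpa using sub_dvd_pow_sub_pow (u : AddMonoidAlgebra A (Fin k →₀ ℤ)) 1 (n+1)

lemma factor (a b : Fin k) :
    (zmon b 1 - zmon a 1 : AddMonoidAlgebra A (Fin k →₀ ℤ)) =
      ((gunit (Finsupp.single a 1) : (AddMonoidAlgebra A (Fin k →₀ ℤ))ˣ) : AddMonoidAlgebra A (Fin k →₀ ℤ)) *
        (AddMonoidAlgebra.single (Finsupp.single b 1 - Finsupp.single a 1) 1 - 1) := by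
  have h1 : Finsupp.single a (1:ℤ) + (Finsupp.single b 1 - Finsupp.single a 1)
      = Finsupp.single b 1 := by abel
  show _ = AddMonoidAlgebra.single (Finsupp.single a 1) 1 * _
  rw [mul_sub, mul_one, AddMonoidAlgebra.single_mul_single, h1, one_mul, zmon, zmon]

/-- regularity of `z_b - z_a` -/
lemma reg (a b : Fin k) (hab : a ≠ b) (y : AddMonoidAlgebra A (Fin k →₀ ℤ))
    (h : (zmon b 1 - zmon a 1) * y = 0) : y = 0 := by
  set h0 : Fin k →₀ ℤ := Finsupp.single b 1 - Finsupp.single a 1 with hh0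
  have hyy : (AddMonoidAlgebra.single h0 (1:A) - 1) * y = 0 := by
    rw [factor a b, mul_assoc] at h
    exact (Units.mul_right_eq_zero _).mp h
  have hmul : AddMonoidAlgebra.single h0 (1:A) * y = y := by
    have h2 : AddMonoidAlgebra.single h0 (1:A) * y - y = 0 := by
      rw [← hyy]; ring
    exact sub_eq_zero.mp h2
  have hshift : ∀ g : Fin k →₀ ℤ, y.coeff (-h0 + g) = y.coeff g := by
    intro g
    have h3 : (AddMonoidAlgebra.single h0 (1:A) * y).coeff g = 1 * y.coeff (-h0 + g) :=
      AddMonoidAlgebra.coeff_single_mul_apply y 1 h0 g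
    rw [hmul, one_mul] at h3
    exact h3.symm
  by_contra hy
  obtain ⟨g0, hg0⟩ : ∃ g0, y.coeff g0 ≠ 0 := by
    by_contra hno
    push_neg at hno
    exact hy (AddMonoidAlgebra.coeff_injective (Finsupp.ext hno))
  have hn : ∀ n : ℕ, y.coeff (g0 + n • h0) = y.coeff g0 := by
    intro n
    induction n with
    | zero => simp
    | succ m ih =>
        have := hshift (g0 + (m+1) • h0)
        have harith : -h0 + (g0 + (m+1) • h0) = g0 + m • h0 := by
          rw [succ_nsmul]; abel
        rw [harith] at this
        rw [← this, ih]
  have hb : h0 b = 1 := by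
    rw [hh0]
    simp [Finsupp.single_apply, hab, Ne.symm hab]
  have hinj : Function.Injective (fun n : ℕ => g0 + n • h0) := by
    intro n m hnm
    have := congrArg (fun f : Fin k →₀ ℤ => f b) hnm
    simp only [Finsupp.add_apply, Finsupp.smul_apply, hb, add_right_inj] at this
    have h4 : (n:ℤ) = m := by simpa using this
    exact_mod_cast h4
  have hmem : ∀ n : ℕ, (fun n : ℕ => g0 + n • h0) n ∈ (↑y.coeff.support : Set (Fin k →₀ ℤ)) := by
    intro n
    simp only [Finset.coe_sort_coe, Finset.mem_coe, Finsupp.mem_support_iff]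
    rw [hn n]
    exact hg0
  exact Set.infinite_of_injective_forall_mem hinj hmem y.coeff.support.finite_toSet
lemma dvd_sub_phi (i j : Fin k) (f : AddMonoidAlgebra A (Fin k →₀ ℤ)) :
    (zmon j 1 - zmon i 1) ∣ (f - phi i j f) := by
  have hphi : phi i j f = f.coeff.sum fun g c => AddMonoidAlgebra.single (subH i j g) c := by
    conv_lhs => rw [← AddMonoidAlgebra.sum_coeff_single f]
    rw [map_finsuppSum]
    exact Finsupp.sum_congr fun g _ => phi_single i j g _
  have hid : f = f.coeff.sum fun g c => AddMonoidAlgebra.single g c :=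
    (AddMonoidAlgebra.sum_coeff_single f).symm
  have hf : f - phi i j f
      = f.coeff.sum fun g c =>
          (AddMonoidAlgebra.single g c - AddMonoidAlgebra.single (subH i j g) c) := by
    rw [Finsupp.sum_sub, ← hphi, ← hid]
  rw [hf, Finsupp.sum]
  refine Finset.dvd_sum fun g _ => ?_
  have hsub : subH i j g = g + (g i) • (Finsupp.single j 1 - Finsupp.single i 1) := rfl
  set c := f.coeff g
  set h0 : Fin k →₀ ℤ := Finsupp.single j 1 - Finsupp.single i 1 with hh0
  have key : AddMonoidAlgebra.single g c - AddMonoidAlgebra.single (subH i j g) c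
      = AddMonoidAlgebra.single g c * (1 - AddMonoidAlgebra.single ((g i) • h0) (1:A)) := by
    rw [mul_sub, mul_one, AddMonoidAlgebra.single_mul_single, mul_one, hsub]
  rw [key]
  refine Dvd.dvd.mul_left ?_ _
  have h2 : AddMonoidAlgebra.single ((g i) • h0) (1:A)
      = ((gunit h0 ^ (g i) : (AddMonoidAlgebra A (Fin k →₀ ℤ))ˣ) : AddMonoidAlgebra A (Fin k →₀ ℤ)) := by
    rw [gunit_zpow]; rfl
  have h3 : (1 : AddMonoidAlgebra A (Fin k →₀ ℤ)) - AddMonoidAlgebra.single ((g i) • h0) (1:A)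
      = -(((gunit h0 ^ (g i) : (AddMonoidAlgebra A (Fin k →₀ ℤ))ˣ) : AddMonoidAlgebra A (Fin k →₀ ℤ)) - 1) := by
    rw [h2]; ring
  rw [h3]
  have h4 := factor (A := A) i j
  rw [← hh0] at h4
  rw [h4]
  exact (Units.mul_left_dvd).mpr ((unit_sub_one_dvd (gunit (A := A) h0) (g i)).neg_right)

lemma phi_zero_dvd (i j : Fin k) (f : AddMonoidAlgebra A (Fin k →₀ ℤ))
    (h : phi i j f = 0) : (zmon j 1 - zmon i 1) ∣ f := by
  have := dvd_sub_phi i j f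
  rwa [h, sub_zero] at this

lemma rmap_ne (i j a b : Fin k) (hij : i < j) (hab : a < b) (hne : (a, b) ≠ (i, j)) :
    rmap i j a ≠ rmap i j b := by
  unfold rmap
  split_ifs with h1 h2 h2
  · exact absurd (h1.trans h2.symm) hab.ne
  · intro hjb
    exact hne (by rw [h1, hjb])
  · intro haj
    rw [h2] at hab
    rw [haj] at hab
    exact absurd (hab.trans hij) (lt_irrefl j)
  · exact hab.ne

lemma main_ind (S : Finset (Fin k × Fin k)) (hS : ∀ p ∈ S, p.1 < p.2) :
    ∀ f : AddMonoidAlgebra A (Fin k →₀ ℤ), (∀ p ∈ S, phi p.1 p.2 f = 0) →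
      (∏ p ∈ S, (zmon p.2 1 - zmon p.1 1)) ∣ f := by
  classical
  induction S using Finset.induction_on with
  | empty => simp
  | @insert p S' hp ih =>
      intro f hf
      have hD : (zmon p.2 1 - zmon p.1 1) ∣ f :=
        phi_zero_dvd _ _ _ (hf p (Finset.mem_insert_self _ _))
      obtain ⟨q, hq⟩ := hD
      have hq' : ∀ p' ∈ S', phi p'.1 p'.2 q = 0 := by
        intro p' hp'
        have h0 := hf p' (Finset.mem_insert_of_mem hp')
        rw [hq, map_mul, map_sub, phi_zmon, phi_zmon] at h0
        have hne : (p.1, p.2) ≠ (p'.1, p'.2) := by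
          intro hcon
          apply hp
          have : p = p' := Prod.ext (congrArg Prod.fst hcon) (congrArg Prod.snd hcon)
          rw [this]; exact hp'
        exact reg (rmap p'.1 p'.2 p.1) (rmap p'.1 p'.2 p.2)
          (rmap_ne p'.1 p'.2 p.1 p.2 (hS p' (Finset.mem_insert_of_mem hp'))
            (hS p (Finset.mem_insert_self _ _)) hne) (phi p'.1 p'.2 q) h0
      have hdvd := ih (fun p' hp' => hS p' (Finset.mem_insert_of_mem hp')) q hq'
      rw [Finset.prod_insert hp, hq]
      exact mul_dvd_mul_left _ hdvd

section Vanish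

def PP (k : ℕ) : Finset (Fin k × Fin k) :=
  Finset.univ.filter (fun p : Fin k × Fin k => p.1 < p.2)

def Cf (Δ : Fin k → Fin k → A) (σ : Equiv.Perm (Fin k)) (a b : Fin k) :
    AddMonoidAlgebra A (Fin k →₀ ℤ) :=
  if σ a < σ b then (zmon b 1 - zmon a 1) + cst (Δ a b) * zmon a 1
  else (zmon b 1 - zmon a 1) - cst (Δ a b) * zmon b 1

def Mn (n : Fin k → ℤ) (σ : Equiv.Perm (Fin k)) : AddMonoidAlgebra A (Fin k →₀ ℤ) :=
  ∏ l : Fin k, zmon l (n (σ l))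

def Tm (Δ : Fin k → Fin k → A) (n : Fin k → ℤ) (σ : Equiv.Perm (Fin k)) :
    AddMonoidAlgebra A (Fin k →₀ ℤ) :=
  Mn n σ * ∏ p ∈ PP k, Cf Δ σ p.1 p.2

lemma rho_eq (Δ : Fin k → Fin k → A) (n : Fin k → ℤ) :
    rhoCurve Δ n = ∑ σ : Equiv.Perm (Fin k), Tm Δ n σ := rfl

lemma rmap_jj (i j : Fin k) : rmap i j j = j := by
  unfold rmap; exact ite_self j

lemma rmap_ii (i j : Fin k) : rmap i j i = j := by
  unfold rmap; rw [if_pos rfl]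

lemma rmap_swap (i j x : Fin k) : rmap i j (Equiv.swap i j x) = rmap i j x := by
  rcases eq_or_ne x i with rfl | hxi
  · rw [Equiv.swap_apply_left, rmap_jj, rmap_ii]
  rcases eq_or_ne x j with rfl | hxj
  · rw [Equiv.swap_apply_right, rmap_ii, rmap_jj]
  · rw [Equiv.swap_apply_of_ne_of_ne hxi hxj]

lemma Cf_antisymm (Δ : Fin k → Fin k → A) (hΔsym : ∀ i j : Fin k, i ≠ j → Δ i j = Δ j i)
    (σ : Equiv.Perm (Fin k)) (a b : Fin k) (hab : a ≠ b) :
    Cf Δ σ b a = -Cf Δ σ a b := by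
  have hne : σ a ≠ σ b := fun h => hab (σ.injective h)
  unfold Cf
  rcases hne.lt_or_gt with h | h
  · rw [if_pos h, if_neg (not_lt.mpr h.le), hΔsym b a (Ne.symm hab)]
    ring
  · rw [if_neg (not_lt.mpr h.le), if_pos h, hΔsym b a (Ne.symm hab)]
    ring

section Act
variable [MulSemiringAction (Equiv.Perm (Fin k)) A]

lemma key_lemma (Δ : Fin k → Fin k → A)
    (hΔact : ∀ (σ : Equiv.Perm (Fin k)) (i j : Fin k), i ≠ j → σ • Δ i j = Δ (σ i) (σ j))
    (σ : Equiv.Perm (Fin k)) (i j a b : Fin k) (hab : a ≠ b) :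
    phi i j (Cf Δ (σ * Equiv.swap i j) (Equiv.swap i j a) (Equiv.swap i j b))
      = psi (Equiv.swap i j) (phi i j (Cf Δ σ a b)) := by
  have h1 : (σ * Equiv.swap i j) (Equiv.swap i j a) = σ a := by
    rw [Equiv.Perm.mul_apply, Equiv.swap_apply_self]
  have h2 : (σ * Equiv.swap i j) (Equiv.swap i j b) = σ b := by
    rw [Equiv.Perm.mul_apply, Equiv.swap_apply_self]
  have hΔ : Δ (Equiv.swap i j a) (Equiv.swap i j b) = Equiv.swap i j • Δ a b :=
    (hΔact (Equiv.swap i j) a b hab).symm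
  unfold Cf
  rw [h1, h2]
  split_ifs with h <;>
    simp only [map_add, map_sub, map_mul, phi_zmon, phi_cst, psi_zmon, psi_cst,
      rmap_swap, hΔ]

lemma phi_Mn (i j : Fin k) (n : Fin k → ℤ) (σ : Equiv.Perm (Fin k)) :
    phi i j (Mn (A := A) n σ) = ∏ l : Fin k, zmon (rmap i j l) (n (σ l)) := by
  unfold Mn
  rw [map_prod]
  exact Finset.prod_congr rfl fun l _ => phi_zmon i j l _

lemma psi_phi_Mn (i j : Fin k) (n : Fin k → ℤ) (σ : Equiv.Perm (Fin k)) :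
    psi (Equiv.swap i j) (phi i j (Mn (A := A) n σ)) = phi i j (Mn (A := A) n σ) := by
  rw [phi_Mn, map_prod]
  exact Finset.prod_congr rfl fun l _ => psi_zmon _ _ _

lemma phi_Mn_swap (i j : Fin k) (n : Fin k → ℤ) (σ : Equiv.Perm (Fin k)) :
    phi i j (Mn (A := A) n (σ * Equiv.swap i j)) = phi i j (Mn (A := A) n σ) := by
  rw [phi_Mn, phi_Mn]
  have he := Equiv.prod_comp (Equiv.swap i j)
    (fun l => zmon (A := A) (rmap i j l) (n (σ l)))
  rw [← he]
  refine Finset.prod_congr rfl fun l _ => ?_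
  rw [rmap_swap, Equiv.Perm.mul_apply]

end Act

lemma eps_prod (i j : Fin k) (hij : i < j) :
    ∏ p ∈ PP k, (if Equiv.swap i j p.1 < Equiv.swap i j p.2
        then (1 : AddMonoidAlgebra A (Fin k →₀ ℤ)) else -1) = -1 := by
  classical
  have hmem : (i, j) ∈ PP k := by
    simp [PP, hij]
  rw [← Finset.mul_prod_erase _ _ hmem]
  have h1 : (if Equiv.swap i j (i, j).1 < Equiv.swap i j (i, j).2
      then (1 : AddMonoidAlgebra A (Fin k →₀ ℤ)) else -1) = -1 := by
    have hc : ¬ Equiv.swap i j (i, j).1 < Equiv.swap i j (i, j).2 := by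
      show ¬ Equiv.swap i j i < Equiv.swap i j j
      rw [Equiv.swap_apply_left, Equiv.swap_apply_right]
      exact not_lt.mpr hij.le
    rw [if_neg hc]
  rw [h1]
  have h2 : ∏ p ∈ (PP k).erase (i, j),
      (if Equiv.swap i j p.1 < Equiv.swap i j p.2
        then (1 : AddMonoidAlgebra A (Fin k →₀ ℤ)) else -1) = 1 := by
    refine Finset.prod_involution
      (fun q _ => if q.1 = i ∧ q.2 < j then (q.2, j)
        else if q.2 = j ∧ i < q.1 then (i, q.1) else q) ?_ ?_ ?_ ?_
    · -- f q * f (g q) = 1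
      intro q hq
      beta_reduce
      obtain ⟨hqij, hqP⟩ := Finset.mem_erase.mp hq
      have hlt : q.1 < q.2 := (Finset.mem_filter.mp hqP).2
      by_cases hb1 : q.1 = i ∧ q.2 < j
      · obtain ⟨hb1a, hb1b⟩ := hb1
        have hi2 : i < q.2 := hb1a ▸ hlt
        rw [if_pos (show q.1 = i ∧ q.2 < j from ⟨hb1a, hb1b⟩)]
        show (if Equiv.swap i j q.1 < Equiv.swap i j q.2
            then (1 : AddMonoidAlgebra A (Fin k →₀ ℤ)) else -1) *
          (if Equiv.swap i j q.2 < Equiv.swap i j j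
            then (1 : AddMonoidAlgebra A (Fin k →₀ ℤ)) else -1) = 1
        rw [hb1a, Equiv.swap_apply_left,
          Equiv.swap_apply_of_ne_of_ne (ne_of_gt hi2) (ne_of_lt hb1b),
          Equiv.swap_apply_right,
          if_neg (not_lt.mpr hb1b.le), if_neg (not_lt.mpr hi2.le), neg_mul_neg, one_mul]
      by_cases hb2 : q.2 = j ∧ i < q.1
      · obtain ⟨hb2a, hb2b⟩ := hb2
        have hq1j : q.1 < j := hb2a ▸ hlt
        rw [if_neg hb1, if_pos (show q.2 = j ∧ i < q.1 from ⟨hb2a, hb2b⟩)]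
        show (if Equiv.swap i j q.1 < Equiv.swap i j q.2
            then (1 : AddMonoidAlgebra A (Fin k →₀ ℤ)) else -1) *
          (if Equiv.swap i j i < Equiv.swap i j q.1
            then (1 : AddMonoidAlgebra A (Fin k →₀ ℤ)) else -1) = 1
        rw [hb2a, Equiv.swap_apply_right, Equiv.swap_apply_left,
          Equiv.swap_apply_of_ne_of_ne (ne_of_gt hb2b) (ne_of_lt hq1j),
          if_neg (not_lt.mpr hb2b.le), if_neg (not_lt.mpr hq1j.le), neg_mul_neg, one_mul]
      · rw [if_neg hb1, if_neg hb2]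
        split_ifs
        · rw [one_mul]
        · rw [neg_mul_neg, one_mul]
    · -- f q ≠ 1 → g q ≠ q
      intro q hq hfq
      beta_reduce
      obtain ⟨hqij, hqP⟩ := Finset.mem_erase.mp hq
      have hlt : q.1 < q.2 := (Finset.mem_filter.mp hqP).2
      by_cases hb1 : q.1 = i ∧ q.2 < j
      · rw [if_pos hb1]
        intro hcon
        have : q.2 = q.1 := congrArg Prod.fst hcon
        exact absurd this (ne_of_gt hlt)
      by_cases hb2 : q.2 = j ∧ i < q.1
      · rw [if_neg hb1, if_pos hb2]
        intro hcon
        have : i = q.1 := congrArg Prod.fst hcon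
        exact absurd this.symm (ne_of_gt hb2.2)
      · exfalso
        apply hfq
        rw [if_pos]
        by_cases h1i : q.1 = i
        · have hj2 : ¬ q.2 < j := fun hc => hb1 ⟨h1i, hc⟩
          have hq2j : q.2 ≠ j := fun hc => hqij (Prod.ext h1i hc)
          have hj2' : j < q.2 := lt_of_le_of_ne (not_lt.mp hj2) (Ne.symm hq2j)
          rw [h1i, Equiv.swap_apply_left,
            Equiv.swap_apply_of_ne_of_ne (ne_of_gt (hij.trans hj2')) (ne_of_gt hj2')]
          exact hj2'
        by_cases h1j : q.1 = j
        · have hj2' : j < q.2 := h1j ▸ hlt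
          rw [h1j, Equiv.swap_apply_right,
            Equiv.swap_apply_of_ne_of_ne (ne_of_gt (hij.trans hj2')) (ne_of_gt hj2')]
          exact hij.trans hj2'
        · rw [Equiv.swap_apply_of_ne_of_ne h1i h1j]
          by_cases h2i : q.2 = i
          · rw [h2i, Equiv.swap_apply_left]
            exact (h2i ▸ hlt).trans hij
          by_cases h2j : q.2 = j
          · have hni : ¬ i < q.1 := fun hc => hb2 ⟨h2j, hc⟩
            rw [h2j, Equiv.swap_apply_right]
            exact lt_of_le_of_ne (not_lt.mp hni) h1i
          · rw [Equiv.swap_apply_of_ne_of_ne h2i h2j]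
            exact hlt
    · -- g q ∈ erase
      intro q hq
      beta_reduce
      obtain ⟨hqij, hqP⟩ := Finset.mem_erase.mp hq
      have hlt : q.1 < q.2 := (Finset.mem_filter.mp hqP).2
      by_cases hb1 : q.1 = i ∧ q.2 < j
      · rw [if_pos hb1]
        refine Finset.mem_erase.mpr ⟨?_, ?_⟩
        · intro hcon
          have h := congrArg Prod.fst hcon
          exact absurd h (ne_of_gt (hb1.1 ▸ hlt))
        · exact Finset.mem_filter.mpr ⟨Finset.mem_univ _, hb1.2⟩
      by_cases hb2 : q.2 = j ∧ i < q.1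
      · rw [if_neg hb1, if_pos hb2]
        refine Finset.mem_erase.mpr ⟨?_, ?_⟩
        · intro hcon
          have h := congrArg Prod.snd hcon
          exact absurd h (ne_of_lt (hb2.1 ▸ hlt))
        · exact Finset.mem_filter.mpr ⟨Finset.mem_univ _, hb2.2⟩
      · rw [if_neg hb1, if_neg hb2]
        exact hq
    · -- involution
      intro q hq
      beta_reduce
      obtain ⟨hqij, hqP⟩ := Finset.mem_erase.mp hq
      have hlt : q.1 < q.2 := (Finset.mem_filter.mp hqP).2
      by_cases hb1 : q.1 = i ∧ q.2 < j
      · rw [if_pos hb1]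
        have hi2 : i < q.2 := hb1.1 ▸ hlt
        show (if (q.2, j).1 = i ∧ (q.2, j).2 < j then ((q.2, j).2, j)
          else if (q.2, j).2 = j ∧ i < (q.2, j).1 then (i, (q.2, j).1) else (q.2, j)) = q
        rw [if_neg (by show ¬ (q.2 = i ∧ j < j); rintro ⟨hc, _⟩; exact absurd hc (ne_of_gt hi2)),
          if_pos (by show j = j ∧ i < q.2; exact ⟨rfl, hi2⟩)]
        show (i, q.2) = q
        exact Prod.ext hb1.1.symm rfl
      by_cases hb2 : q.2 = j ∧ i < q.1
      · rw [if_neg hb1, if_pos hb2]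
        show (if (i, q.1).1 = i ∧ (i, q.1).2 < j then ((i, q.1).2, j)
          else if (i, q.1).2 = j ∧ i < (i, q.1).1 then (i, (i, q.1).1) else (i, q.1)) = q
        rw [if_pos (by show i = i ∧ q.1 < j; exact ⟨rfl, hb2.1 ▸ hlt⟩)]
        show (q.1, j) = q
        exact Prod.ext rfl hb2.1.symm
      · rw [if_neg hb1, if_neg hb2, if_neg hb1, if_neg hb2]
  rw [h2, mul_one]

def bb (i j : Fin k) (p : Fin k × Fin k) : Fin k × Fin k :=
  if Equiv.swap i j p.1 < Equiv.swap i j p.2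
  then (Equiv.swap i j p.1, Equiv.swap i j p.2)
  else (Equiv.swap i j p.2, Equiv.swap i j p.1)

lemma bb_invol (i j : Fin k) (p : Fin k × Fin k) (hp : p.1 < p.2) :
    bb i j (bb i j p) = p := by
  by_cases hc : Equiv.swap i j p.1 < Equiv.swap i j p.2
  · have h1 : bb i j p = (Equiv.swap i j p.1, Equiv.swap i j p.2) := if_pos hc
    rw [h1]
    have h2 : bb i j (Equiv.swap i j p.1, Equiv.swap i j p.2)
        = if Equiv.swap i j (Equiv.swap i j p.1) < Equiv.swap i j (Equiv.swap i j p.2)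
          then (Equiv.swap i j (Equiv.swap i j p.1), Equiv.swap i j (Equiv.swap i j p.2))
          else (Equiv.swap i j (Equiv.swap i j p.2), Equiv.swap i j (Equiv.swap i j p.1)) := rfl
    rw [h2, Equiv.swap_apply_self, Equiv.swap_apply_self, if_pos hp]
  · have h1 : bb i j p = (Equiv.swap i j p.2, Equiv.swap i j p.1) := if_neg hc
    rw [h1]
    have h2 : bb i j (Equiv.swap i j p.2, Equiv.swap i j p.1)
        = if Equiv.swap i j (Equiv.swap i j p.2) < Equiv.swap i j (Equiv.swap i j p.1)
          then (Equiv.swap i j (Equiv.swap i j p.2), Equiv.swap i j (Equiv.swap i j p.1))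
          else (Equiv.swap i j (Equiv.swap i j p.1), Equiv.swap i j (Equiv.swap i j p.2)) := rfl
    rw [h2, Equiv.swap_apply_self, Equiv.swap_apply_self, if_neg (not_lt.mpr hp.le)]

lemma bb_mem (i j : Fin k) (p : Fin k × Fin k) (hp : p ∈ PP k) : bb i j p ∈ PP k := by
  have hlt : p.1 < p.2 := (Finset.mem_filter.mp hp).2
  by_cases hc : Equiv.swap i j p.1 < Equiv.swap i j p.2
  · rw [show bb i j p = (Equiv.swap i j p.1, Equiv.swap i j p.2) from if_pos hc]
    exact Finset.mem_filter.mpr ⟨Finset.mem_univ _, hc⟩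
  · rw [show bb i j p = (Equiv.swap i j p.2, Equiv.swap i j p.1) from if_neg hc]
    refine Finset.mem_filter.mpr ⟨Finset.mem_univ _, ?_⟩
    show Equiv.swap i j p.2 < Equiv.swap i j p.1
    have hne2 : Equiv.swap i j p.2 ≠ Equiv.swap i j p.1 :=
      fun hcc => (ne_of_lt hlt) ((Equiv.injective _ hcc).symm)
    exact lt_of_le_of_ne (not_lt.mp hc) hne2

section Act2
variable [MulSemiringAction (Equiv.Perm (Fin k)) A]

lemma prod_swap (Δ : Fin k → Fin k → A)
    (hΔsym : ∀ i j : Fin k, i ≠ j → Δ i j = Δ j i)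
    (hΔact : ∀ (σ : Equiv.Perm (Fin k)) (i j : Fin k), i ≠ j → σ • Δ i j = Δ (σ i) (σ j))
    (σ : Equiv.Perm (Fin k)) (i j : Fin k) :
    ∏ p ∈ PP k, phi i j (Cf Δ (σ * Equiv.swap i j) p.1 p.2)
      = (∏ p ∈ PP k, (if Equiv.swap i j p.1 < Equiv.swap i j p.2
          then (1 : AddMonoidAlgebra A (Fin k →₀ ℤ)) else -1))
        * ∏ p ∈ PP k, psi (Equiv.swap i j) (phi i j (Cf Δ σ p.1 p.2)) := by
  rw [← Finset.prod_mul_distrib]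
  refine (Finset.prod_bij' (fun p _ => bb i j p) (fun p _ => bb i j p)
    (fun p hp => bb_mem i j p hp) (fun p hp => bb_mem i j p hp)
    (fun p hp => bb_invol i j p (Finset.mem_filter.mp hp).2)
    (fun p hp => bb_invol i j p (Finset.mem_filter.mp hp).2) ?_).symm
  intro p hp
  beta_reduce
  have hlt : p.1 < p.2 := (Finset.mem_filter.mp hp).2
  have hne : p.1 ≠ p.2 := ne_of_lt hlt
  by_cases hc : Equiv.swap i j p.1 < Equiv.swap i j p.2
  · rw [if_pos hc, show bb i j p = (Equiv.swap i j p.1, Equiv.swap i j p.2) from if_pos hc,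
      one_mul, ← key_lemma Δ hΔact σ i j p.1 p.2 hne]
  · rw [if_neg hc, show bb i j p = (Equiv.swap i j p.2, Equiv.swap i j p.1) from if_neg hc,
      neg_one_mul, ← key_lemma Δ hΔact σ i j p.1 p.2 hne]
    show -(phi i j (Cf Δ (σ * Equiv.swap i j) (Equiv.swap i j p.1) (Equiv.swap i j p.2)))
        = phi i j (Cf Δ (σ * Equiv.swap i j) (Equiv.swap i j p.2) (Equiv.swap i j p.1))
    rw [Cf_antisymm Δ hΔsym (σ * Equiv.swap i j) (Equiv.swap i j p.1) (Equiv.swap i j p.2)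
      (fun hcc => hne (Equiv.injective _ hcc)), map_neg]

lemma psi_eq_sum (s : Equiv.Perm (Fin k)) (W : AddMonoidAlgebra A (Fin k →₀ ℤ)) :
    psi s W = W.coeff.sum fun g c => AddMonoidAlgebra.single g (s • c) := by
  conv_lhs => rw [← AddMonoidAlgebra.sum_coeff_single W]
  rw [map_finsuppSum]
  exact Finsupp.sum_congr fun g _ => psi_single s g _

lemma cst_mul_single (d : A) (g : Fin k →₀ ℤ) (x : A) :
    cst d * AddMonoidAlgebra.single g x = AddMonoidAlgebra.single g (d * x) := by
  rw [cst, AddMonoidAlgebra.single_mul_single, zero_add]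

lemma cancel (s : Equiv.Perm (Fin k)) (d : A) (hinv : s • d = d)
    (hd : ∀ x : A, d * (x - s • x) = 0) (W : AddMonoidAlgebra A (Fin k →₀ ℤ)) :
    cst d * W - psi s (cst d * W) = 0 := by
  rw [map_mul, psi_cst, hinv, ← mul_sub]
  have hsub : W - psi s W = W.coeff.sum fun g c => AddMonoidAlgebra.single g (c - s • c) := by
    rw [psi_eq_sum]
    have h1 : W.coeff.sum (fun g c => AddMonoidAlgebra.single g (c - s • c))
        = W.coeff.sum (fun g c => (AddMonoidAlgebra.single g c : AddMonoidAlgebra A (Fin k →₀ ℤ))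
            - AddMonoidAlgebra.single g (s • c)) :=
      Finsupp.sum_congr fun g _ => AddMonoidAlgebra.single_sub _ _ _
    rw [h1, Finsupp.sum_sub, AddMonoidAlgebra.sum_coeff_single]
  rw [hsub, Finsupp.mul_sum]
  have h2 : W.coeff.sum (fun g c => cst d * AddMonoidAlgebra.single g (c - s • c))
      = W.coeff.sum (fun _ _ => (0 : AddMonoidAlgebra A (Fin k →₀ ℤ))) :=
    Finsupp.sum_congr fun g _ => by
      rw [cst_mul_single, hd]
      exact AddMonoidAlgebra.single_zero _
  rw [h2, Finsupp.sum, Finset.sum_const_zero]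

lemma vanish (Δ : Fin k → Fin k → A)
    (hΔsym : ∀ i j : Fin k, i ≠ j → Δ i j = Δ j i)
    (hΔact : ∀ (σ : Equiv.Perm (Fin k)) (i j : Fin k), i ≠ j → σ • Δ i j = Δ (σ i) (σ j))
    (hann : ∀ i j : Fin k, i ≠ j → ∀ x : A, Δ i j * (x - Equiv.swap i j • x) = 0)
    (n : Fin k → ℤ) (i j : Fin k) (hij : i < j) :
    phi i j (rhoCurve Δ n) = 0 := by
  rw [rho_eq, map_sum]
  have hswapne : Equiv.swap i j ≠ 1 := fun hc => hij.ne (Equiv.swap_eq_one_iff.mp hc)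
  refine Finset.sum_ninvolution (fun σ => σ * Equiv.swap i j) ?_
    (fun σ _ hcon => hswapne (mul_left_cancel (a := σ) (by rw [mul_one]; exact hcon)))
    (fun _ => Finset.mem_univ _)
    (fun σ => Equiv.mul_swap_mul_self i j σ)
  intro σ
  have hA : phi i j (Tm Δ n (σ * Equiv.swap i j))
      = - psi (Equiv.swap i j) (phi i j (Tm Δ n σ)) := by
    have hL : phi i j (Tm Δ n (σ * Equiv.swap i j))
        = phi i j (Mn n (σ * Equiv.swap i j))
          * ∏ p ∈ PP k, phi i j (Cf Δ (σ * Equiv.swap i j) p.1 p.2) := by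
      unfold Tm
      simp only [map_mul, map_prod]
    have hR : psi (Equiv.swap i j) (phi i j (Tm Δ n σ))
        = phi i j (Mn n σ)
          * ∏ p ∈ PP k, psi (Equiv.swap i j) (phi i j (Cf Δ σ p.1 p.2)) := by
      unfold Tm
      simp only [map_mul, map_prod]
      rw [psi_phi_Mn]
    rw [hL, hR, phi_Mn_swap, prod_swap Δ hΔsym hΔact σ i j, eps_prod i j hij]
    ring
  have hB : ∃ W, phi i j (Tm Δ n σ) = cst (Δ i j) * W := by
    have hmem : (i, j) ∈ PP k := by simp [PP, hij]
    have hCfij : phi i j (Cf Δ σ i j)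
        = cst (Δ i j) * (if σ i < σ j then zmon j 1 else -(zmon j 1)) := by
      unfold Cf
      split_ifs with h <;>
        simp only [map_add, map_sub, map_mul, phi_zmon, phi_cst, rmap_ii, rmap_jj] <;>
        ring
    refine ⟨(if σ i < σ j then zmon j 1 else -(zmon j 1)) *
        (phi i j (Mn n σ) * ∏ p ∈ (PP k).erase (i, j), phi i j (Cf Δ σ p.1 p.2)), ?_⟩
    unfold Tm
    simp only [map_mul, map_prod]
    rw [← Finset.mul_prod_erase _ _ hmem]
    beta_reduce
    show phi i j (Mn n σ) * (phi i j (Cf Δ σ i j)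
        * ∏ p ∈ (PP k).erase (i, j), phi i j (Cf Δ σ p.1 p.2)) = _
    rw [hCfij]
    ring
  obtain ⟨W, hW⟩ := hB
  have hinv : Equiv.swap i j • Δ i j = Δ i j := by
    rw [hΔact _ i j (ne_of_lt hij), Equiv.swap_apply_left, Equiv.swap_apply_right,
      hΔsym j i (ne_of_gt hij)]
  have hc := cancel (Equiv.swap i j) (Δ i j) hinv (hann i j (ne_of_lt hij)) W
  rw [hA, hW]
  linear_combination hc

end Act2

end Vanish

end Stmt2

theorem statement2 {k : ℕ} (hk : 2 ≤ k) (A : Type*) [CommRing A]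
    [MulSemiringAction (Equiv.Perm (Fin k)) A]
    (Δ : Fin k → Fin k → A)
    (hΔsym : ∀ i j : Fin k, i ≠ j → Δ i j = Δ j i)
    (hΔact : ∀ (σ : Equiv.Perm (Fin k)) (i j : Fin k), i ≠ j →
      σ • Δ i j = Δ (σ i) (σ j))
    (hann : ∀ i j : Fin k, i ≠ j → ∀ x : A, Δ i j * (x - Equiv.swap i j • x) = 0)
    (n : Fin k → ℤ) :
    (∏ p ∈ Finset.univ.filter (fun p : Fin k × Fin k => p.1 < p.2),
        (zmon p.2 1 - zmon p.1 1)) ∣ rhoCurve Δ n :=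
  Stmt2.main_ind (Stmt2.PP k) (fun p hp => (Finset.mem_filter.mp hp).2) (rhoCurve Δ n)
    (fun p hp => Stmt2.vanish Δ hΔsym hΔact hann n p.1 p.2 ((Finset.mem_filter.mp hp).2))
end
end

section
/- Assume n_1 ≥ n_2 ≥ ... ≥ n_k, and let P ∈ A[z_1^{±1},...,z_k^{±1}] be the unique Laurent polynomial with ρ_C = (Π_{1 ≤ i < j ≤ k}(z_j − z_i)) · P (unique since the Vandermonde is a non-zerodivisor). Call a permutation σ ∈ S(k) admissible if whenever i > j and σ(i) < σ(j) one has n_i = n_j. Then: (a) every exponent vector (m_1,...,m_k) occurring in the support of P satisfies (m_1,...,m_k) ≤ (n_1,...,n_k) in the lexicographic order; (b) the coefficient of the monomial z_1^{n_1} ⋯ z_k^{n_k} in P equals Σ_{σ admissible} Π_{1 ≤ i < j ≤ k with σ(i) < σ(j)} (1 − Δ_{ij}). -/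
/-!
STATEMENT 3: Leading term of the generator `z_1^{n_1} * ... * z_1^{n_k}` of the
small universal shuffle algebra associated to curves (`n_1 ≥ ... ≥ n_k`):
writing `ρ_C = Vandermonde · P`, every monomial of `P` is lexicographically
at most `z_1^{n_1} ⋯ z_k^{n_k}`, whose coefficient is
`Σ_{σ admissible} Π_{i<j, σ(i)<σ(j)} (1 − Δ_{ij})`.
-/

noncomputable section

open Finset

/-- Lexicographic comparison of exponent vectors: `f ≤ₗₑₓ g`. -/
def lexLE {k : ℕ} (f g : Fin k → ℤ) : Prop :=
  f = g ∨ ∃ i : Fin k, (∀ j : Fin k, j < i → f j = g j) ∧ f i < g i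

/-- A permutation `σ` is admissible (for the exponent sequence `n`) if
`i > j` and `σ(i) < σ(j)` imply `n_i = n_j`. -/
def Admissible {k : ℕ} (n : Fin k → ℤ) (σ : Equiv.Perm (Fin k)) : Prop :=
  ∀ i j : Fin k, j < i → σ i < σ j → n i = n j

section Helpers

variable {k : ℕ} {A : Type*} [CommRing A]

/-! ### Generic lemmas about Laurent polynomials and the lex order -/

lemma lexmem_mul {p q : AddMonoidAlgebra A (Fin k →₀ ℤ)} {a b : Fin k →₀ ℤ}
    (hp : ∀ m ∈ p.coeff.support, toLex m ≤ toLex a)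
    (hq : ∀ m ∈ q.coeff.support, toLex m ≤ toLex b) :
    ∀ m ∈ (p * q).coeff.support, toLex m ≤ toLex (a + b) := by
  classical
  intro m hm
  obtain ⟨x, hx, y, hy, rfl⟩ := Finset.mem_add.1 (AddMonoidAlgebra.support_coeff_mul_subset p q hm)
  rw [toLex_add, toLex_add]
  exact add_le_add (hp x hx) (hq y hy)

lemma lexeval_mul {p q : AddMonoidAlgebra A (Fin k →₀ ℤ)} {a b : Fin k →₀ ℤ}
    (hp : ∀ m ∈ p.coeff.support, toLex m ≤ toLex a)
    (hq : ∀ m ∈ q.coeff.support, toLex m ≤ toLex b) :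
    (p * q).coeff (a + b) = p.coeff a * q.coeff b := by
  classical
  rw [AddMonoidAlgebra.coeff_mul]
  rw [Finsupp.sum]
  rw [Finset.sum_eq_single a]
  · rw [Finsupp.sum, Finset.sum_eq_single b]
    · rw [if_pos rfl]
    · intro y hy hyb
      rw [if_neg]
      intro he
      exact hyb (add_left_cancel he)
    · intro hb
      rw [Finsupp.notMem_support_iff.1 hb, mul_zero, if_pos rfl]
  · intro x hx hxa
    apply Finset.sum_eq_zero
    intro y hy
    simp only []
    rw [if_neg]
    intro he
    have h1 : toLex x < toLex a := lt_of_le_of_ne (hp x hx) (by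
      intro h; exact hxa (toLex.injective h))
    have h2 : toLex (x + y) < toLex (a + b) := by
      rw [toLex_add, toLex_add]
      exact add_lt_add_of_lt_of_le h1 (hq y hy)
    rw [he] at h2
    exact lt_irrefl _ h2
  · intro ha
    rw [Finsupp.notMem_support_iff.1 ha]
    apply Finset.sum_eq_zero
    intro y hy
    simp

lemma lexmem_prod {ι : Type*} {s : Finset ι} {f : ι → AddMonoidAlgebra A (Fin k →₀ ℤ)}
    {d : ι → Fin k →₀ ℤ}
    (h : ∀ i ∈ s, ∀ m ∈ (f i).coeff.support, toLex m ≤ toLex (d i)) :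
    ∀ m ∈ (∏ i ∈ s, f i).coeff.support, toLex m ≤ toLex (∑ i ∈ s, d i) := by
  classical
  induction s using Finset.cons_induction with
  | empty =>
      intro m hm
      rw [Finset.prod_empty] at hm
      have : m ∈ (AddMonoidAlgebra.single (0 : Fin k →₀ ℤ) (1 : A)).coeff.support := by
        rwa [← AddMonoidAlgebra.one_def]
      have := Finsupp.support_single_subset this
      simp only [Finset.mem_singleton] at this
      subst this
      simp
  | cons i s his ih =>
      rw [Finset.prod_cons, Finset.sum_cons]
      exact lexmem_mul (h i (Finset.mem_cons_self i s))
        (ih fun j hj => h j (Finset.mem_cons_of_mem hj))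

lemma lexeval_prod {ι : Type*} {s : Finset ι} {f : ι → AddMonoidAlgebra A (Fin k →₀ ℤ)}
    {d : ι → Fin k →₀ ℤ}
    (h : ∀ i ∈ s, ∀ m ∈ (f i).coeff.support, toLex m ≤ toLex (d i)) :
    (∏ i ∈ s, f i).coeff (∑ i ∈ s, d i) = ∏ i ∈ s, (f i).coeff (d i) := by
  classical
  induction s using Finset.cons_induction with
  | empty =>
      simp only [Finset.prod_empty, Finset.sum_empty]
      rw [AddMonoidAlgebra.one_def]
      exact Finsupp.single_eq_same
  | cons i s his ih =>
      rw [Finset.prod_cons, Finset.sum_cons, Finset.prod_cons,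
        lexeval_mul (h i (Finset.mem_cons_self i s))
          (lexmem_prod fun j hj => h j (Finset.mem_cons_of_mem hj)),
        ih fun j hj => h j (Finset.mem_cons_of_mem hj)]

/-! ### Lex comparisons of basis monomials -/

lemma lex_single_lt {i j : Fin k} (hij : i < j) :
    toLex (Finsupp.single j (1:ℤ)) < toLex (Finsupp.single i (1:ℤ)) := by
  rw [Finsupp.Lex.lt_iff]
  refine ⟨i, ?_, ?_⟩
  · intro j' hj'
    show (Finsupp.single j (1:ℤ)) j' = (Finsupp.single i (1:ℤ)) j'
    rw [Finsupp.single_eq_of_ne (hj'.trans hij).ne, Finsupp.single_eq_of_ne hj'.ne]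
  · show (Finsupp.single j (1:ℤ)) i < (Finsupp.single i (1:ℤ)) i
    rw [Finsupp.single_eq_of_ne hij.ne, Finsupp.single_eq_same]
    exact zero_lt_one

lemma two_single_mem {i j : Fin k} (hij : i < j) (u v : A) :
    ∀ m ∈ (AddMonoidAlgebra.single (Finsupp.single j (1:ℤ)) u
        + AddMonoidAlgebra.single (Finsupp.single i (1:ℤ)) v).coeff.support,
      toLex m ≤ toLex (Finsupp.single i (1:ℤ)) := by
  intro m hm
  simp only [AddMonoidAlgebra.coeff_add, AddMonoidAlgebra.coeff_single] at hm
  have h2 := Finsupp.support_add hm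
  simp only [Finset.mem_union] at h2
  rcases h2 with h | h
  · have := Finsupp.support_single_subset h
    simp only [Finset.mem_singleton] at this
    subst this
    exact (lex_single_lt hij).le
  · have := Finsupp.support_single_subset h
    simp only [Finset.mem_singleton] at this
    subst this
    exact le_refl _

lemma two_single_eval {i j : Fin k} (hij : i < j) (u v : A) :
    (AddMonoidAlgebra.single (Finsupp.single j (1:ℤ)) u
        + AddMonoidAlgebra.single (Finsupp.single i (1:ℤ)) v).coeff (Finsupp.single i 1) = v := by
  simp only [AddMonoidAlgebra.coeff_add, AddMonoidAlgebra.coeff_single]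
  rw [Finsupp.add_apply, Finsupp.single_eq_same, Finsupp.single_eq_of_ne, zero_add]
  intro h
  exact hij.ne ((Finsupp.single_left_inj one_ne_zero).1 h)

/-! ### The factors of `ρ_C` in two-monomial normal form -/

lemma cfac_eq (Δ : Fin k → Fin k → A) (σ : Equiv.Perm (Fin k)) (p : Fin k × Fin k) :
    (if σ p.1 < σ p.2 then
        (zmon p.2 1 - zmon p.1 1) + cst (Δ p.1 p.2) * zmon p.1 1
      else
        (zmon p.2 1 - zmon p.1 1) - cst (Δ p.1 p.2) * zmon p.2 1)
    = AddMonoidAlgebra.single (Finsupp.single p.2 1)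
        (if σ p.1 < σ p.2 then 1 else 1 - Δ p.1 p.2)
      + AddMonoidAlgebra.single (Finsupp.single p.1 1)
        (if σ p.1 < σ p.2 then Δ p.1 p.2 - 1 else -1) := by
  unfold zmon cst
  split_ifs with h
  · rw [AddMonoidAlgebra.single_mul_single, zero_add, mul_one]
    simp only [AddMonoidAlgebra.single_sub, AddMonoidAlgebra.single_neg]
    ring
  · rw [AddMonoidAlgebra.single_mul_single, zero_add, mul_one]
    simp only [AddMonoidAlgebra.single_sub, AddMonoidAlgebra.single_neg]
    ring

lemma vfac_eq (p : Fin k × Fin k) :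
    (zmon p.2 1 - zmon p.1 1 : AddMonoidAlgebra A (Fin k →₀ ℤ))
    = AddMonoidAlgebra.single (Finsupp.single p.2 1) 1
      + AddMonoidAlgebra.single (Finsupp.single p.1 1) (-1) := by
  unfold zmon
  simp only [AddMonoidAlgebra.single_neg]
  ring

/-! ### Combinatorics of permutations vs a decreasing sequence -/

lemma card_filter_comp (σ : Equiv.Perm (Fin k)) (p : Fin k → Prop) [DecidablePred p] :
    (univ.filter fun u => p (σ u)).card = (univ.filter p).card := by
  apply Finset.card_bij (fun u _ => σ u)
  · intro a ha; simp only [mem_filter, mem_univ, true_and] at ha ⊢; exact ha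
  · intro a _ b _ h; exact σ.injective h
  · intro b hb
    refine ⟨σ.symm b, ?_, by simp⟩
    simp only [mem_filter, mem_univ, true_and] at hb ⊢
    simpa using hb

lemma exists_mem_not_mem {C T : Finset (Fin k)} (hcard : C.card = T.card) {i : Fin k}
    (hiC : i ∈ C) (hiT : i ∉ T) : ∃ u ∈ T, u ∉ C := by
  by_contra h
  push_neg at h
  have hsub : T ⊆ C.erase i := fun u hu => Finset.mem_erase.2 ⟨fun he => hiT (he ▸ hu), h u hu⟩
  have h2 := Finset.card_le_card hsub
  rw [Finset.card_erase_of_mem hiC] at h2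
  have hpos : 0 < C.card := Finset.card_pos.2 ⟨i, hiC⟩
  omega

lemma perm_lt {n : Fin k → ℤ} (hn : ∀ i j : Fin k, i ≤ j → n j ≤ n i) (σ : Equiv.Perm (Fin k))
    (h : ¬ ∀ i, n (σ i) = n i) :
    ∃ i : Fin k, (∀ j, j < i → n (σ j) = n j) ∧ n (σ i) < n i := by
  classical
  push_neg at h
  obtain ⟨i₀, hi₀⟩ := h
  have hS : (univ.filter fun i => n (σ i) ≠ n i).Nonempty := ⟨i₀, by simp [hi₀]⟩
  obtain ⟨i, hiS, hmin⟩ := Finset.exists_min_image _ id hS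
  simp only [mem_filter, mem_univ, true_and] at hiS
  have hbelow : ∀ j, j < i → n (σ j) = n j := by
    intro j hj
    by_contra hj'
    exact absurd (hmin j (by simp [hj'])) (by simpa using hj)
  refine ⟨i, hbelow, ?_⟩
  rcases lt_or_gt_of_ne hiS with h1 | h1
  · exact h1
  · exfalso
    set C := univ.filter (fun u => n i < n u) with hC
    set T := univ.filter (fun u => n i < n (σ u)) with hT
    have hcard : T.card = C.card := card_filter_comp σ (fun u => n i < n u)
    have hCi : ∀ u ∈ C, u < i := by
      intro u hu
      simp only [hC, mem_filter, mem_univ, true_and] at hu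
      by_contra hle
      exact absurd (hn i u (le_of_not_gt hle)) (not_le.2 hu)
    have hsub : insert i C ⊆ T := by
      intro u hu
      rcases Finset.mem_insert.1 hu with rfl | hu
      · simp only [hT, mem_filter, mem_univ, true_and]; exact h1
      · have hui := hCi u hu
        simp only [hC, mem_filter, mem_univ, true_and] at hu
        simp only [hT, mem_filter, mem_univ, true_and]
        rw [hbelow u hui]
        exact hu
    have hiC : i ∉ C := by simp [hC]
    have h3 := Finset.card_le_card hsub
    rw [Finset.card_insert_of_notMem hiC] at h3
    omega

lemma admissible_iff_pointwise {n : Fin k → ℤ} (hn : ∀ i j : Fin k, i ≤ j → n j ≤ n i)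
    (σ : Equiv.Perm (Fin k)) :
    Admissible n σ ↔ ∀ i, n (σ i) = n i := by
  classical
  constructor
  · intro hadm i
    by_contra hne
    rcases lt_or_gt_of_ne hne with h1 | h1
    · have hcard : (univ.filter fun u => n i ≤ n (σ u)).card
          = (univ.filter fun u => n i ≤ n u).card := card_filter_comp σ (fun u => n i ≤ n u)
      obtain ⟨u, huT, huC⟩ := exists_mem_not_mem hcard.symm
        (by simp : i ∈ univ.filter fun u => n i ≤ n u)
        (by simp [not_le.2 h1] : i ∉ univ.filter fun u => n i ≤ n (σ u))
      simp only [mem_filter, mem_univ, true_and, not_le] at huT huC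
      have hiu : i < u := by
        by_contra hle
        exact absurd (hn u i (le_of_not_gt hle)) (not_le.2 huC)
      have hσ : σ u < σ i := by
        by_contra hle
        have := hn (σ i) (σ u) (le_of_not_gt hle)
        omega
      have := hadm u i hiu hσ
      omega
    · have hcard : (univ.filter fun u => n (σ i) ≤ n (σ u)).card
          = (univ.filter fun u => n (σ i) ≤ n u).card :=
        card_filter_comp σ (fun u => n (σ i) ≤ n u)
      obtain ⟨u, huT, huC⟩ := exists_mem_not_mem hcard
        (by simp : i ∈ univ.filter fun u => n (σ i) ≤ n (σ u))
        (by simp [not_le.2 h1] : i ∉ univ.filter fun u => n (σ i) ≤ n u)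
      simp only [mem_filter, mem_univ, true_and, not_le] at huT huC
      have hui : u < i := by
        by_contra hle
        have := hn i u (le_of_not_gt hle)
        omega
      have hσ : σ i < σ u := by
        by_contra hle
        exact absurd (hn (σ u) (σ i) (le_of_not_gt hle)) (not_le.2 huC)
      have := hadm i u hui hσ
      omega
  · intro hpt i j hji hσ
    have h1 := hn j i hji.le
    have h2 := hn (σ i) (σ j) hσ.le
    rw [hpt i, hpt j] at h2
    omega

end Helpers

open scoped Classical in
theorem statement3 {k : ℕ} (hk : 2 ≤ k) (A : Type*) [CommRing A]
    [MulSemiringAction (Equiv.Perm (Fin k)) A]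
    (Δ : Fin k → Fin k → A)
    (hΔsym : ∀ i j : Fin k, i ≠ j → Δ i j = Δ j i)
    (hΔact : ∀ (σ : Equiv.Perm (Fin k)) (i j : Fin k), i ≠ j →
      σ • Δ i j = Δ (σ i) (σ j))
    (hann : ∀ i j : Fin k, i ≠ j → ∀ x : A, Δ i j * (x - Equiv.swap i j • x) = 0)
    (n : Fin k → ℤ) (hn : ∀ i j : Fin k, i ≤ j → n j ≤ n i)
    (P : AddMonoidAlgebra A (Fin k →₀ ℤ))
    (hP : rhoCurve Δ n =
      (∏ p ∈ Finset.univ.filter (fun p : Fin k × Fin k => p.1 < p.2),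
        (zmon p.2 1 - zmon p.1 1)) * P) :
    (∀ m : Fin k →₀ ℤ, P.coeff m ≠ 0 → lexLE (⇑m) n) ∧
    P.coeff (Finsupp.equivFunOnFinite.symm n) =
      ∑ σ ∈ Finset.univ.filter (fun σ : Equiv.Perm (Fin k) => Admissible n σ),
        ∏ p ∈ Finset.univ.filter
            (fun p : Fin k × Fin k => p.1 < p.2 ∧ σ p.1 < σ p.2),
          (1 - Δ p.1 p.2) := by
  classical
  set pairs : Finset (Fin k × Fin k) :=
    Finset.univ.filter (fun p : Fin k × Fin k => p.1 < p.2) with hpairs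
  set δ : Fin k →₀ ℤ := ∑ p ∈ pairs, Finsupp.single p.1 1 with hδ
  set N : Fin k →₀ ℤ := Finsupp.equivFunOnFinite.symm n with hN
  set K : ℕ := pairs.card with hK
  have hNapp : ∀ j, N j = n j := fun j => rfl
  -- the collection of exponent vectors `Nf σ`
  set Nf : Equiv.Perm (Fin k) → (Fin k →₀ ℤ) :=
    fun σ => ∑ i, Finsupp.single i (n (σ i)) with hNf
  have hNfapp : ∀ (σ : Equiv.Perm (Fin k)) (j : Fin k), Nf σ j = n (σ j) := by
    intro σ j
    rw [hNf]
    simp [Finsupp.finset_sum_apply, Finsupp.single_apply]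
  -- the leading monomial
  have hMσ : ∀ σ : Equiv.Perm (Fin k),
      (∏ i, zmon i (n (σ i))) = AddMonoidAlgebra.single (Nf σ) (1 : A) := by
    intro σ
    unfold zmon
    rw [AddMonoidAlgebra.prod_single, Finset.prod_const_one]
  have hsingle_mem : ∀ (x : Fin k →₀ ℤ) (c : A),
      ∀ m ∈ (AddMonoidAlgebra.single x c).coeff.support, toLex m ≤ toLex x := by
    intro x c m hm
    have := Finsupp.support_single_subset hm
    simp only [Finset.mem_singleton] at this
    subst this
    exact le_refl _
  -- bounds for the c-factors
  have hcmem : ∀ (σ : Equiv.Perm (Fin k)), ∀ p ∈ pairs,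
      ∀ m ∈ (if σ p.1 < σ p.2 then
          (zmon p.2 1 - zmon p.1 1) + cst (Δ p.1 p.2) * zmon p.1 1
        else
          (zmon p.2 1 - zmon p.1 1) - cst (Δ p.1 p.2) * zmon p.2 1).coeff.support,
        toLex m ≤ toLex (Finsupp.single p.1 1) := by
    intro σ p hp
    have hp12 : p.1 < p.2 := by
      rw [hpairs] at hp; exact (Finset.mem_filter.1 hp).2
    rw [cfac_eq]
    exact two_single_mem hp12 _ _
  have hceval : ∀ (σ : Equiv.Perm (Fin k)), ∀ p ∈ pairs,
      ((if σ p.1 < σ p.2 then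
          (zmon p.2 1 - zmon p.1 1) + cst (Δ p.1 p.2) * zmon p.1 1
        else
          (zmon p.2 1 - zmon p.1 1) - cst (Δ p.1 p.2) * zmon p.2 1) :
        AddMonoidAlgebra A (Fin k →₀ ℤ)).coeff
        (Finsupp.single p.1 1)
        = (if σ p.1 < σ p.2 then Δ p.1 p.2 - 1 else -1) := by
    intro σ p hp
    have hp12 : p.1 < p.2 := by
      rw [hpairs] at hp; exact (Finset.mem_filter.1 hp).2
    rw [cfac_eq]
    exact two_single_eval hp12 _ _
  -- comparison of Nf σ with N
  have hNfN : ∀ σ : Equiv.Perm (Fin k), (¬ ∀ i, n (σ i) = n i) → toLex (Nf σ) < toLex N := by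
    intro σ hpt
    obtain ⟨i, h1, h2⟩ := perm_lt hn σ hpt
    rw [Finsupp.Lex.lt_iff]
    refine ⟨i, ?_, ?_⟩
    · intro j hj
      show Nf σ j = N j
      rw [hNfapp, hNapp, h1 j hj]
    · show Nf σ i < N i
      rw [hNfapp, hNapp]
      exact h2
  have hNfeq : ∀ σ : Equiv.Perm (Fin k), (∀ i, n (σ i) = n i) → Nf σ = N := by
    intro σ hpt
    ext j
    rw [hNfapp, hNapp, hpt j]
  have hNf_le : ∀ σ : Equiv.Perm (Fin k), toLex (Nf σ) ≤ toLex N := by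
    intro σ
    by_cases hpt : ∀ i, n (σ i) = n i
    · exact le_of_eq (congrArg toLex (hNfeq σ hpt))
    · exact (hNfN σ hpt).le
  -- support bound for rhoCurve
  have hrho_mem : ∀ m ∈ (rhoCurve Δ n).coeff.support, toLex m ≤ toLex (N + δ) := by
    intro m hm
    unfold rhoCurve at hm
    rw [AddMonoidAlgebra.coeff_sum] at hm
    obtain ⟨σ, -, hmσ⟩ := Finsupp.mem_support_finsetSum m hm
    have hb1 : ∀ m' ∈ (∏ i, zmon i (n (σ i)) : AddMonoidAlgebra A (Fin k →₀ ℤ)).coeff.support,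
        toLex m' ≤ toLex (Nf σ) := by
      rw [hMσ σ]; exact hsingle_mem _ _
    have := lexmem_mul hb1 (lexmem_prod (hcmem σ)) m hmσ
    calc toLex m ≤ toLex (Nf σ + δ) := this
      _ = toLex (Nf σ) + toLex δ := by rw [toLex_add]
      _ ≤ toLex N + toLex δ := add_le_add (hNf_le σ) le_rfl
      _ = toLex (N + δ) := by rw [toLex_add]
  -- evaluation of rhoCurve at N + δ
  have hrho_eval : (rhoCurve Δ n).coeff (N + δ)
      = ∑ σ ∈ Finset.univ.filter (fun σ : Equiv.Perm (Fin k) => Admissible n σ),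
          ∏ p ∈ pairs, (if σ p.1 < σ p.2 then Δ p.1 p.2 - 1 else (-1 : A)) := by
    have hterm : ∀ σ : Equiv.Perm (Fin k),
        (((∏ i, zmon i (n (σ i))) *
          ∏ p ∈ pairs,
            (if σ p.1 < σ p.2 then
                (zmon p.2 1 - zmon p.1 1) + cst (Δ p.1 p.2) * zmon p.1 1
              else
                (zmon p.2 1 - zmon p.1 1) - cst (Δ p.1 p.2) * zmon p.2 1)) :
          AddMonoidAlgebra A (Fin k →₀ ℤ)).coeff (N + δ)
        = if Admissible n σ then
            ∏ p ∈ pairs, (if σ p.1 < σ p.2 then Δ p.1 p.2 - 1 else (-1 : A))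
          else 0 := by
      intro σ
      by_cases hadm : Admissible n σ
      · rw [if_pos hadm]
        have hpt := (admissible_iff_pointwise hn σ).1 hadm
        rw [hMσ σ, hNfeq σ hpt]
        have hb1 : ∀ m' ∈ (AddMonoidAlgebra.single N (1:A)).coeff.support, toLex m' ≤ toLex N :=
          hsingle_mem _ _
        rw [lexeval_mul hb1 (lexmem_prod (hcmem σ)), AddMonoidAlgebra.coeff_single, Finsupp.single_eq_same, one_mul,
          lexeval_prod (hcmem σ)]
        exact Finset.prod_congr rfl (fun p hp => hceval σ p hp)
      · rw [if_neg hadm]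
        apply Finsupp.notMem_support_iff.1
        intro hmem
        have hb1 : ∀ m' ∈ (∏ i, zmon i (n (σ i)) : AddMonoidAlgebra A (Fin k →₀ ℤ)).coeff.support,
            toLex m' ≤ toLex (Nf σ) := by
          rw [hMσ σ]; exact hsingle_mem _ _
        have hle := lexmem_mul hb1 (lexmem_prod (hcmem σ)) _ hmem
        have hpt : ¬ ∀ i, n (σ i) = n i := fun h => hadm ((admissible_iff_pointwise hn σ).2 h)
        have hlt : toLex (Nf σ + δ) < toLex (N + δ) := by
          rw [toLex_add, toLex_add]
          exact add_lt_add_of_lt_of_le (hNfN σ hpt) le_rfl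
        exact absurd (hle.trans_lt hlt) (lt_irrefl _)
    unfold rhoCurve
    rw [AddMonoidAlgebra.coeff_sum, Finsupp.finset_sum_apply]
    rw [Finset.sum_congr rfl (fun σ _ => hterm σ)]
    rw [← Finset.sum_filter]
  -- the Vandermonde
  have hVmem : ∀ m ∈ (∏ p ∈ pairs,
      (zmon p.2 1 - zmon p.1 1 : AddMonoidAlgebra A (Fin k →₀ ℤ))).coeff.support,
      toLex m ≤ toLex δ := by
    apply lexmem_prod
    intro p hp
    have hp12 : p.1 < p.2 := by
      rw [hpairs] at hp; exact (Finset.mem_filter.1 hp).2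
    rw [vfac_eq]
    exact two_single_mem hp12 _ _
  have hVeval : (∏ p ∈ pairs,
      (zmon p.2 1 - zmon p.1 1 : AddMonoidAlgebra A (Fin k →₀ ℤ))).coeff δ = (-1 : A) ^ K := by
    rw [lexeval_prod]
    · rw [Finset.prod_congr rfl (g := fun _ => (-1 : A)) ?_, Finset.prod_const, hK]
      intro p hp
      have hp12 : p.1 < p.2 := by
        rw [hpairs] at hp; exact (Finset.mem_filter.1 hp).2
      rw [vfac_eq]
      exact two_single_eval hp12 _ _
    · intro p hp
      have hp12 : p.1 < p.2 := by
        rw [hpairs] at hp; exact (Finset.mem_filter.1 hp).2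
      rw [vfac_eq]
      exact two_single_mem hp12 _ _
  have hunit : IsUnit ((-1 : A) ^ K) := (isUnit_one.neg).pow K
  -- part (a): support bound for P
  have hPbound : ∀ m ∈ P.coeff.support, toLex m ≤ toLex N := by
    by_contra hcon
    push_neg at hcon
    obtain ⟨m0, hm0, hm0'⟩ := hcon
    obtain ⟨m', hm'mem, hmax⟩ := Finset.exists_max_image P.coeff.support toLex ⟨m0, hm0⟩
    have hm'N : toLex N < toLex m' := lt_of_lt_of_le hm0' (hmax m0 hm0)
    have hval : (rhoCurve Δ n).coeff (δ + m') = (-1 : A) ^ K * P.coeff m' := by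
      rw [hP, lexeval_mul hVmem (fun m hm => hmax m hm), hVeval]
    have hzero : (rhoCurve Δ n).coeff (δ + m') = 0 := by
      apply Finsupp.notMem_support_iff.1
      intro hmem
      have hle := hrho_mem _ hmem
      have hgt : toLex (N + δ) < toLex (δ + m') := by
        rw [add_comm δ m', toLex_add, toLex_add]
        exact add_lt_add_of_lt_of_le hm'N le_rfl
      exact absurd (hle.trans_lt hgt) (lt_irrefl _)
    rw [hval] at hzero
    exact Finsupp.mem_support_iff.1 hm'mem ((hunit.mul_right_eq_zero).1 hzero)
  constructor
  · -- part (a)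
    intro m hm
    have hle := hPbound m (Finsupp.mem_support_iff.2 hm)
    rcases hle.lt_or_eq with hlt | heq
    · obtain ⟨i, h1, h2⟩ := Finsupp.Lex.lt_iff.1 hlt
      exact Or.inr ⟨i, fun j hj => h1 j hj, h2⟩
    · left
      have : m = N := toLex.injective heq
      rw [this]
      funext j
      exact hNapp j
  · -- part (b)
    have hb1 : (rhoCurve Δ n).coeff (δ + N) = (-1 : A) ^ K * P.coeff N := by
      rw [hP, lexeval_mul hVmem hPbound, hVeval]
    have hb2 : (-1 : A) ^ K * P.coeff N
        = ∑ σ ∈ Finset.univ.filter (fun σ : Equiv.Perm (Fin k) => Admissible n σ),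
            ∏ p ∈ pairs, (if σ p.1 < σ p.2 then Δ p.1 p.2 - 1 else (-1 : A)) := by
      rw [← hb1, add_comm δ N, hrho_eval]
    have hsq : (-1 : A) ^ K * (-1 : A) ^ K = 1 := by
      rw [← pow_add]
      exact Even.neg_one_pow ⟨K, rfl⟩
    have hPN : P.coeff N = (-1 : A) ^ K
        * ∑ σ ∈ Finset.univ.filter (fun σ : Equiv.Perm (Fin k) => Admissible n σ),
            ∏ p ∈ pairs, (if σ p.1 < σ p.2 then Δ p.1 p.2 - 1 else (-1 : A)) := by
      rw [← hb2, ← mul_assoc, hsq, one_mul]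
    rw [hPN, Finset.mul_sum]
    apply Finset.sum_congr rfl
    intro σ hσ
    have hstep : (-1 : A) ^ K * ∏ p ∈ pairs, (if σ p.1 < σ p.2 then Δ p.1 p.2 - 1 else (-1 : A))
        = ∏ p ∈ pairs, (if σ p.1 < σ p.2 then 1 - Δ p.1 p.2 else 1) := by
      rw [hK, ← Finset.prod_const (b := (-1 : A)), ← Finset.prod_mul_distrib]
      apply Finset.prod_congr rfl
      intro p hp
      by_cases hc : σ p.1 < σ p.2
      · rw [if_pos hc, if_pos hc]
        ring
      · rw [if_neg hc, if_neg hc]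
        ring
    rw [hstep, ← Finset.prod_filter, hpairs, Finset.filter_filter]
end
end

section
/- Let K be the field ℚ(q) of rational functions in one variable q over ℚ, let k ≥ 1 and let n_1, ..., n_k be integers. Then the symmetric rational function Σ_{σ ∈ S(k)} z_{σ(1)}^{n_1} ⋯ z_{σ(k)}^{n_k} · Π_{1 ≤ i < j ≤ k} (z_{σ(j)} − q·z_{σ(i)}) / (z_{σ(j)} − z_{σ(i)}), a priori an element of K(z_1,...,z_k) with simple poles along z_i = z_j, is in fact a Laurent polynomial in z_1,...,z_k with coefficients in ℤ[q]. (This is the specialization of the small universal shuffle algebra associated to curves to C = 𝔸^1, where Δ_{ij} ↦ 1 − q; for n_1 ≥ ... ≥ n_k these Laurent polynomials are, up to a constant, the Hall–Littlewood polynomials.) -/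
/-!
STATEMENT 5: The Hall–Littlewood symmetrization
`Σ_{σ ∈ S(k)} z_{σ(1)}^{n_1} ⋯ z_{σ(k)}^{n_k} Π_{i<j} (z_{σ(j)} − q z_{σ(i)})/(z_{σ(j)} − z_{σ(i)})`
is a Laurent polynomial in `z_1, ..., z_k` with coefficients in `ℤ[q]`
(the 𝔸¹-specialization of the small universal shuffle algebra for curves).
-/

noncomputable section

open Finset

/-- The field ℚ(q)(z₁,...,z_k). -/
abbrev HLField (k : ℕ) : Type := FractionRing (MvPolynomial (Fin k) (RatFunc ℚ))

/-- The variable `q`. -/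
def qVar (k : ℕ) : HLField k :=
  algebraMap (MvPolynomial (Fin k) (RatFunc ℚ)) (HLField k) (MvPolynomial.C RatFunc.X)

/-- The variables `z_i`. -/
def zVar {k : ℕ} (i : Fin k) : HLField k :=
  algebraMap (MvPolynomial (Fin k) (RatFunc ℚ)) (HLField k) (MvPolynomial.X i)

open MvPolynomial

variable {R : Type*} [CommRing R]

/-- substitution sending `X a ↦ X b`, identity on other variables -/
def psiSub {k : ℕ} [DecidableEq (Fin k)] (a b : Fin k) :
    MvPolynomial (Fin k) R →ₐ[R] MvPolynomial (Fin k) R :=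
  aeval (fun c => if c = a then X b else X c)

lemma psi_zero_dvd {m : ℕ} (b : Fin (m+1)) (hb : b ≠ 0)
    (P : MvPolynomial (Fin (m+1)) R) (h : psiSub 0 b P = 0) :
    (X b - X 0 : MvPolynomial (Fin (m+1)) R) ∣ P := by
  classical
  set j0 : Fin m := b.pred hb with hj0
  have hbs : b = j0.succ := (Fin.succ_pred b hb).symm
  -- the collapsing homomorphism
  set r : MvPolynomial (Fin (m+1)) R →ₐ[R] MvPolynomial (Fin m) R :=
    aeval (fun i => Fin.cases (X j0) X i) with hr
  have hrpsi : ∀ Q, r (psiSub 0 b Q) = r Q := by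
    intro Q
    have : (r.comp (psiSub 0 b) : MvPolynomial (Fin (m+1)) R →ₐ[R] _) = r := by
      apply MvPolynomial.algHom_ext
      intro i
      refine Fin.cases ?_ (fun t => ?_) i <;>
        simp [psiSub, hr, hbs, Fin.succ_ne_zero]
    exact AlgHom.congr_fun this Q
  have hrP : r P = 0 := by
    have := hrpsi P
    rw [h, map_zero] at this
    exact this.symm
  -- relate r to eval of finSuccEquiv
  have hre : ∀ Q : MvPolynomial (Fin (m+1)) R,
      Polynomial.eval (X j0 : MvPolynomial (Fin m) R) (finSuccEquiv R m Q) = r Q := by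
    intro Q
    have : (Polynomial.evalRingHom (X j0 : MvPolynomial (Fin m) R)).comp
        ((finSuccEquiv R m : MvPolynomial (Fin (m+1)) R ≃ₐ[R] _) :
          MvPolynomial (Fin (m+1)) R →+* Polynomial (MvPolynomial (Fin m) R))
        = (r : MvPolynomial (Fin (m+1)) R →+* MvPolynomial (Fin m) R) := by
      apply MvPolynomial.ringHom_ext
      · intro c
        simp [finSuccEquiv_apply, hr]
      · intro i
        refine Fin.cases ?_ (fun t => ?_) i <;>
          simp [finSuccEquiv_apply, hr]
    exact RingHom.congr_fun this Q
  have hroot : (Polynomial.X - Polynomial.C (X j0 : MvPolynomial (Fin m) R)) ∣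
      finSuccEquiv R m P := by
    rw [Polynomial.dvd_iff_isRoot, Polynomial.IsRoot, hre, hrP]
  have hdvd := map_dvd (finSuccEquiv R m).symm hroot
  rw [map_sub, AlgEquiv.symm_apply_apply] at hdvd
  have hx : (finSuccEquiv R m).symm Polynomial.X = X 0 := by
    rw [← finSuccEquiv_X_zero (R := R) (n := m), AlgEquiv.symm_apply_apply]
  have hc : (finSuccEquiv R m).symm (Polynomial.C (X j0)) = X b := by
    rw [hbs, ← finSuccEquiv_X_succ (R := R) (n := m) (j := j0), AlgEquiv.symm_apply_apply]
  rw [hx, hc] at hdvd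
  have : (X b - X 0 : MvPolynomial (Fin (m+1)) R) = -(X 0 - X b) := by ring
  rw [this]
  exact (neg_dvd).mpr hdvd

lemma psi_dvd {m : ℕ} (a b : Fin (m+1)) (hab : a ≠ b)
    (P : MvPolynomial (Fin (m+1)) R) (h : psiSub a b P = 0) :
    (X b - X a : MvPolynomial (Fin (m+1)) R) ∣ P := by
  classical
  set ρ : Equiv.Perm (Fin (m+1)) := Equiv.swap a 0 with hρ
  have hρb : ρ b ≠ 0 := by
    simp only [hρ]
    intro hcon
    rw [Equiv.swap_apply_eq_iff, Equiv.swap_apply_right] at hcon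
    exact hab hcon.symm
  have key : psiSub 0 (ρ b) (rename ρ P) = 0 := by
    have hcomp : ((psiSub 0 (ρ b)).comp (rename (R := R) ρ) :
        MvPolynomial (Fin (m+1)) R →ₐ[R] _)
        = (rename (R := R) ρ).comp (psiSub a b) := by
      apply MvPolynomial.algHom_ext
      intro i
      by_cases hi : i = a
      · subst hi
        simp [psiSub, hρ, Equiv.swap_apply_left]
      · have : ρ i ≠ 0 := by
          simp only [hρ]
          intro hcon
          rw [Equiv.swap_apply_eq_iff, Equiv.swap_apply_right] at hcon
          exact hi hcon
        simp [psiSub, hi, this]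
    calc psiSub 0 (ρ b) (rename ρ P) = ((psiSub 0 (ρ b)).comp (rename (R := R) ρ)) P := rfl
    _ = (rename (R := R) ρ) (psiSub a b P) := by rw [hcomp]; rfl
    _ = 0 := by rw [h, map_zero]
  have hdvd := psi_zero_dvd (ρ b) hρb (rename ρ P) key
  have hdvd2 := map_dvd (rename (R := R) ρ) hdvd
  rw [map_sub, rename_X, rename_X] at hdvd2
  have h1 : ρ (ρ b) = b := by simp [hρ]
  have h2 : ρ (0 : Fin (m+1)) = a := by simp [hρ, Equiv.swap_apply_right]
  have h3 : (rename (R := R) ρ) (rename ρ P) = P := by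
    rw [rename_rename]
    have : (⇑ρ ∘ ⇑ρ) = id := by
      funext t; simp [hρ, Function.comp]
    rw [this, rename_id, AlgHom.id_apply]
  rwa [h1, h2, h3] at hdvd2

lemma prime_X_sub_X {m : ℕ} [IsDomain R] (a b : Fin (m+1)) (hab : a ≠ b) :
    Prime (X b - X a : MvPolynomial (Fin (m+1)) R) := by
  classical
  -- first: pair (0, b') with b' ≠ 0
  have base : ∀ b' : Fin (m+1), b' ≠ 0 →
      Prime (X b' - X 0 : MvPolynomial (Fin (m+1)) R) := by
    intro b' hb'
    set j0 : Fin m := b'.pred hb' with hj0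
    have hbs : b' = j0.succ := (Fin.succ_pred b' hb').symm
    have hp : Prime (Polynomial.X - Polynomial.C (X j0 : MvPolynomial (Fin m) R)) :=
      Polynomial.prime_X_sub_C _
    have hiff := MulEquiv.prime_iff (finSuccEquiv R m).symm.toRingEquiv.toMulEquiv
      (p := Polynomial.X - Polynomial.C (X j0 : MvPolynomial (Fin m) R))
    have hp2 : Prime ((finSuccEquiv R m).symm
        (Polynomial.X - Polynomial.C (X j0 : MvPolynomial (Fin m) R))) := hiff.mpr hp
    have hx : (finSuccEquiv R m).symm Polynomial.X = (X 0 : MvPolynomial (Fin (m+1)) R) := by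
      rw [← finSuccEquiv_X_zero (R := R) (n := m), AlgEquiv.symm_apply_apply]
    have hc : (finSuccEquiv R m).symm (Polynomial.C (X j0)) = X b' := by
      rw [hbs, ← finSuccEquiv_X_succ (R := R) (n := m) (j := j0), AlgEquiv.symm_apply_apply]
    rw [map_sub, hx, hc] at hp2
    have : (X b' - X 0 : MvPolynomial (Fin (m+1)) R) = -(X 0 - X b') := by ring
    rw [this]
    exact hp2.neg
  set ρ : Equiv.Perm (Fin (m+1)) := Equiv.swap a 0 with hρ
  have hρb : ρ b ≠ 0 := by
    simp only [hρ]
    intro hcon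
    rw [Equiv.swap_apply_eq_iff, Equiv.swap_apply_right] at hcon
    exact hab hcon.symm
  have hbase := base (ρ b) hρb
  have hiff := MulEquiv.prime_iff (renameEquiv R ρ).toRingEquiv.toMulEquiv
    (p := (X (ρ b) - X 0 : MvPolynomial (Fin (m+1)) R))
  have hp2 := hiff.mpr hbase
  have h1 : ρ (ρ b) = b := by simp [hρ]
  have h2 : ρ (0 : Fin (m+1)) = a := by simp [hρ, Equiv.swap_apply_right]
  simpa [renameEquiv_apply, map_sub, rename_X, h1, h2] using hp2

lemma not_dvd_pairs {m : ℕ} [IsDomain R] {a b c d : Fin (m+1)}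
    (hab : a < b) (hcd : c < d) (hne : (a, b) ≠ (c, d)) :
    ¬ ((X b - X a : MvPolynomial (Fin (m+1)) R) ∣ (X d - X c)) := by
  classical
  rintro ⟨u, hu⟩
  have h0 : psiSub a b (X d - X c : MvPolynomial (Fin (m+1)) R) = 0 := by
    rw [hu, map_mul]
    have : psiSub a b (X b - X a : MvPolynomial (Fin (m+1)) R) = 0 := by
      simp [psiSub, hab.ne']
    rw [this, zero_mul]
  simp only [psiSub, map_sub, aeval_X] at h0
  have h0' : (if d = a then (X b : MvPolynomial (Fin (m+1)) R) else X d)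
      = (if c = a then X b else X c) := by
    rwa [sub_eq_zero] at h0
  by_cases hda : d = a <;> by_cases hca : c = a
  · exact absurd (hda.trans hca.symm) hcd.ne'
  · rw [if_pos hda, if_neg hca] at h0'
    have := X_injective h0'
    subst hda
    omega
  · rw [if_neg hda, if_pos hca] at h0'
    have := X_injective h0'
    subst hca
    exact hne (by rw [this])
  · rw [if_neg hda, if_neg hca] at h0'
    have := X_injective h0'
    omega

lemma prod_pairs_dvd {m : ℕ} [IsDomain R] (N : MvPolynomial (Fin (m+1)) R)
    (h : ∀ p ∈ univ.filter (fun p : Fin (m+1) × Fin (m+1) => p.1 < p.2),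
      (X p.2 - X p.1 : MvPolynomial (Fin (m+1)) R) ∣ N) :
    (∏ p ∈ univ.filter (fun p : Fin (m+1) × Fin (m+1) => p.1 < p.2),
      (X p.2 - X p.1 : MvPolynomial (Fin (m+1)) R)) ∣ N := by
  classical
  suffices H : ∀ S ⊆ univ.filter (fun p : Fin (m+1) × Fin (m+1) => p.1 < p.2),
      (∏ p ∈ S, (X p.2 - X p.1 : MvPolynomial (Fin (m+1)) R)) ∣ N from H _ le_rfl
  intro S
  induction S using Finset.induction with
  | empty => simp
  | @insert p S hpS ih =>
    intro hsub
    have hsub' : S ⊆ _ := (Finset.subset_insert p S).trans hsub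
    obtain ⟨M, hM⟩ := ih hsub'
    have hpmem := hsub (Finset.mem_insert_self p S)
    have hpf : p.1 < p.2 := by simpa using hpmem
    have hprime : Prime (X p.2 - X p.1 : MvPolynomial (Fin (m+1)) R) :=
      prime_X_sub_X _ _ hpf.ne
    have hpN : (X p.2 - X p.1 : MvPolynomial (Fin (m+1)) R) ∣ N := h p hpmem
    have hnd : ¬ (X p.2 - X p.1 : MvPolynomial (Fin (m+1)) R) ∣
        ∏ q ∈ S, (X q.2 - X q.1 : MvPolynomial (Fin (m+1)) R) := by
      intro hcon
      obtain ⟨q, hqS, hq⟩ := (hprime.dvd_finset_prod_iff _).mp hcon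
      have hqf : q.1 < q.2 := by simpa using hsub' hqS
      have hpq : p ≠ q := fun hh => hpS (hh ▸ hqS)
      exact not_dvd_pairs hpf hqf (by simpa [Prod.ext_iff] using hpq) hq
    have hpM : (X p.2 - X p.1 : MvPolynomial (Fin (m+1)) R) ∣ M := by
      rw [hM] at hpN
      rcases hprime.dvd_mul.mp hpN with h1 | h2
      · exact absurd h1 hnd
      · exact h2
    obtain ⟨M', hM'⟩ := hpM
    refine ⟨M', ?_⟩
    rw [Finset.prod_insert hpS, hM, hM']
    ring

lemma prod_pairs_eq {k : ℕ} {β : Type*} [CommMonoid β] (f : Fin k → Fin k → β) :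
    ∏ p ∈ univ.filter (fun p : Fin k × Fin k => p.1 < p.2), f p.1 p.2
      = ∏ i : Fin k, ∏ j ∈ Ioi i, f i j := by
  rw [Finset.prod_sigma']
  refine Finset.prod_bij' (fun p _ => (⟨p.1, p.2⟩ : (_ : Fin k) × Fin k))
    (fun x _ => (x.1, x.2)) ?_ ?_ ?_ ?_ ?_ <;>
    simp +contextual [Finset.mem_sigma, Finset.mem_Ioi]

lemma rename_vandermonde {k : ℕ} (σ : Equiv.Perm (Fin k)) :
    rename (R := R) σ (∏ i : Fin k, ∏ j ∈ Ioi i, (X j - X i : MvPolynomial (Fin k) R))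
      = ((Equiv.Perm.sign σ : ℤ) : MvPolynomial (Fin k) R)
        * ∏ i : Fin k, ∏ j ∈ Ioi i, (X j - X i : MvPolynomial (Fin k) R) := by
  rw [← Matrix.det_vandermonde]
  rw [show (rename (R := R) σ) ((Matrix.vandermonde (X : Fin k → MvPolynomial (Fin k) R)).det)
      = ((Matrix.vandermonde (X : Fin k → MvPolynomial (Fin k) R)).map
          (rename (R := R) σ)).det from RingHom.map_det _ _]
  have h1 : (Matrix.vandermonde (X : Fin k → MvPolynomial (Fin k) R)).map
      (rename (R := R) σ)
      = (Matrix.vandermonde (X : Fin k → MvPolynomial (Fin k) R)).submatrix σ id := by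
    ext i j
    simp [Matrix.vandermonde_apply, Matrix.map_apply, Matrix.submatrix_apply]
  rw [h1, Matrix.det_permute]

lemma eq_zero_of_self_eq_neg' {k : ℕ} {x : MvPolynomial (Fin k) (Polynomial ℤ)}
    (h : x = -x) : x = 0 := by
  have h2 : (MvPolynomial.C (2 : Polynomial ℤ) : MvPolynomial (Fin k) (Polynomial ℤ)) * x = 0 := by
    have : (MvPolynomial.C (2 : Polynomial ℤ) : MvPolynomial (Fin k) (Polynomial ℤ)) = 2 :=
      map_ofNat _ 2
    rw [this, two_mul]
    nth_rewrite 2 [h]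
    ring
  rcases mul_eq_zero.mp h2 with hc | hx
  · exfalso
    rw [MvPolynomial.C_eq_zero] at hc
    have : (2 : Polynomial ℤ) = Polynomial.C 2 := by simp
    rw [this, Polynomial.C_eq_zero] at hc
    norm_num at hc
  · exact hx

set_option maxHeartbeats 2000000 in
set_option synthInstance.maxHeartbeats 400000 in
theorem statement5 (k : ℕ) (hk : 1 ≤ k) (n : Fin k → ℤ) :
    ∃ (s : Finset (Fin k →₀ ℤ)) (c : (Fin k →₀ ℤ) → Polynomial ℤ),
      ∑ σ : Equiv.Perm (Fin k),
        (∏ i : Fin k, zVar (σ i) ^ n i) *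
          ∏ p ∈ Finset.univ.filter (fun p : Fin k × Fin k => p.1 < p.2),
            (zVar (σ p.2) - qVar k * zVar (σ p.1)) / (zVar (σ p.2) - zVar (σ p.1))
      = ∑ m ∈ s, Polynomial.aeval (qVar k) (c m) * ∏ i : Fin k, zVar i ^ (m i) := by
  classical
  obtain ⟨m, rfl⟩ : ∃ m, k = m + 1 := ⟨k - 1, (Nat.succ_pred_eq_of_pos hk).symm⟩
  set q0 : MvPolynomial (Fin (m+1)) (Polynomial ℤ) := C Polynomial.X with hq0
  set pairs : Finset (Fin (m+1) × Fin (m+1)) := univ.filter (fun p : Fin (m+1) × Fin (m+1) => p.1 < p.2)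
    with hpairs
  -- exponent shift
  set M : ℕ := Finset.univ.sup (fun i => (-n i).toNat) with hM
  have hshift : ∀ i, ((n i + M).toNat : ℤ) = n i + M := by
    intro i
    rw [Int.toNat_of_nonneg]
    have h1 : (-n i).toNat ≤ M := by
      rw [hM]; exact Finset.le_sup (f := fun i => (-n i).toNat) (Finset.mem_univ i)
    have h2 : (-n i : ℤ) ≤ (-n i).toNat := Int.self_le_toNat _
    omega
  set n' : Fin (m+1) → ℕ := fun i => (n i + M).toNat with hn'
  -- main polynomial data
  set P1 : MvPolynomial (Fin (m+1)) (Polynomial ℤ) := ∏ i : Fin (m+1), X i ^ n' i with hP1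
  set P2 : MvPolynomial (Fin (m+1)) (Polynomial ℤ) := ∏ p ∈ pairs, (X p.2 - q0 * X p.1) with hP2
  set F : MvPolynomial (Fin (m+1)) (Polynomial ℤ) := P1 * P2 with hF
  set V : MvPolynomial (Fin (m+1)) (Polynomial ℤ) := ∏ p ∈ pairs, (X p.2 - X p.1) with hV
  set N : MvPolynomial (Fin (m+1)) (Polynomial ℤ) := ∑ σ : Equiv.Perm (Fin (m+1)),
    ((Equiv.Perm.sign σ : ℤ) : MvPolynomial (Fin (m+1)) (Polynomial ℤ)) * rename σ F with hN
  -- alternation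
  have halt : ∀ a b : Fin (m+1), a ≠ b → rename (Equiv.swap a b) N = -N := by
    intro a b hab
    set τ := Equiv.swap a b with hτ
    have hterm : ∀ σ : Equiv.Perm (Fin (m+1)),
        rename (R := Polynomial ℤ) τ (((Equiv.Perm.sign σ : ℤ) : MvPolynomial (Fin (m+1)) (Polynomial ℤ)) * rename σ F)
        = -((((Equiv.Perm.sign (τ * σ) : ℤ) : MvPolynomial (Fin (m+1)) (Polynomial ℤ))) * rename (τ * σ) F) := by
      intro σ
      have hs : ((Equiv.Perm.sign σ : ℤ) : MvPolynomial (Fin (m+1)) (Polynomial ℤ))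
          = -(((Equiv.Perm.sign (τ * σ) : ℤ) : MvPolynomial (Fin (m+1)) (Polynomial ℤ))) := by
        rw [Equiv.Perm.sign_mul, Equiv.Perm.sign_swap hab]
        push_cast
        ring
      rw [map_mul, map_intCast, rename_rename, hs]
      rw [show ⇑τ ∘ ⇑σ = ⇑(τ * σ) from rfl]
      ring
    rw [hN, map_sum]
    rw [Finset.sum_congr rfl (fun σ _ => hterm σ), Finset.sum_neg_distrib]
    refine congrArg Neg.neg ?_
    exact Equiv.sum_comp (Equiv.mulLeft τ)
      (fun ρ => ((Equiv.Perm.sign ρ : ℤ) : MvPolynomial (Fin (m+1)) (Polynomial ℤ)) * rename ρ F)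
  have hpsi : ∀ a b : Fin (m+1), a ≠ b → psiSub a b N = 0 := by
    intro a b hab
    have hcomp : ((psiSub a b).comp (rename (R := Polynomial ℤ) (Equiv.swap a b)) :
        MvPolynomial (Fin (m+1)) (Polynomial ℤ) →ₐ[Polynomial ℤ] MvPolynomial (Fin (m+1)) (Polynomial ℤ)) = psiSub a b := by
      apply MvPolynomial.algHom_ext
      intro i
      by_cases hia : i = a
      · subst hia; simp [psiSub, Equiv.swap_apply_left, hab.symm]
      · by_cases hib : i = b
        · subst hib; simp [psiSub, Equiv.swap_apply_right, hab.symm]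
        · simp [psiSub, Equiv.swap_apply_of_ne_of_ne hia hib]
    have h1 : psiSub a b N = psiSub a b (rename (Equiv.swap a b) N) :=
      (AlgHom.congr_fun hcomp N).symm
    rw [halt a b hab, map_neg] at h1
    exact eq_zero_of_self_eq_neg' h1
  -- divisibility by the Vandermonde
  have hdvd : V ∣ N := by
    apply prod_pairs_dvd
    intro p hp
    have hp' : p.1 < p.2 := by simpa [hpairs] using hp
    exact psi_dvd p.1 p.2 hp'.ne (P := N) (hpsi p.1 p.2 hp'.ne)
  obtain ⟨Q, hQ⟩ := hdvd
  -- the map to the field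
  set f : Polynomial ℤ →+* RatFunc ℚ :=
    (algebraMap (Polynomial ℚ) (RatFunc ℚ)).comp
      (Polynomial.mapRingHom (Int.castRingHom ℚ)) with hf
  set ι : MvPolynomial (Fin (m+1)) (Polynomial ℤ) →+* HLField (m+1) :=
    (algebraMap (MvPolynomial (Fin (m+1)) (RatFunc ℚ)) (HLField (m+1))).comp
      (MvPolynomial.map f) with hι
  have hιX : ∀ i, ι (X i) = zVar i := by
    intro i
    rw [hι, RingHom.comp_apply, MvPolynomial.map_X]
    rfl
  have hιq : ι q0 = qVar (m+1) := by
    rw [hι, hq0, RingHom.comp_apply, MvPolynomial.map_C]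
    have : f Polynomial.X = RatFunc.X := by
      rw [hf, RingHom.comp_apply, Polynomial.coe_mapRingHom, Polynomial.map_X,
        RatFunc.algebraMap_X]
    rw [this]
    rfl
  have hιC : ∀ p : Polynomial ℤ, ι (C p) = Polynomial.aeval (qVar (m+1)) p := by
    intro p
    have hhom : (ι.comp (C : Polynomial ℤ →+* MvPolynomial (Fin (m+1)) (Polynomial ℤ)))
        = ((Polynomial.aeval (qVar (m+1)) : Polynomial ℤ →ₐ[ℤ] HLField (m+1)) :
            Polynomial ℤ →+* HLField (m+1)) := by
      apply Polynomial.ringHom_ext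
      · intro a
        rw [show (Polynomial.C (a : ℤ)) = ((a : ℤ) : Polynomial ℤ) from Polynomial.C_eq_intCast a]
        rw [map_intCast, map_intCast]
      · rw [RingHom.comp_apply]
        simp only [RingHom.coe_coe, Polynomial.aeval_X]
        exact hιq
    exact RingHom.congr_fun hhom p
  have hfinj : Function.Injective f := by
    rw [hf, RingHom.coe_comp]
    apply Function.Injective.comp
    · exact IsFractionRing.injective (Polynomial ℚ) (RatFunc ℚ)
    · rw [Polynomial.coe_mapRingHom]
      exact Polynomial.map_injective _ Int.cast_injective
  have hinj : Function.Injective ι := by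
    rw [hι, RingHom.coe_comp]
    apply Function.Injective.comp
    · exact IsFractionRing.injective (MvPolynomial (Fin (m+1)) (RatFunc ℚ)) (HLField (m+1))
    · exact MvPolynomial.map_injective f hfinj
  have hz0 : ∀ i : Fin (m+1), zVar i ≠ 0 := by
    intro i h
    have : (X i : MvPolynomial (Fin (m+1)) (Polynomial ℤ)) = 0 := hinj (by rw [map_zero, hιX i, h])
    exact MvPolynomial.X_ne_zero i this
  have hzne : ∀ i j : Fin (m+1), i ≠ j → zVar i ≠ zVar j := by
    intro i j hij h
    exact hij (X_injective (σ := Fin (m+1)) (R := Polynomial ℤ) (hinj (by rw [hιX i, hιX j, h])))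
  -- images of renamed polynomials
  have hren1 : ∀ σ : Equiv.Perm (Fin (m+1)),
      ι (rename σ P1) = ∏ i : Fin (m+1), zVar (σ i) ^ (n' i) := by
    intro σ
    rw [hP1, map_prod, map_prod]
    refine Finset.prod_congr rfl (fun i _ => ?_)
    rw [map_pow, map_pow, rename_X, hιX]
  have hren2 : ∀ σ : Equiv.Perm (Fin (m+1)),
      ι (rename σ P2) = ∏ p ∈ pairs, (zVar (σ p.2) - qVar (m+1) * zVar (σ p.1)) := by
    intro σ
    rw [hP2, map_prod, map_prod]
    refine Finset.prod_congr rfl (fun p _ => ?_)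
    rw [map_sub, map_sub, map_mul, map_mul, rename_X, rename_X, hιX, hιX]
    rw [show (rename (R := Polynomial ℤ) ⇑σ) q0 = q0 from by rw [hq0, rename_C], hιq]
  have hrenV : ∀ σ : Equiv.Perm (Fin (m+1)),
      ι (rename σ V) = ∏ p ∈ pairs, (zVar (σ p.2) - zVar (σ p.1)) := by
    intro σ
    rw [hV, map_prod, map_prod]
    refine Finset.prod_congr rfl (fun p _ => ?_)
    rw [map_sub, map_sub, rename_X, rename_X, hιX, hιX]
  have hrenVsign : ∀ σ : Equiv.Perm (Fin (m+1)),
      rename (R := Polynomial ℤ) σ V = ((Equiv.Perm.sign σ : ℤ) : MvPolynomial (Fin (m+1)) (Polynomial ℤ)) * V := by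
    intro σ
    have hVform : V = ∏ i : Fin (m+1), ∏ j ∈ Ioi i, (X j - X i : MvPolynomial (Fin (m+1)) (Polynomial ℤ)) := by
      rw [hV, hpairs]
      exact prod_pairs_eq (fun i j => (X j - X i : MvPolynomial (Fin (m+1)) (Polynomial ℤ)))
    rw [hVform]
    exact rename_vandermonde σ
  -- field-side data
  set ε : Equiv.Perm (Fin (m+1)) → HLField (m+1) :=
    fun σ => ((Equiv.Perm.sign σ : ℤ) : HLField (m+1)) with hε
  have hε2 : ∀ σ, ε σ * ε σ = 1 := by
    intro σ
    rcases Int.units_eq_one_or (Equiv.Perm.sign σ) with h | h <;> rw [hε] <;> simp [h]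
  have hεne : ∀ σ, ε σ ≠ 0 := by
    intro σ h
    have := hε2 σ
    rw [h, mul_zero] at this
    exact zero_ne_one this
  set Zinv : HLField (m+1) := ∏ i : Fin (m+1), zVar i ^ (-(M : ℤ)) with hZinv
  have hVimg : ∀ σ : Equiv.Perm (Fin (m+1)), ι (rename σ V) = ε σ * ι V := by
    intro σ
    rw [hrenVsign σ, map_mul, map_intCast, hε]
  have hdenne : ∀ σ : Equiv.Perm (Fin (m+1)),
      (∏ p ∈ pairs, (zVar (σ p.2) - zVar (σ p.1))) ≠ 0 := by
    intro σ
    rw [Finset.prod_ne_zero_iff]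
    intro p hp
    have hp' : p.1 < p.2 := by simpa [hpairs] using hp
    exact sub_ne_zero_of_ne (hzne _ _ (fun h => hp'.ne' (σ.injective h)))
  have hVne : ι V ≠ 0 := by
    intro h
    apply hdenne 1
    rw [← hrenV 1]
    simpa using h
  -- the key per-permutation identity
  have hkey : ∀ σ : Equiv.Perm (Fin (m+1)),
      (∏ i : Fin (m+1), zVar (σ i) ^ n i) *
        (∏ p ∈ pairs, (zVar (σ p.2) - qVar (m+1) * zVar (σ p.1)) /
          (zVar (σ p.2) - zVar (σ p.1))) * ι V
      = Zinv * (ε σ * ι (rename σ F)) := by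
    intro σ
    have hA1 : (∏ i : Fin (m+1), zVar (σ i) ^ n i)
        = (∏ i : Fin (m+1), zVar (σ i) ^ (n' i : ℤ)) * Zinv := by
      rw [hZinv, ← Equiv.prod_comp σ (fun i => zVar i ^ (-(M : ℤ))),
        ← Finset.prod_mul_distrib]
      refine Finset.prod_congr rfl (fun i _ => ?_)
      rw [← zpow_add₀ (hz0 (σ i))]
      congr 1
      simp only [hn']
      have := hshift i
      omega
    have hsplit : (∏ p ∈ pairs, (zVar (σ p.2) - qVar (m+1) * zVar (σ p.1)) /
          (zVar (σ p.2) - zVar (σ p.1)))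
        = (∏ p ∈ pairs, (zVar (σ p.2) - qVar (m+1) * zVar (σ p.1))) /
          (∏ p ∈ pairs, (zVar (σ p.2) - zVar (σ p.1))) :=
      Finset.prod_div_distrib _ _
    have hden : (∏ p ∈ pairs, (zVar (σ p.2) - zVar (σ p.1))) = ε σ * ι V := by
      rw [← hrenV σ, hVimg σ]
    have hP1img : ι (rename σ P1) = ∏ i : Fin (m+1), zVar (σ i) ^ (n' i : ℤ) := by
      rw [hren1 σ]
      exact Finset.prod_congr rfl (fun i _ => (zpow_natCast _ _).symm)
    have hFimg : ι (rename σ F) = ι (rename σ P1) * ι (rename σ P2) := by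
      rw [hF, map_mul, map_mul]
    rw [hA1, hsplit, hden, hFimg, hP1img, hren2 σ]
    set Y := ∏ i : Fin (m+1), zVar (σ i) ^ (n' i : ℤ)
    set Pnum := ∏ p ∈ pairs, (zVar (σ p.2) - qVar (m+1) * zVar (σ p.1))
    have hinv : (ε σ)⁻¹ = ε σ := inv_eq_of_mul_eq_one_right (hε2 σ)
    rw [div_eq_mul_inv, mul_inv, hinv]
    have hVinv : ι V * (ι V)⁻¹ = 1 := mul_inv_cancel₀ hVne
    linear_combination (Y * Zinv * Pnum * ε σ) * hVinv
  have hιN : ι N = ∑ σ : Equiv.Perm (Fin (m+1)), ε σ * ι (rename σ F) := by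
    rw [hN, map_sum]
    refine Finset.sum_congr rfl (fun σ _ => ?_)
    rw [map_mul, map_intCast, hε]
  have hLHS : (∑ σ : Equiv.Perm (Fin (m+1)), (∏ i : Fin (m+1), zVar (σ i) ^ n i) *
      ∏ p ∈ pairs, (zVar (σ p.2) - qVar (m+1) * zVar (σ p.1)) / (zVar (σ p.2) - zVar (σ p.1)))
      = Zinv * ι Q := by
    have h1 : (∑ σ : Equiv.Perm (Fin (m+1)), (∏ i : Fin (m+1), zVar (σ i) ^ n i) *
        ∏ p ∈ pairs, (zVar (σ p.2) - qVar (m+1) * zVar (σ p.1)) /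
          (zVar (σ p.2) - zVar (σ p.1))) * ι V
        = (Zinv * ι Q) * ι V := by
      rw [Finset.sum_mul]
      rw [Finset.sum_congr rfl (fun σ _ => hkey σ)]
      rw [← Finset.mul_sum, ← hιN, hQ, map_mul]
      ring
    exact mul_right_cancel₀ hVne h1
  -- Laurent expansion of Q
  set emap : (Fin (m+1) →₀ ℕ) → (Fin (m+1) →₀ ℤ) :=
    fun w => Finsupp.equivFunOnFinite.symm (fun i => (w i : ℤ) - M) with hemap
  set cf : (Fin (m+1) →₀ ℤ) → Polynomial ℤ :=
    fun w => MvPolynomial.coeff (Finsupp.equivFunOnFinite.symm (fun i => (w i + M).toNat)) Q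
    with hcf
  have hcoeZ : ∀ (g : Fin (m+1) → ℤ), ⇑(Finsupp.equivFunOnFinite.symm g) = g := fun g =>
    Finsupp.equivFunOnFinite.apply_symm_apply g
  have hemapi : ∀ (w : Fin (m+1) →₀ ℕ) (i : Fin (m+1)), (emap w) i = (w i : ℤ) - M := by
    intro w i
    rw [hemap]
    exact congrFun (hcoeZ _) i
  have hcfe : ∀ w : Fin (m+1) →₀ ℕ, cf (emap w) = MvPolynomial.coeff w Q := by
    intro w
    rw [hcf]
    have h1 : (fun i => ((emap w) i + (M : ℤ)).toNat) = fun i => w i := by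
      funext i
      rw [hemapi w i]
      omega
    simp only [h1]
    rw [Finsupp.equivFunOnFinite_symm_coe]
  have hemapinj : Function.Injective emap := by
    intro x y h
    rw [hemap] at h
    have h2 := Finsupp.equivFunOnFinite.symm.injective h
    ext i
    have := congrFun h2 i
    omega
  have hQexp : ι Q = ∑ w ∈ Q.support, Polynomial.aeval (qVar (m+1)) (MvPolynomial.coeff w Q) *
      ∏ i : Fin (m+1), zVar i ^ (w i) := by
    conv_lhs => rw [← MvPolynomial.support_sum_monomial_coeff Q]
    rw [map_sum]
    refine Finset.sum_congr rfl (fun w _ => ?_)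
    rw [MvPolynomial.monomial_eq]
    rw [Finsupp.prod_fintype _ _ (fun i => pow_zero _)]
    rw [map_mul, hιC, map_prod]
    congr 1
    exact Finset.prod_congr rfl (fun i _ => by rw [map_pow, hιX])
  refine ⟨Q.support.image emap, cf, ?_⟩
  rw [hLHS, hQexp, Finset.mul_sum]
  rw [Finset.sum_image (fun x _ y _ h => hemapinj h)]
  refine Finset.sum_congr rfl (fun w _ => ?_)
  rw [hcfe w]
  have hzw : ∏ i : Fin (m+1), zVar i ^ ((emap w) i) = (∏ i : Fin (m+1), zVar i ^ (w i)) * Zinv := by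
    rw [hZinv, ← Finset.prod_mul_distrib]
    refine Finset.prod_congr rfl (fun i _ => ?_)
    rw [hemapi w i, sub_eq_add_neg, zpow_add₀ (hz0 i), zpow_natCast]
  rw [hzw]
  ring
end
end

section
/- Let K = ℚ(a, b) with q := a·b, let k ≥ 1 and n_1, ..., n_k ∈ ℤ, and set ζ(x) := (1 − xa)(1 − xb) / ( (1 − x)(1 − xq) ). Then the symmetrization Σ_{σ ∈ S(k)} z_{σ(1)}^{n_1} ⋯ z_{σ(k)}^{n_k} · Π_{1 ≤ i < j ≤ k} ζ( z_{σ(i)} / z_{σ(j)} ), an element of K(z_1,...,z_k), can be written in the form r(z_1,...,z_k) / Π_{1 ≤ i ≠ j ≤ k} (z_i − q·z_j) with r a Laurent polynomial in z_1,...,z_k over K; in other words, the a priori simple poles along z_i = z_j cancel after symmetrization, and only poles along z_i = q·z_j remain. (This is the specialization of Proposition 'elements of the small universal shuffle algebra have the form r/Π(z_i − z_j q_j)' to the surface S = 𝔸^2, where Δ_{ij} ↦ (1−a)(1−b) and q_i ↦ q = ab.) -/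
/-!
STATEMENT 6: For the 𝔸²-specialization ζ(x) = (1−xa)(1−xb)/((1−x)(1−xq)),
q = ab, the symmetrization
`Σ_{σ ∈ S(k)} z_{σ(1)}^{n_1} ⋯ z_{σ(k)}^{n_k} Π_{i<j} ζ(z_{σ(i)}/z_{σ(j)})`
can be written as `r / Π_{i ≠ j} (z_i − q z_j)` with `r` a Laurent polynomial
over K = ℚ(a,b): its only poles are along `z_i = q z_j`.
-/

set_option synthInstance.maxHeartbeats 1000000
set_option maxHeartbeats 1000000

noncomputable section

open Finset

/-- The field K = ℚ(a, b). -/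
abbrev Kab : Type := FractionRing (MvPolynomial (Fin 2) ℚ)

/-- The field K(z₁,...,z_k). -/
abbrev KField (k : ℕ) : Type := FractionRing (MvPolynomial (Fin k) Kab)

/-- The transcendental `a`. -/
def aV (k : ℕ) : KField k :=
  algebraMap (MvPolynomial (Fin k) Kab) (KField k)
    (MvPolynomial.C (algebraMap (MvPolynomial (Fin 2) ℚ) Kab (MvPolynomial.X 0)))

/-- The transcendental `b`. -/
def bV (k : ℕ) : KField k :=
  algebraMap (MvPolynomial (Fin k) Kab) (KField k)
    (MvPolynomial.C (algebraMap (MvPolynomial (Fin 2) ℚ) Kab (MvPolynomial.X 1)))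

/-- `q = a·b`. -/
def qV (k : ℕ) : KField k := aV k * bV k

/-- The variables `z_i`. -/
def zV {k : ℕ} (i : Fin k) : KField k :=
  algebraMap (MvPolynomial (Fin k) Kab) (KField k) (MvPolynomial.X i)

/-- `ζ(x) = (1 − xa)(1 − xb) / ((1 − x)(1 − xq))`. -/
def zetaA2 {k : ℕ} (x : KField k) : KField k :=
  ((1 - x * aV k) * (1 - x * bV k)) / ((1 - x) * (1 - x * qV k))

/-! ### Auxiliary material -/

namespace St6Aux

open MvPolynomial Equiv

/-! #### Generic product re-indexing lemmas -/

section Prods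

variable {M : Type*} [CommMonoid M] {k : ℕ}

theorem prod_pairs_nested (f : Fin k → Fin k → M) :
    ∏ p ∈ univ.filter (fun p : Fin k × Fin k => p.1 < p.2), f p.1 p.2
      = ∏ i : Fin k, ∏ j ∈ Ioi i, f i j := by
  rw [Finset.prod_sigma']
  exact Finset.prod_nbij' (fun p => ⟨p.1, p.2⟩) (fun x => (x.1, x.2))
    (by simp) (by simp) (by simp) (by simp) (by simp)

theorem prod_offdiag_perm (f : Fin k → Fin k → M) (σ : Equiv.Perm (Fin k)) :
    ∏ p ∈ univ.filter (fun p : Fin k × Fin k => p.1 ≠ p.2), f p.1 p.2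
      = ∏ p ∈ univ.filter (fun p : Fin k × Fin k => p.1 ≠ p.2), f (σ p.1) (σ p.2) := by
  refine Finset.prod_nbij' (fun p => (σ.symm p.1, σ.symm p.2)) (fun p => (σ p.1, σ p.2))
    ?_ ?_ ?_ ?_ ?_
  · simp [EmbeddingLike.apply_eq_iff_eq]
  · simp [EmbeddingLike.apply_eq_iff_eq]
  · simp
  · simp
  · simp

theorem prod_offdiag_split (f : Fin k → Fin k → M) :
    ∏ p ∈ univ.filter (fun p : Fin k × Fin k => p.1 ≠ p.2), f p.1 p.2
      = (∏ p ∈ univ.filter (fun p : Fin k × Fin k => p.1 < p.2), f p.1 p.2) *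
        ∏ p ∈ univ.filter (fun p : Fin k × Fin k => p.1 < p.2), f p.2 p.1 := by
  have hsplit : univ.filter (fun p : Fin k × Fin k => p.1 ≠ p.2)
      = univ.filter (fun p : Fin k × Fin k => p.1 < p.2)
        ∪ univ.filter (fun p : Fin k × Fin k => p.2 < p.1) := by
    ext p
    simp only [mem_filter, mem_univ, true_and, mem_union]
    exact ⟨fun h => lt_or_gt_of_ne h, fun h => h.elim ne_of_lt (fun h' => ne_of_gt h')⟩
  rw [hsplit, Finset.prod_union]
  · congr 1
    exact Finset.prod_nbij' (fun p => (p.2, p.1)) (fun p => (p.2, p.1))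
      (by simp) (by simp) (by simp) (by simp) (by simp)
  · rw [Finset.disjoint_filter]
    intro p _ h1
    simp [not_lt, le_of_lt h1]

end Prods

/-! #### The polynomial ring and its embedding into the field -/

abbrev Rk (k : ℕ) := MvPolynomial (Fin k) Kab

abbrev io {k : ℕ} : Rk k →+* KField k := algebraMap (Rk k) (KField k)

def a0 : Kab := algebraMap (MvPolynomial (Fin 2) ℚ) Kab (MvPolynomial.X 0)
def b0 : Kab := algebraMap (MvPolynomial (Fin 2) ℚ) Kab (MvPolynomial.X 1)
def q0 : Kab := a0 * b0

theorem hiotainj {k : ℕ} : Function.Injective (io (k := k)) := IsFractionRing.injective _ _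

theorem io_X {k : ℕ} (i : Fin k) : io (X i) = zV i := rfl
theorem io_Ca (k : ℕ) : io (C a0 : Rk k) = aV k := rfl
theorem io_Cb (k : ℕ) : io (C b0 : Rk k) = bV k := rfl
theorem io_Cq (k : ℕ) : io (C q0 : Rk k) = qV k := by
  rw [q0, map_mul, map_mul]; rfl

theorem ne_zero_of_eval {k : ℕ} (p : Rk k) (v : Fin k → Kab)
    (h : MvPolynomial.eval v p ≠ 0) : io p ≠ 0 := by
  intro h0
  apply h
  have : p = 0 := hiotainj (by simpa using h0)
  simp [this]

theorem zV_ne {k : ℕ} (u : Fin k) : zV u ≠ 0 :=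
  ne_zero_of_eval _ (fun _ => 1) (by simp)

theorem sub_ne {k : ℕ} {u v : Fin k} (h : u ≠ v) : zV v - zV u ≠ 0 := by
  have : zV v - zV u = io (X v - X u : Rk k) := by rw [map_sub]; rfl
  rw [this]
  exact ne_zero_of_eval _ (fun l => if l = v then 1 else 0) (by simp [h.symm, if_neg h])

theorem subq_ne {k : ℕ} {u v : Fin k} (h : u ≠ v) : zV v - qV k * zV u ≠ 0 := by
  have : zV v - qV k * zV u = io (X v - C q0 * X u : Rk k) := by
    rw [map_sub, map_mul, io_Cq]; rfl
  rw [this]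
  refine ne_zero_of_eval _ (fun l => if l = v then 1 else 0) ?_
  simp [h.symm, if_neg h]

theorem zeta_pair {k : ℕ} {u v : Fin k} (h : u ≠ v) :
    zetaA2 (zV u / zV v) * ((zV v - zV u) * (zV v - qV k * zV u))
      = (zV v - aV k * zV u) * (zV v - bV k * zV u) := by
  have hv := zV_ne v
  have h1 := sub_ne h
  have h2 := subq_ne h
  have hA : 1 - zV u / zV v ≠ 0 := by
    have e : 1 - zV u / zV v = (zV v - zV u) / zV v := by field_simp
    rw [e]
    exact div_ne_zero h1 hv
  have hB : 1 - zV u / zV v * qV k ≠ 0 := by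
    intro hx
    apply h2
    have : (1 - zV u / zV v * qV k) * zV v = zV v - qV k * zV u := by
      field_simp
    rw [← this, hx, zero_mul]
  rw [zetaA2, div_mul_eq_mul_div, div_eq_iff (mul_ne_zero hA hB)]
  field_simp

/-! #### Primality and divisibility lemmas in the polynomial ring -/

theorem primeXsub (k : ℕ) (u v : Fin k) (h : v ≠ u) : Prime ((X u - X v : Rk k)) := by
  classical
  let e : Rk k ≃ₐ[Kab] Polynomial (MvPolynomial {b : Fin k // b ≠ u} Kab) :=
    (MvPolynomial.renameEquiv Kab (Equiv.optionSubtypeNe u).symm).trans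
      (MvPolynomial.optionEquivLeft Kab _)
  rw [← MulEquiv.prime_iff e.toMulEquiv]
  have : e (X u - X v) = Polynomial.X - Polynomial.C (X ⟨v, h⟩) := by
    rw [map_sub]
    simp only [e, AlgEquiv.trans_apply, renameEquiv_apply, rename_X]
    rw [Equiv.optionSubtypeNe_symm_self, Equiv.optionSubtypeNe_symm_of_ne h,
      optionEquivLeft_X_none, optionEquivLeft_X_some]
  show Prime (e (X u - X v))
  rw [this]
  exact Polynomial.prime_X_sub_C _

theorem dvd_sub_aeval {k : ℕ} (i j : Fin k) (p : Rk k) :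
    (X i - X j) ∣ (p - MvPolynomial.aeval (fun l => if l = j then X i else X l) p) := by
  classical
  set φ := MvPolynomial.aeval (R := Kab) (fun l : Fin k => if l = j then (X i : Rk k) else X l)
  induction p using MvPolynomial.induction_on with
  | C a => simp [φ]
  | add p q hp hq =>
      have : p + q - φ (p + q) = (p - φ p) + (q - φ q) := by rw [map_add]; ring
      rw [this]; exact dvd_add hp hq
  | mul_X p l hp =>
      have : p * X l - φ (p * X l)
          = (p - φ p) * X l + φ p * (X l - φ (X l)) := by rw [map_mul]; ring
      rw [this]
      refine dvd_add (Dvd.dvd.mul_right hp _) (Dvd.dvd.mul_left ?_ _)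
      by_cases hl : l = j
      · subst hl
        have : φ (X l) = X i := by simp [φ]
        rw [this]
        exact ⟨-1, by ring⟩
      · have : φ (X l) = X l := by simp [φ, hl]
        rw [this, sub_self]
        exact dvd_zero _

theorem prod_primes_dvd'' {α : Type*} [CommMonoidWithZero α] {ι : Type*} [DecidableEq ι]
    (s : Finset ι) (f : ι → α) :
    ∀ g : α, (∀ i ∈ s, Prime (f i)) → (∀ i ∈ s, ∀ j ∈ s, i ≠ j → ¬ f i ∣ f j) →
      (∀ i ∈ s, f i ∣ g) → (∏ i ∈ s, f i) ∣ g := by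
  induction s using Finset.induction_on with
  | empty => intro g _ _ _; simpa using one_dvd g
  | insert a s ha ih =>
      intro g hprime hpair hdvd
      obtain ⟨h, rfl⟩ := hdvd a (mem_insert_self a s)
      rw [Finset.prod_insert ha]
      refine mul_dvd_mul_left _ (ih h (fun i hi => hprime i (mem_insert_of_mem hi))
        (fun i hi j hj hij => hpair i (mem_insert_of_mem hi) j (mem_insert_of_mem hj) hij)
        (fun i hi => ?_))
      have hi' : i ≠ a := fun e => ha (e ▸ hi)
      have hprimei := hprime i (mem_insert_of_mem hi)
      rcases hprimei.2.2 _ _ (hdvd i (mem_insert_of_mem hi)) with hca | hch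
      · exact absurd hca (hpair i (mem_insert_of_mem hi) a (mem_insert_self a s) hi')
      · exact hch

theorem not_dvd_Xsub {k : ℕ} (p q : Fin k × Fin k) (hp : p.1 < p.2) (hq : q.1 < q.2)
    (hpq : p ≠ q) : ¬ ((X p.2 - X p.1 : Rk k) ∣ (X q.2 - X q.1)) := by
  classical
  intro ⟨c, hc⟩
  set v : Fin k → Kab := fun l => if l = p.1 ∨ l = p.2 then 0 else ((l : ℕ) : Kab) + 1 with hv
  have h0 : MvPolynomial.eval v (X p.2 - X p.1 : Rk k) = 0 := by
    simp [v]
  have h1 : MvPolynomial.eval v (X q.2 - X q.1 : Rk k) ≠ 0 := by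
    simp only [map_sub, eval_X]
    intro h
    have h' : v q.2 = v q.1 := sub_eq_zero.mp h
    by_cases h2 : q.2 = p.1 ∨ q.2 = p.2 <;> by_cases h1 : q.1 = p.1 ∨ q.1 = p.2
    · apply hpq
      have : q.1 = p.1 ∧ q.2 = p.2 := by
        rcases h1 with e1 | e1 <;> rcases h2 with e2 | e2 <;>
          simp only [Fin.ext_iff, Fin.lt_def] at * <;> omega
      exact Prod.ext this.1.symm this.2.symm
    · rw [hv] at h'
      simp only [if_pos h2, if_neg h1] at h'
      have : ((q.1 : ℕ) : Kab) + 1 ≠ 0 := by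
        have := Nat.cast_add_one_ne_zero (R := Kab) (q.1 : ℕ)
        exact_mod_cast this
      exact this h'.symm
    · rw [hv] at h'
      simp only [if_pos h1, if_neg h2] at h'
      have : ((q.2 : ℕ) : Kab) + 1 ≠ 0 := by
        have := Nat.cast_add_one_ne_zero (R := Kab) (q.2 : ℕ)
        exact_mod_cast this
      exact this h'
    · rw [hv] at h'
      simp only [if_neg h1, if_neg h2] at h'
      have : (q.2 : ℕ) = (q.1 : ℕ) := by
        have := add_right_cancel h'
        exact_mod_cast this
      have : q.2 = q.1 := Fin.ext this
      exact absurd this (ne_of_gt hq)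
  apply h1
  rw [hc, map_mul, h0, zero_mul]

/-! #### The Vandermonde sign lemma -/

theorem signW {k : ℕ} (σ : Equiv.Perm (Fin k)) :
    ∏ p ∈ univ.filter (fun p : Fin k × Fin k => p.1 < p.2), (zV (σ p.2) - zV (σ p.1))
      = ((Equiv.Perm.sign σ : ℤ) : KField k) *
        ∏ p ∈ univ.filter (fun p : Fin k × Fin k => p.1 < p.2), (zV p.2 - zV p.1) := by
  rw [prod_pairs_nested (fun u v => zV (σ v) - zV (σ u)),
    prod_pairs_nested (fun u v => zV v - zV u),
    ← Matrix.det_vandermonde (fun i => zV (σ i)), ← Matrix.det_vandermonde (fun i => zV i)]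
  have hm : Matrix.vandermonde (fun i => zV (σ i))
      = (Matrix.vandermonde (fun i : Fin k => zV i)).submatrix σ id := by
    ext i j
    simp [Matrix.vandermonde_apply]
  rw [hm, Matrix.det_permute]

/-! #### The main constructions -/

variable {k : ℕ}

/-- `N`, a uniform shift making all exponents nonnegative. -/
def Nn (n : Fin k → ℤ) : ℕ := ∑ j, (n j).natAbs

/-- The term of the symmetrization indexed by `σ`. -/
def Tt (n : Fin k → ℤ) (σ : Equiv.Perm (Fin k)) : KField k :=
  (∏ i : Fin k, zV (σ i) ^ n i) *
    ∏ p ∈ Finset.univ.filter (fun p : Fin k × Fin k => p.1 < p.2),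
      zetaA2 (zV (σ p.1) / zV (σ p.2))

/-- The Vandermonde product in the field. -/
def VL (k : ℕ) : KField k :=
  ∏ p ∈ Finset.univ.filter (fun p : Fin k × Fin k => p.1 < p.2), (zV p.2 - zV p.1)

/-- The full denominator `∏_{i ≠ j} (z_i - q z_j)`. -/
def DL (k : ℕ) : KField k :=
  ∏ p ∈ Finset.univ.filter (fun p : Fin k × Fin k => p.1 ≠ p.2), (zV p.1 - qV k * zV p.2)

/-- The monomial clearing factor. -/
def ML (n : Fin k → ℤ) : KField k := ∏ i : Fin k, zV i ^ Nn n

/-- The Vandermonde polynomial. -/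
def Vp (k : ℕ) : Rk k :=
  ∏ p ∈ Finset.univ.filter (fun p : Fin k × Fin k => p.1 < p.2), (X p.2 - X p.1)

/-- The polynomial numerator contributed by `σ`. -/
def gp (n : Fin k → ℤ) (σ : Equiv.Perm (Fin k)) : Rk k :=
  (∏ i : Fin k, X (σ i) ^ ((n i + Nn n).toNat)) *
    ∏ p ∈ Finset.univ.filter (fun p : Fin k × Fin k => p.1 < p.2),
      ((X (σ p.2) - C a0 * X (σ p.1)) * (X (σ p.2) - C b0 * X (σ p.1)) *
        (X (σ p.1) - C q0 * X (σ p.2)))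

/-- The total polynomial numerator. -/
def gg (n : Fin k → ℤ) : Rk k := ∑ σ : Equiv.Perm (Fin k), (Equiv.Perm.sign σ : ℤ) • gp n σ

theorem claimA (n : Fin k → ℤ) (σ : Equiv.Perm (Fin k)) :
    Tt n σ * VL k * DL k * ML n
      = ((Equiv.Perm.sign σ : ℤ) : KField k) * io (gp n σ) := by
  have hNn : ∀ i, (0:ℤ) ≤ n i + Nn n := by
    intro i
    have : (n i).natAbs ≤ Nn n :=
      Finset.single_le_sum (f := fun j => (n j).natAbs) (fun j _ => Nat.zero_le _) (mem_univ i)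
    omega
  set P := Finset.univ.filter (fun p : Fin k × Fin k => p.1 < p.2) with hPdef
  set ε : KField k := ((Equiv.Perm.sign σ : ℤ) : KField k) with hε
  have hεε : ε * ε = 1 := by
    rw [hε, ← Int.cast_mul]
    rcases Int.units_eq_one_or (Equiv.Perm.sign σ) with hs | hs <;> rw [hs] <;> norm_num
  have hW : VL k = ε * ∏ p ∈ P, (zV (σ p.2) - zV (σ p.1)) := by
    rw [VL, signW σ, ← hε, ← mul_assoc, hεε, one_mul]
  have hD : DL k = (∏ p ∈ P, (zV (σ p.1) - qV k * zV (σ p.2))) *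
      ∏ p ∈ P, (zV (σ p.2) - qV k * zV (σ p.1)) :=
    (prod_offdiag_perm (fun u v => zV u - qV k * zV v) σ).trans
      (prod_offdiag_split (fun u v => zV (σ u) - qV k * zV (σ v)))
  have hM : ML n = ∏ i, zV (σ i) ^ Nn n := (Equiv.prod_comp σ (fun i => zV i ^ Nn n)).symm
  have hmono : (∏ i, zV (σ i) ^ n i) * (∏ i, zV (σ i) ^ (Nn n : ℤ))
      = ∏ i, zV (σ i) ^ ((n i + Nn n).toNat) := by
    rw [← Finset.prod_mul_distrib]
    refine Finset.prod_congr rfl (fun i _ => ?_)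
    rw [← zpow_add₀ (zV_ne (σ i)), ← zpow_natCast (zV (σ i)) ((n i + Nn n).toNat),
      Int.toNat_of_nonneg (hNn i)]
  have hzeta : (∏ p ∈ P, zetaA2 (zV (σ p.1) / zV (σ p.2))) *
      ((∏ p ∈ P, (zV (σ p.2) - zV (σ p.1))) * ∏ p ∈ P, (zV (σ p.2) - qV k * zV (σ p.1)))
      = ∏ p ∈ P, ((zV (σ p.2) - aV k * zV (σ p.1)) * (zV (σ p.2) - bV k * zV (σ p.1))) := by
    rw [← Finset.prod_mul_distrib, ← Finset.prod_mul_distrib]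
    refine Finset.prod_congr rfl (fun p hp => ?_)
    have hlt : p.1 < p.2 := by
      rw [hPdef] at hp
      exact (Finset.mem_filter.mp hp).2
    have hne : σ p.1 ≠ σ p.2 := fun h => absurd (σ.injective h) (ne_of_lt hlt)
    have := zeta_pair hne
    linear_combination this
  have hgp : io (gp n σ) = (∏ i, zV (σ i) ^ ((n i + Nn n).toNat)) *
      ∏ p ∈ P, ((zV (σ p.2) - aV k * zV (σ p.1)) * (zV (σ p.2) - bV k * zV (σ p.1)) *
        (zV (σ p.1) - qV k * zV (σ p.2))) := by
    rw [gp, map_mul, map_prod, map_prod]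
    congr 1
    · exact Finset.prod_congr rfl fun i _ => by rw [map_pow, io_X]
    · refine Finset.prod_congr rfl fun p _ => ?_
      simp only [map_mul, map_sub, io_X, io_Ca, io_Cb, io_Cq]
  have hzN : ∀ i : Fin k, zV (σ i) ^ Nn n = zV (σ i) ^ (Nn n : ℤ) := fun i =>
    (zpow_natCast _ _).symm
  calc Tt n σ * VL k * DL k * ML n
      = ε * (((∏ i, zV (σ i) ^ n i) * (∏ i, zV (σ i) ^ (Nn n : ℤ))) *
          (((∏ p ∈ P, zetaA2 (zV (σ p.1) / zV (σ p.2))) *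
            ((∏ p ∈ P, (zV (σ p.2) - zV (σ p.1))) *
              ∏ p ∈ P, (zV (σ p.2) - qV k * zV (σ p.1)))) *
            ∏ p ∈ P, (zV (σ p.1) - qV k * zV (σ p.2)))) := by
        rw [Tt, hW, hD, hM]
        simp only [hzN]
        ring
    _ = ε * ((∏ i, zV (σ i) ^ ((n i + Nn n).toNat)) *
          ((∏ p ∈ P, ((zV (σ p.2) - aV k * zV (σ p.1)) * (zV (σ p.2) - bV k * zV (σ p.1)))) *
            ∏ p ∈ P, (zV (σ p.1) - qV k * zV (σ p.2)))) := by rw [hmono, hzeta]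
    _ = ε * io (gp n σ) := by rw [hgp, ← Finset.prod_mul_distrib]

theorem claimSum (n : Fin k → ℤ) :
    (∑ σ : Equiv.Perm (Fin k), Tt n σ) * VL k * DL k * ML n = io (gg n) := by
  rw [gg, map_sum, Finset.sum_mul, Finset.sum_mul, Finset.sum_mul]
  refine Finset.sum_congr rfl fun σ _ => ?_
  rw [claimA n σ, map_zsmul, zsmul_eq_mul]

/-- The automorphism of the rational function field induced by a permutation. -/
def phi (τ : Equiv.Perm (Fin k)) : KField k →+* KField k :=
  IsFractionRing.lift (g := (io (k := k)).comp (rename (R := Kab) τ).toRingHom)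
    (hiotainj.comp (rename_injective _ τ.injective))

theorem phi_io (τ : Equiv.Perm (Fin k)) (p : Rk k) : phi τ (io p) = io (rename τ p) :=
  IsFractionRing.lift_algebraMap _ _

theorem phi_z (τ : Equiv.Perm (Fin k)) (l : Fin k) : phi τ (zV l) = zV (τ l) := by
  rw [← io_X l, phi_io, rename_X, io_X]

theorem phi_a (τ : Equiv.Perm (Fin k)) : phi τ (aV k) = aV k := by
  rw [← io_Ca, phi_io, rename_C, io_Ca]

theorem phi_b (τ : Equiv.Perm (Fin k)) : phi τ (bV k) = bV k := by
  rw [← io_Cb, phi_io, rename_C, io_Cb]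

theorem phi_q (τ : Equiv.Perm (Fin k)) : phi τ (qV k) = qV k := by
  rw [qV, map_mul, phi_a, phi_b]

theorem phi_zeta (τ : Equiv.Perm (Fin k)) (x : KField k) :
    phi τ (zetaA2 x) = zetaA2 (phi τ x) := by
  simp only [zetaA2, map_div₀, map_mul, map_sub, map_one, phi_a, phi_b, phi_q]

theorem phi_T (τ : Equiv.Perm (Fin k)) (n : Fin k → ℤ) (σ : Equiv.Perm (Fin k)) :
    phi τ (Tt n σ) = Tt n (τ * σ) := by
  simp only [Tt, map_mul, map_prod, map_zpow₀, phi_zeta, map_div₀, phi_z,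
    Equiv.Perm.mul_apply]

theorem phi_sumT (τ : Equiv.Perm (Fin k)) (n : Fin k → ℤ) :
    phi τ (∑ σ : Equiv.Perm (Fin k), Tt n σ) = ∑ σ : Equiv.Perm (Fin k), Tt n σ := by
  rw [map_sum]
  simp only [phi_T]
  exact Fintype.sum_equiv (Equiv.mulLeft τ) _ _ (fun σ => rfl)

theorem phi_V (τ : Equiv.Perm (Fin k)) :
    phi τ (VL k) = ((Equiv.Perm.sign τ : ℤ) : KField k) * VL k := by
  simp only [VL, map_prod, map_sub, phi_z]
  exact signW τ

theorem phi_D (τ : Equiv.Perm (Fin k)) : phi τ (DL k) = DL k := by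
  simp only [DL, map_prod, map_sub, map_mul, phi_q, phi_z]
  exact (prod_offdiag_perm (fun u v => zV u - qV k * zV v) τ).symm

theorem phi_M (τ : Equiv.Perm (Fin k)) (n : Fin k → ℤ) : phi τ (ML n) = ML n := by
  simp only [ML, map_prod, map_pow, phi_z]
  exact Equiv.prod_comp τ (fun i => zV i ^ Nn n)

theorem claimSwap (n : Fin k → ℤ) (i j : Fin k) (hij : i ≠ j) :
    rename (Equiv.swap i j) (gg n) = - gg n := by
  apply hiotainj
  have h1 : io (rename (Equiv.swap i j) (gg n)) = phi (Equiv.swap i j) (io (gg n)) :=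
    (phi_io _ _).symm
  rw [h1, ← claimSum n, map_mul, map_mul, map_mul, phi_sumT, phi_V, phi_D, phi_M,
    Equiv.Perm.sign_swap hij, map_neg, ← claimSum n]
  push_cast
  ring

theorem claimDvd (n : Fin k → ℤ) : Vp k ∣ gg n := by
  classical
  rw [Vp]
  refine prod_primes_dvd'' _ _ _ ?_ ?_ ?_
  · intro p hp
    exact primeXsub k p.2 p.1 (ne_of_lt (Finset.mem_filter.mp hp).2)
  · intro p hp q hq hpq
    exact not_dvd_Xsub p q (Finset.mem_filter.mp hp).2 (Finset.mem_filter.mp hq).2 hpq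
  · intro p hp
    have hlt : p.1 < p.2 := (Finset.mem_filter.mp hp).2
    have hne : p.2 ≠ p.1 := ne_of_gt hlt
    have hsw := claimSwap n p.2 p.1 hne
    have hphi : MvPolynomial.aeval
        (fun l => if l = p.1 then (X p.2 : Rk k) else X l) (gg n) = 0 := by
      have h2 : (MvPolynomial.aeval (R := Kab)
          (fun l => if l = p.1 then (X p.2 : Rk k) else X l))
            (rename (Equiv.swap p.2 p.1) (gg n))
          = MvPolynomial.aeval (fun l => if l = p.1 then (X p.2 : Rk k) else X l) (gg n) := by
        rw [aeval_rename]
        have hfun : ((fun l => if l = p.1 then (X p.2 : Rk k) else X l) ∘ ⇑(Equiv.swap p.2 p.1))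
            = fun l => if l = p.1 then (X p.2 : Rk k) else X l := by
          funext l
          rcases eq_or_ne l p.2 with rfl | hl2
          · simp [Function.comp, Equiv.swap_apply_left, hne]
          · rcases eq_or_ne l p.1 with rfl | hl1
            · simp [Function.comp, Equiv.swap_apply_right]
            · simp [Function.comp, Equiv.swap_apply_of_ne_of_ne hl2 hl1, hl1]
        rw [hfun]
      rw [hsw, map_neg] at h2
      have h3 : (2 : Rk k) * MvPolynomial.aeval
          (fun l => if l = p.1 then (X p.2 : Rk k) else X l) (gg n) = 0 := by
        linear_combination - h2
      rcases mul_eq_zero.mp h3 with h4 | h4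
      · exact absurd h4 two_ne_zero
      · exact h4
    have hdvd := dvd_sub_aeval p.2 p.1 (gg n)
    rw [hphi, sub_zero] at hdvd
    exact hdvd

end St6Aux

open St6Aux MvPolynomial Equiv in
theorem statement6 (k : ℕ) (hk : 1 ≤ k) (n : Fin k → ℤ) :
    ∃ (s : Finset (Fin k →₀ ℤ)) (c : (Fin k →₀ ℤ) → Kab),
      ∑ σ : Equiv.Perm (Fin k),
        (∏ i : Fin k, zV (σ i) ^ n i) *
          ∏ p ∈ Finset.univ.filter (fun p : Fin k × Fin k => p.1 < p.2),
            zetaA2 (zV (σ p.1) / zV (σ p.2))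
      = (∑ m ∈ s, algebraMap (MvPolynomial (Fin k) Kab) (KField k)
            (MvPolynomial.C (c m)) * ∏ i : Fin k, zV i ^ (m i)) /
          ∏ p ∈ Finset.univ.filter (fun p : Fin k × Fin k => p.1 ≠ p.2),
            (zV p.1 - qV k * zV p.2) := by
  classical
  obtain ⟨h, hh⟩ := claimDvd (k := k) n
  have goal_eq : (∑ σ : Equiv.Perm (Fin k),
      (∏ i : Fin k, zV (σ i) ^ n i) *
        ∏ p ∈ Finset.univ.filter (fun p : Fin k × Fin k => p.1 < p.2),
          zetaA2 (zV (σ p.1) / zV (σ p.2)))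
      = ∑ σ : Equiv.Perm (Fin k), Tt n σ := rfl
  have hDLdef : (∏ p ∈ Finset.univ.filter (fun p : Fin k × Fin k => p.1 ≠ p.2),
      (zV p.1 - qV k * zV p.2)) = DL k := rfl
  have hVL : VL k ≠ 0 := by
    rw [VL]
    exact Finset.prod_ne_zero_iff.mpr fun p hp =>
      sub_ne (ne_of_lt (Finset.mem_filter.mp hp).2)
  have hDL : DL k ≠ 0 := by
    rw [DL]
    exact Finset.prod_ne_zero_iff.mpr fun p hp =>
      subq_ne (Ne.symm (Finset.mem_filter.mp hp).2)
  have hML : ML n ≠ 0 := by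
    rw [ML]
    exact Finset.prod_ne_zero_iff.mpr fun i _ => pow_ne_zero _ (zV_ne i)
  have hioV : io (Vp k) = VL k := by
    simp only [Vp, VL, map_prod, map_sub, io_X]
  have key := claimSum (k := k) n
  rw [hh, map_mul, hioV] at key
  have key2 : (∑ σ : Equiv.Perm (Fin k), Tt n σ) * DL k * ML n = io h := by
    apply mul_left_cancel₀ hVL
    linear_combination key
  set N := Nn n with hNdef
  set NN : Fin k →₀ ℤ := Finsupp.equivFunOnFinite.symm (fun _ => (N : ℤ)) with hNN
  have hNNa : ∀ l, NN l = (N : ℤ) := fun l => rfl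
  set sh : (Fin k →₀ ℕ) → (Fin k →₀ ℤ) :=
    fun m => Finsupp.mapRange (fun t : ℕ => (t : ℤ)) Nat.cast_zero m - NN with hsh
  have hshv : ∀ (m : Fin k →₀ ℕ) (l : Fin k), sh m l = (m l : ℤ) - N := by
    intro m l
    simp [hsh, Finsupp.sub_apply, Finsupp.mapRange_apply, hNNa]
  have hshinj : Function.Injective sh := by
    intro x y hxy
    simp only [hsh] at hxy
    rw [sub_left_inj] at hxy
    exact Finsupp.mapRange_injective _ _ Nat.cast_injective hxy
  have hcoef : ∀ m : Fin k →₀ ℕ, Finsupp.mapRange Int.toNat Int.toNat_zero (sh m + NN) = m := by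
    intro m
    ext l
    rw [Finsupp.mapRange_apply, Finsupp.add_apply, hshv, hNNa]
    omega
  refine ⟨(h.support).image sh,
    fun m' => MvPolynomial.coeff (Finsupp.mapRange Int.toNat Int.toNat_zero (m' + NN)) h, ?_⟩
  rw [goal_eq, hDLdef, Finset.sum_image (fun x hx y hy e => hshinj e)]
  have hsum : (∑ m ∈ h.support,
      (algebraMap (MvPolynomial (Fin k) Kab) (KField k)) (MvPolynomial.C
        (MvPolynomial.coeff (Finsupp.mapRange Int.toNat Int.toNat_zero (sh m + NN)) h))
        * ∏ i : Fin k, zV i ^ (sh m i))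
      = io h / ML n := by
    rw [eq_div_iff hML, Finset.sum_mul]
    conv_rhs => rw [MvPolynomial.as_sum h]
    rw [map_sum]
    refine Finset.sum_congr rfl fun m hm => ?_
    rw [hcoef m, MvPolynomial.monomial_eq, map_mul]
    have hprodX : io (Finsupp.prod m fun l e => (X l : Rk k) ^ e)
        = ∏ i : Fin k, zV i ^ m i := by
      rw [Finsupp.prod_pow, map_prod]
      exact Finset.prod_congr rfl fun l _ => by rw [map_pow, io_X]
    rw [hprodX, ML, mul_assoc, ← Finset.prod_mul_distrib]
    congr 1
    refine Finset.prod_congr rfl fun l _ => ?_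
    rw [hshv, ← zpow_natCast (zV l) (m l), ← zpow_natCast (zV l) N,
      ← zpow_add₀ (zV_ne l)]
    congr 1
    omega
  have hgoal : (∑ σ : Equiv.Perm (Fin k), Tt n σ) = (io h / ML n) / DL k := by
    rw [div_div, eq_div_iff (mul_ne_zero hML hDL)]
    linear_combination key2
  rw [hgoal]
  congr 1
  exact hsum.symm
end
end
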